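/- arXiv:0710.5338 — 4 statements merged into one kernel-verified Lean document; each statement's English description precedes it below -/
import Mathlib

section
/- Fix a constant δ ∈ (0,1) and weights w1 ≥ 2·w2 > 0. Suppose m = m(n) satisfies n^{4/3}/m → 0 as n → ∞. Then the probability that a random instance of the complete and strict 2-weighted popular matching problem with n applicants (|A1| = δn, |A2| = (1-δ)n) and m items has a 2-weighted popular matching tends to 1 as n → ∞ (along those n for which δn is an integer). -/
open scoped Classical
open Finset

noncomputable section

/-- An instance of the complete and strict 2-weighted popular matching problem:
applicants `A` partitioned into categories `A1` (weight `w1`) and `A2` (weight `w2`),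
items `I` with `|A| < |I|`, and for each applicant a strict complete preference list
encoded by an injective ranking function (smaller rank = more preferred). -/
structure TwoWPM (A I : Type) [Fintype A] [DecidableEq A] [Fintype I] [DecidableEq I] where
  A1 : Finset A
  A2 : Finset A
  union_eq : A1 ∪ A2 = Finset.univ
  disj : Disjoint A1 A2
  w1 : ℝ
  w2 : ℝ
  hw12 : w2 < w1
  hw2 : 0 < w2
  rank : A → I → ℕ
  rank_inj : ∀ x : A, Function.Injective (rank x)
  card_lt : Fintype.card A < Fintype.card I

namespace TwoWPM

variable {A I : Type} [Fintype A] [DecidableEq A] [Fintype I] [DecidableEq I]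
variable (P : TwoWPM A I)

/-- applicant `x` prefers item `p` to item `q`. -/
def Prefers (x : A) (p q : I) : Prop := P.rank x p < P.rank x q

/-- the most preferred item of applicant `x` within the set `s` (junk value if `s = ∅`). -/
def bestIn (x : A) (s : Finset I) : I :=
  if hs : s.Nonempty then (Finset.exists_min_image s (P.rank x) hs).choose
  else (Fintype.card_pos_iff.mp (Nat.lt_of_le_of_lt (Nat.zero_le _) P.card_lt)).some

/-- the first item of an applicant of the first category. -/
def f1 (x : A) : I := P.bestIn x Finset.univ
/-- the set of `f1`-items. -/
def F1 : Finset I := P.A1.image P.f1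
/-- the second item of an applicant of the first category. -/
def s1 (x : A) : I := P.bestIn x (Finset.univ \ P.F1)
/-- the set of `s1`-items. -/
def S1 : Finset I := P.A1.image P.s1
/-- the first item of an applicant of the second category. -/
def f2 (y : A) : I := P.bestIn y (Finset.univ \ P.F1)
/-- the set of `f2`-items. -/
def F2 : Finset I := P.A2.image P.f2
/-- the second item of an applicant of the second category. -/
def s2 (y : A) : I := P.bestIn y (Finset.univ \ (P.F1 ∪ P.F2))
/-- the set of `s2`-items. -/
def S2 : Finset I := P.A2.image P.s2

/-- the weight of an applicant. -/
def weight (x : A) : ℝ := if x ∈ P.A1 then P.w1 else P.w2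

/-- `M` is more popular than `M'`: the total weight of applicants preferring `M`
exceeds the total weight of applicants preferring `M'`. -/
def MorePopular (M M' : A → I) : Prop :=
  (∑ x : A, if P.Prefers x (M' x) (M x) then P.weight x else 0) <
    ∑ x : A, if P.Prefers x (M x) (M' x) then P.weight x else 0

/-- `M` is a 2-weighted popular matching. -/
def IsPopular (M : A → I) : Prop :=
  Function.Injective M ∧ ∀ M' : A → I, Function.Injective M' → ¬ P.MorePopular M' M

/-- `M` is a well-formed matching. -/
def IsWellFormed (M : A → I) : Prop :=
  Function.Injective M ∧
  (∀ x ∈ P.A1, M x = P.f1 x ∨ M x = P.s1 x) ∧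
  (∀ y ∈ P.A2, M y = P.f2 y ∨ M y = P.s2 y) ∧
  (∀ p ∈ P.F1, ∃ x ∈ P.A1, P.f1 x = p ∧ M x = p) ∧
  (∀ q ∈ P.F2, ∃ y ∈ P.A2, P.f2 y = q ∧ M y = q)

/-- the instance has a 2-weighted popular matching. -/
def HasPopular : Prop := ∃ M : A → I, P.IsPopular M

/-- the instance has a well-formed matching. -/
def HasWellFormed : Prop := ∃ M : A → I, P.IsWellFormed M

/-- the `f`-endpoint of the fs-relation-graph edge associated with applicant `a`. -/
def fEnd (a : A) : I := if a ∈ P.A1 then P.f1 a else P.f2 a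
/-- the `s`-endpoint of the fs-relation-graph edge associated with applicant `a`. -/
def sEnd (a : A) : I := if a ∈ P.A1 then P.s1 a else P.s2 a

/-- the edge of applicant `a` joins items `p` and `q` in the fs-relation graph. -/
def EdgeJoins (a : A) (p q : I) : Prop :=
  (P.fEnd a = p ∧ P.sEnd a = q) ∨ (P.fEnd a = q ∧ P.sEnd a = p)

/-- adjacency in the fs-relation graph. -/
def Adj (p q : I) : Prop := ∃ a : A, P.EdgeJoins a p q

/-- a simple path in the fs-relation graph with `k` (distinct) vertices
`v 0, …, v (k-1)` and edges `e 0, …, e (k-2)`, edge `e i` joining `v i` and `v (i+1)`. -/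
def IsPath (k : ℕ) (v : ℕ → I) (e : ℕ → A) : Prop :=
  (∀ i j, i < k → j < k → v i = v j → i = j) ∧
  (∀ i, i + 1 < k → P.EdgeJoins (e i) (v i) (v (i + 1)))

/-- a simple cycle in the fs-relation graph with `ℓ ≥ 2` distinct vertices and
`ℓ` distinct edges. -/
def IsCycle (ℓ : ℕ) (u : ℕ → I) (c : ℕ → A) : Prop :=
  2 ≤ ℓ ∧
  (∀ i j, i < ℓ → j < ℓ → u i = u j → i = j) ∧
  (∀ i j, i < ℓ → j < ℓ → c i = c j → i = j) ∧
  (∀ i, i < ℓ → P.EdgeJoins (c i) (u i) (u ((i + 1) % ℓ)))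

/-- a bad subgraph of type `G1`: a simple path on `k ≥ 4` vertices whose first and
last edges belong to `E2`, whose second and second-to-last edges belong to `E1`,
and whose second and second-to-last vertices lie in `S1 ∩ F2`. -/
def HasBadG1 : Prop :=
  ∃ (k : ℕ) (v : ℕ → I) (e : ℕ → A),
    4 ≤ k ∧ P.IsPath k v e ∧
    e 0 ∈ P.A2 ∧ e 1 ∈ P.A1 ∧ e (k - 2) ∈ P.A2 ∧ e (k - 3) ∈ P.A1 ∧
    v 1 ∈ P.S1 ∧ v 1 ∈ P.F2 ∧ v (k - 2) ∈ P.S1 ∧ v (k - 2) ∈ P.F2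

/-- a bad subgraph of type `G2`: a simple cycle together with a simple path on
`k ≥ 3` vertices meeting the cycle exactly in its last vertex, whose first edge is
in `E2`, second edge in `E1`, and second vertex in `S1 ∩ F2`. -/
def HasBadG2 : Prop :=
  ∃ (ℓ : ℕ) (u : ℕ → I) (c : ℕ → A) (k : ℕ) (v : ℕ → I) (e : ℕ → A),
    P.IsCycle ℓ u c ∧ 3 ≤ k ∧ P.IsPath k v e ∧
    (∃ j, j < ℓ ∧ u j = v (k - 1)) ∧
    (∀ i, i < k - 1 → ∀ j, j < ℓ → v i ≠ u j) ∧
    e 0 ∈ P.A2 ∧ e 1 ∈ P.A1 ∧ v 1 ∈ P.S1 ∧ v 1 ∈ P.F2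

/-- a bad subgraph of type `G3`: two distinct cycles lying in the same connected
component of the fs-relation graph. -/
def HasBadG3 : Prop :=
  ∃ (ℓ : ℕ) (u : ℕ → I) (c : ℕ → A) (ℓ' : ℕ) (u' : ℕ → I) (c' : ℕ → A),
    P.IsCycle ℓ u c ∧ P.IsCycle ℓ' u' c' ∧
    {a : A | ∃ i, i < ℓ ∧ c i = a} ≠ {a : A | ∃ i, i < ℓ' ∧ c' i = a} ∧
    Relation.ReflTransGen P.Adj (u 0) (u' 0)

end TwoWPM
namespace TwoWPM
variable {A I : Type} [Fintype A] [DecidableEq A] [Fintype I] [DecidableEq I]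
variable (P : TwoWPM A I)

/-! ### Auxiliary deterministic lemmas -/

lemma bestIn_mem {x : A} {s : Finset I} (hs : s.Nonempty) : P.bestIn x s ∈ s := by
  rw [bestIn, dif_pos hs]
  exact (Finset.exists_min_image s (P.rank x) hs).choose_spec.1

lemma bestIn_le {x : A} {s : Finset I} (hs : s.Nonempty) {p : I} (hp : p ∈ s) :
    P.rank x (P.bestIn x s) ≤ P.rank x p := by
  rw [bestIn, dif_pos hs]
  exact (Finset.exists_min_image s (P.rank x) hs).choose_spec.2 p hp

lemma bestIn_eq {x : A} {s : Finset I} {q : I} (hq : q ∈ s)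
    (hmin : ∀ p ∈ s, P.rank x q ≤ P.rank x p) : P.bestIn x s = q := by
  have hs : s.Nonempty := ⟨q, hq⟩
  exact P.rank_inj x (le_antisymm (P.bestIn_le hs hq) (hmin _ (P.bestIn_mem hs)))

lemma cardA : P.A1.card + P.A2.card = Fintype.card A := by
  rw [← Finset.card_union_of_disjoint P.disj, P.union_eq, Finset.card_univ]

lemma mem_A2_iff {a : A} : a ∈ P.A2 ↔ a ∉ P.A1 := by
  constructor
  · intro h2 h1; exact (Finset.disjoint_left.mp P.disj) h1 h2
  · intro h1
    have h : a ∈ P.A1 ∪ P.A2 := by rw [P.union_eq]; exact Finset.mem_univ a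
    rcases Finset.mem_union.mp h with h | h
    · exact absurd h h1
    · exact h

lemma card_F1_le : P.F1.card ≤ P.A1.card := Finset.card_image_le

lemma card_F2_le : P.F2.card ≤ P.A2.card := Finset.card_image_le

lemma I_univ_nonempty (P : TwoWPM A I) : (Finset.univ : Finset I).Nonempty := by
  rw [← Finset.card_pos, Finset.card_univ]
  exact lt_of_le_of_lt (Nat.zero_le _) P.card_lt

lemma sdiff_F1_nonempty : (Finset.univ \ P.F1).Nonempty := by
  rw [← Finset.card_pos, Finset.card_sdiff_of_subset (Finset.subset_univ _), Finset.card_univ]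
  have h1 : P.F1.card ≤ Fintype.card A :=
    le_trans P.card_F1_le (le_trans (Nat.le_add_right _ _) (le_of_eq P.cardA))
  have := P.card_lt
  omega

lemma sdiff_F12_nonempty : (Finset.univ \ (P.F1 ∪ P.F2)).Nonempty := by
  rw [← Finset.card_pos, Finset.card_sdiff_of_subset (Finset.subset_univ _), Finset.card_univ]
  have h1 : (P.F1 ∪ P.F2).card ≤ Fintype.card A := by
    calc (P.F1 ∪ P.F2).card ≤ P.F1.card + P.F2.card := Finset.card_union_le _ _
    _ ≤ P.A1.card + P.A2.card := Nat.add_le_add P.card_F1_le P.card_F2_le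
    _ = Fintype.card A := P.cardA
  have := P.card_lt
  omega

lemma f2_eq_s1 : P.f2 = P.s1 := rfl

lemma s1_not_mem_F1 (a : A) : P.s1 a ∉ P.F1 :=
  (Finset.mem_sdiff.mp (P.bestIn_mem P.sdiff_F1_nonempty)).2

lemma s2_not_mem_F12 (a : A) : P.s2 a ∉ P.F1 ∪ P.F2 :=
  (Finset.mem_sdiff.mp (P.bestIn_mem P.sdiff_F12_nonempty)).2

lemma f1_mem_F1 {a : A} (ha : a ∈ P.A1) : P.f1 a ∈ P.F1 :=
  Finset.mem_image_of_mem _ ha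

lemma f2_mem_F2 {a : A} (ha : a ∈ P.A2) : P.f2 a ∈ P.F2 :=
  Finset.mem_image_of_mem _ ha

lemma not_mem_F1_of_mem_F2 {q : I} (hq : q ∈ P.F2) : q ∉ P.F1 := by
  rcases Finset.mem_image.mp hq with ⟨y, _, rfl⟩
  exact P.s1_not_mem_F1 y

lemma fEnd_A1 {a : A} (h : a ∈ P.A1) : P.fEnd a = P.f1 a := if_pos h
lemma fEnd_A2 {a : A} (h : a ∉ P.A1) : P.fEnd a = P.f2 a := if_neg h
lemma sEnd_A1 {a : A} (h : a ∈ P.A1) : P.sEnd a = P.s1 a := if_pos h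
lemma sEnd_A2 {a : A} (h : a ∉ P.A1) : P.sEnd a = P.s2 a := if_neg h

lemma sEnd_not_mem_F1 (a : A) : P.sEnd a ∉ P.F1 := by
  unfold sEnd
  split
  · exact P.s1_not_mem_F1 a
  · intro h; exact P.s2_not_mem_F12 a (Finset.mem_union_left _ h)

lemma not_prefers_f1 {x : A} {p : I} : ¬ P.Prefers x p (P.f1 x) := fun hp =>
  absurd hp (not_lt.mpr (P.bestIn_le P.I_univ_nonempty (Finset.mem_univ p)))

lemma prefers_s1 {x : A} {p : I} (h : P.Prefers x p (P.s1 x)) : p ∈ P.F1 := by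
  by_contra hp
  exact absurd h (not_lt.mpr (P.bestIn_le P.sdiff_F1_nonempty
    (Finset.mem_sdiff.mpr ⟨Finset.mem_univ _, hp⟩)))

lemma prefers_f2 {x : A} {p : I} (h : P.Prefers x p (P.f2 x)) : p ∈ P.F1 :=
  P.prefers_s1 h

lemma prefers_s2 {x : A} {p : I} (h : P.Prefers x p (P.s2 x)) : p ∈ P.F1 ∪ P.F2 := by
  by_contra hp
  exact absurd h (not_lt.mpr (P.bestIn_le P.sdiff_F12_nonempty
    (Finset.mem_sdiff.mpr ⟨Finset.mem_univ _, hp⟩)))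

lemma weight_nonneg (a : A) : 0 ≤ P.weight a := by
  unfold weight
  split
  · exact le_of_lt (lt_trans P.hw2 P.hw12)
  · exact le_of_lt P.hw2

/-! ### Well-formed matchings are popular when `w1 ≥ 2 w2` -/

theorem isPopular_of_isWellFormed (hw : 2 * P.w2 ≤ P.w1) {M : A → I}
    (hM : P.IsWellFormed M) : P.IsPopular M := by
  obtain ⟨hinj, hA1, hA2, hF1, hF2⟩ := hM
  refine ⟨hinj, fun M' hM' hcon => ?_⟩
  rw [MorePopular] at hcon
  set Gain : Finset A := Finset.univ.filter (fun a => P.Prefers a (M' a) (M a)) with hGain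
  set L : Finset A := Finset.univ.filter (fun b => P.Prefers b (M b) (M' b)) with hL
  have hsumL : (∑ x : A, if P.Prefers x (M x) (M' x) then P.weight x else 0)
      = ∑ b ∈ L, P.weight b := (Finset.sum_filter _ _).symm
  have hsumG : (∑ x : A, if P.Prefers x (M' x) (M x) then P.weight x else 0)
      = ∑ a ∈ Gain, P.weight a := (Finset.sum_filter _ _).symm
  rw [hsumL, hsumG] at hcon
  suffices hmain : ∑ a ∈ Gain, P.weight a ≤ ∑ b ∈ L, P.weight b by
    exact absurd hcon (not_lt.mpr hmain)
  -- structure of gains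
  have hgain1 : ∀ a ∈ Gain, a ∈ P.A1 → M' a ∈ P.F1 := by
    intro a ha h1
    have hpref : P.Prefers a (M' a) (M a) := (Finset.mem_filter.mp ha).2
    rcases hA1 a h1 with hMa | hMa
    · rw [hMa] at hpref; exact absurd hpref P.not_prefers_f1
    · rw [hMa] at hpref; exact P.prefers_s1 hpref
  have hgain : ∀ a ∈ Gain, M' a ∈ P.F1 ∪ P.F2 := by
    intro a ha
    by_cases h1 : a ∈ P.A1
    · exact Finset.mem_union_left _ (hgain1 a ha h1)
    · have h2 : a ∈ P.A2 := P.mem_A2_iff.mpr h1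
      have hpref : P.Prefers a (M' a) (M a) := (Finset.mem_filter.mp ha).2
      rcases hA2 a h2 with hMa | hMa
      · rw [hMa] at hpref; exact Finset.mem_union_left _ (P.prefers_f2 hpref)
      · rw [hMa] at hpref; exact P.prefers_s2 hpref
  set G1s : Finset A := Gain.filter (fun a => M' a ∈ P.F1) with hG1s
  set G2s : Finset A := Gain.filter (fun a => M' a ∈ P.F2) with hG2s
  have hG2A2 : ∀ a ∈ G2s, a ∉ P.A1 := by
    intro a ha h1
    have h := Finset.mem_filter.mp ha
    exact P.not_mem_F1_of_mem_F2 h.2 (hgain1 a h.1 h1)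
  have hdisjG : Disjoint G1s G2s := by
    rw [Finset.disjoint_left]
    intro a h1 h2
    exact P.not_mem_F1_of_mem_F2 (Finset.mem_filter.mp h2).2 (Finset.mem_filter.mp h1).2
  have hGuni : Gain = G1s ∪ G2s := by
    ext a
    constructor
    · intro ha
      rcases Finset.mem_union.mp (hgain a ha) with h | h
      · exact Finset.mem_union_left _ (Finset.mem_filter.mpr ⟨ha, h⟩)
      · exact Finset.mem_union_right _ (Finset.mem_filter.mpr ⟨ha, h⟩)
    · intro ha
      rcases Finset.mem_union.mp ha with h | h
      · exact (Finset.mem_filter.mp h).1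
      · exact (Finset.mem_filter.mp h).1
  -- the F1 chargers
  set J1 : A → A := fun a =>
    if h : ∃ x, x ∈ P.A1 ∧ P.f1 x = M' a ∧ M x = M' a then h.choose else a with hJ1def
  have hJ1spec : ∀ a ∈ G1s, J1 a ∈ P.A1 ∧ P.f1 (J1 a) = M' a ∧ M (J1 a) = M' a := by
    intro a ha
    have hmem : M' a ∈ P.F1 := (Finset.mem_filter.mp ha).2
    have hex : ∃ x, x ∈ P.A1 ∧ P.f1 x = M' a ∧ M x = M' a := by
      rcases hF1 (M' a) hmem with ⟨x, hx1, hx2, hx3⟩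
      exact ⟨x, hx1, hx2, hx3⟩
    simp only [hJ1def, dif_pos hex]
    exact hex.choose_spec
  have hnself : ∀ a ∈ Gain, M a ≠ M' a := by
    intro a ha h
    have hpref : P.Prefers a (M' a) (M a) := (Finset.mem_filter.mp ha).2
    rw [h] at hpref
    exact lt_irrefl _ hpref
  have hJ1L : ∀ a ∈ G1s, J1 a ∈ L ∧ J1 a ∈ P.A1 := by
    intro a ha
    obtain ⟨hx1, hx2, hx3⟩ := hJ1spec a ha
    have haG : a ∈ Gain := (Finset.mem_filter.mp ha).1
    have hne : M' (J1 a) ≠ M (J1 a) := by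
      intro h
      have h2 : J1 a = a := hM' (by rw [h, hx3])
      rw [h2] at hx3
      exact hnself a haG hx3
    refine ⟨Finset.mem_filter.mpr ⟨Finset.mem_univ _, ?_⟩, hx1⟩
    have hle : P.rank (J1 a) (M (J1 a)) ≤ P.rank (J1 a) (M' (J1 a)) := by
      rw [hx3, ← hx2]
      exact P.bestIn_le P.I_univ_nonempty (Finset.mem_univ _)
    have hne2 : P.rank (J1 a) (M (J1 a)) ≠ P.rank (J1 a) (M' (J1 a)) := by
      intro h; exact hne (P.rank_inj _ h.symm)
    exact lt_of_le_of_ne hle hne2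
  have hJ1inj : Set.InjOn J1 ↑G1s := by
    intro a ha a' ha' h
    have h1 := (hJ1spec a ha).2.2
    have h2 := (hJ1spec a' ha').2.2
    exact hM' (by rw [← h1, ← h2, h])
  -- the F2 chargers
  set J2 : A → A := fun a =>
    if h : ∃ y, y ∈ P.A2 ∧ P.f2 y = M' a ∧ M y = M' a then h.choose else a with hJ2def
  have hJ2spec : ∀ a ∈ G2s, J2 a ∈ P.A2 ∧ P.f2 (J2 a) = M' a ∧ M (J2 a) = M' a := by
    intro a ha
    have hmem : M' a ∈ P.F2 := (Finset.mem_filter.mp ha).2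
    have hex : ∃ y, y ∈ P.A2 ∧ P.f2 y = M' a ∧ M y = M' a := by
      rcases hF2 (M' a) hmem with ⟨y, hy1, hy2, hy3⟩
      exact ⟨y, hy1, hy2, hy3⟩
    simp only [hJ2def, dif_pos hex]
    exact hex.choose_spec
  have hJ2dich : ∀ a ∈ G2s, J2 a ∈ L ∨ J2 a ∈ G1s := by
    intro a ha
    obtain ⟨hy1, hy2, hy3⟩ := hJ2spec a ha
    have haG : a ∈ Gain := (Finset.mem_filter.mp ha).1
    have hne : M' (J2 a) ≠ M (J2 a) := by
      intro h
      have h2 : J2 a = a := hM' (by rw [h, hy3])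
      rw [h2] at hy3
      exact hnself a haG hy3
    by_cases hp : P.Prefers (J2 a) (M' (J2 a)) (M (J2 a))
    · right
      have hyG : J2 a ∈ Gain := Finset.mem_filter.mpr ⟨Finset.mem_univ _, hp⟩
      refine Finset.mem_filter.mpr ⟨hyG, ?_⟩
      have hMy : M (J2 a) = P.f2 (J2 a) := by rw [hy3, hy2]
      rw [hMy] at hp
      exact P.prefers_f2 hp
    · left
      refine Finset.mem_filter.mpr ⟨Finset.mem_univ _, ?_⟩
      have hle : P.rank (J2 a) (M (J2 a)) ≤ P.rank (J2 a) (M' (J2 a)) := not_lt.mp hp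
      have hne2 : P.rank (J2 a) (M (J2 a)) ≠ P.rank (J2 a) (M' (J2 a)) := by
        intro h; exact hne (P.rank_inj _ h.symm)
      exact lt_of_le_of_ne hle hne2
  have hJ2inj : Set.InjOn J2 ↑G2s := by
    intro a ha a' ha' h
    have h1 := (hJ2spec a ha).2.2
    have h2 := (hJ2spec a' ha').2.2
    exact hM' (by rw [← h1, ← h2, h])
  -- weight counting
  set G11 : Finset A := G1s.filter (fun a => a ∈ P.A1) with hG11
  set G12 : Finset A := G1s.filter (fun a => a ∉ P.A1) with hG12
  set SL : Finset A := G2s.filter (fun a => J2 a ∈ L) with hSL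
  set SG : Finset A := G2s.filter (fun a => ¬ (J2 a ∈ L)) with hSG
  have hsum1 : ∑ a ∈ G1s, P.weight a = P.w1 * G11.card + P.w2 * G12.card := by
    rw [← Finset.sum_filter_add_sum_filter_not G1s (fun a => a ∈ P.A1)]
    congr 1
    · rw [Finset.sum_congr rfl (fun a ha => ?_), Finset.sum_const, nsmul_eq_mul, mul_comm]
      exact if_pos (Finset.mem_filter.mp ha).2
    · rw [Finset.sum_congr rfl (fun a ha => ?_), Finset.sum_const, nsmul_eq_mul, mul_comm]
      exact if_neg (Finset.mem_filter.mp ha).2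
  have hsum2 : ∑ a ∈ G2s, P.weight a = P.w2 * G2s.card := by
    rw [Finset.sum_congr rfl (fun a ha => ?_), Finset.sum_const, nsmul_eq_mul, mul_comm]
    exact if_neg (hG2A2 a ha)
  have hcard2 : (SL.card : ℝ) + SG.card = G2s.card := by
    rw [hSL, hSG]
    norm_cast
    exact Finset.card_filter_add_card_filter_not _
  have hSGle : SG.card ≤ G12.card := by
    apply Finset.card_le_card_of_injOn J2
    · intro a ha
      have h := Finset.mem_filter.mp ha
      have hd := hJ2dich a h.1
      have hg1 : J2 a ∈ G1s := by tauto
      refine Finset.mem_filter.mpr ⟨hg1, ?_⟩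
      exact (P.mem_A2_iff.mp (hJ2spec a h.1).1)
    · exact hJ2inj.mono (by intro a ha; exact (Finset.mem_filter.mp ha).1)
  -- losers
  set T1 : Finset A := G1s.image J1 with hT1
  set T2 : Finset A := SL.image J2 with hT2
  have hT1L : T1 ⊆ L := by
    intro t ht
    rcases Finset.mem_image.mp ht with ⟨a, ha, rfl⟩
    exact (hJ1L a ha).1
  have hT2L : T2 ⊆ L := by
    intro t ht
    rcases Finset.mem_image.mp ht with ⟨a, ha, rfl⟩
    exact (Finset.mem_filter.mp ha).2
  have hdisjT : Disjoint T1 T2 := by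
    rw [Finset.disjoint_left]
    intro t h1 h2
    rcases Finset.mem_image.mp h1 with ⟨a, ha, rfl⟩
    rcases Finset.mem_image.mp h2 with ⟨a', ha', heq⟩
    have hA1mem : J1 a ∈ P.A1 := (hJ1L a ha).2
    have hA2mem : J2 a' ∈ P.A2 := (hJ2spec a' (Finset.mem_filter.mp ha').1).1
    rw [heq] at hA2mem
    exact P.mem_A2_iff.mp hA2mem hA1mem
  have hLsum : ∑ b ∈ T1 ∪ T2, P.weight b ≤ ∑ b ∈ L, P.weight b := by
    apply Finset.sum_le_sum_of_subset_of_nonneg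
    · exact Finset.union_subset hT1L hT2L
    · intro b _ _; exact P.weight_nonneg b
  have hTsum : ∑ b ∈ T1 ∪ T2, P.weight b = P.w1 * T1.card + P.w2 * T2.card := by
    rw [Finset.sum_union hdisjT]
    congr 1
    · rw [Finset.sum_congr rfl (fun t ht => ?_), Finset.sum_const, nsmul_eq_mul, mul_comm]
      rcases Finset.mem_image.mp ht with ⟨a, ha, rfl⟩
      exact if_pos (hJ1L a ha).2
    · rw [Finset.sum_congr rfl (fun t ht => ?_), Finset.sum_const, nsmul_eq_mul, mul_comm]
      rcases Finset.mem_image.mp ht with ⟨a, ha, rfl⟩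
      exact if_neg (P.mem_A2_iff.mp (hJ2spec a (Finset.mem_filter.mp ha).1).1)
  have hT1card : T1.card = G1s.card := Finset.card_image_of_injOn hJ1inj
  have hT2card : T2.card = SL.card :=
    Finset.card_image_of_injOn (hJ2inj.mono (by intro a ha; exact (Finset.mem_filter.mp ha).1))
  have hG1card : (G11.card : ℝ) + G12.card = G1s.card := by
    rw [hG11, hG12]
    norm_cast
    exact Finset.card_filter_add_card_filter_not _
  -- final arithmetic
  rw [hGuni, Finset.sum_union hdisjG, hsum1, hsum2]
  calc P.w1 * G11.card + P.w2 * G12.card + P.w2 * G2s.card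
      ≤ P.w1 * T1.card + P.w2 * T2.card := by
        rw [hT1card, hT2card, ← hG1card, ← hcard2]
        have hsg : (SG.card : ℝ) ≤ G12.card := by exact_mod_cast hSGle
        have hw2 := P.hw2
        have c1 : (0:ℝ) ≤ (G12.card : ℝ) := Nat.cast_nonneg _
        have c2 : (0:ℝ) ≤ (SL.card : ℝ) := Nat.cast_nonneg _
        have c3 : (0:ℝ) ≤ (G11.card : ℝ) := Nat.cast_nonneg _
        have c4 : (0:ℝ) ≤ (SG.card : ℝ) := Nat.cast_nonneg _
        nlinarith [c1, c2, c3, c4]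
    _ = ∑ b ∈ T1 ∪ T2, P.weight b := hTsum.symm
    _ ≤ ∑ b ∈ L, P.weight b := hLsum

/-! ### Good instances have a well-formed matching -/

/-- an applicant is delicate if its `s`-item collides with another applicant's
`s`-item or with the best non-`F1` item of another applicant. -/
def Delicate (a : A) : Prop :=
  ∃ b : A, b ≠ a ∧ (P.sEnd a = P.sEnd b ∨ P.sEnd a = P.s1 b)

/-- no two applicants sharing their `f`-item are both delicate. -/
def Good : Prop :=
  ∀ a a' : A, a ≠ a' → P.fEnd a = P.fEnd a' → ¬ (P.Delicate a ∧ P.Delicate a')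

/-- representative choice for each item. -/
def repOf [Nonempty A] (p : I) : A :=
  if h : ∃ b, P.fEnd b = p ∧ P.Delicate b then h.choose
  else if h2 : ∃ b, P.fEnd b = p then h2.choose else Classical.arbitrary A

lemma repOf_spec [Nonempty A] (a : A) :
    P.fEnd (P.repOf (P.fEnd a)) = P.fEnd a ∧ P.repOf (P.fEnd (P.repOf (P.fEnd a))) = P.repOf (P.fEnd a) := by
  unfold repOf
  by_cases h : ∃ b, P.fEnd b = P.fEnd a ∧ P.Delicate b
  · rw [dif_pos h]
    have hs := h.choose_spec
    refine ⟨hs.1, ?_⟩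
    rw [hs.1, dif_pos h]
  · rw [dif_neg h]
    have h2 : ∃ b, P.fEnd b = P.fEnd a := ⟨a, rfl⟩
    rw [dif_pos h2]
    have hs := h2.choose_spec
    refine ⟨hs, ?_⟩
    rw [hs, dif_neg h, dif_pos h2]

lemma delicate_rep [Nonempty A] (hG : P.Good) {a : A} (hd : P.Delicate a) :
    P.repOf (P.fEnd a) = a := by
  have h : ∃ b, P.fEnd b = P.fEnd a ∧ P.Delicate b := ⟨a, rfl, hd⟩
  rw [repOf, dif_pos h]
  have hs := h.choose_spec
  by_contra hne
  exact hG a h.choose (fun he => hne (by rw [← he])) hs.1.symm ⟨hd, hs.2⟩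

theorem hasWellFormed_of_good (hG : P.Good) : P.HasWellFormed := by
  cases isEmpty_or_nonempty A with
  | inl hA =>
    refine ⟨fun a => (IsEmpty.false a).elim, fun a => (IsEmpty.false a).elim, ?_, ?_, ?_, ?_⟩
    · intro x hx; exact (IsEmpty.false x).elim
    · intro x hx; exact (IsEmpty.false x).elim
    · intro p hp
      rcases Finset.mem_image.mp hp with ⟨x, _, _⟩
      exact (IsEmpty.false x).elim
    · intro p hp
      rcases Finset.mem_image.mp hp with ⟨x, _, _⟩
      exact (IsEmpty.false x).elim
  | inr hA =>
  set M : A → I := fun a => if P.repOf (P.fEnd a) = a then P.fEnd a else P.sEnd a with hMdef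
  have hrep : ∀ a : A, P.repOf (P.fEnd a) = a → M a = P.fEnd a := by
    intro a h; simp only [hMdef, if_pos h]
  have hnonrep : ∀ a : A, P.repOf (P.fEnd a) ≠ a → M a = P.sEnd a ∧ ¬ P.Delicate a := by
    intro a h
    exact ⟨by simp only [hMdef, if_neg h], fun hd => h (P.delicate_rep hG hd)⟩
  have hinj : Function.Injective M := by
    intro a a' heq
    by_contra hne
    by_cases h1 : P.repOf (P.fEnd a) = a <;> by_cases h2 : P.repOf (P.fEnd a') = a'
    · rw [hrep a h1, hrep a' h2] at heq
      rw [← heq] at h2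
      rw [h1] at h2
      exact hne h2
    · rw [hrep a h1, (hnonrep a' h2).1] at heq
      have hnd := (hnonrep a' h2).2
      by_cases ha : a ∈ P.A1
      · have : P.fEnd a ∈ P.F1 := by rw [P.fEnd_A1 ha]; exact P.f1_mem_F1 ha
        rw [heq] at this
        exact P.sEnd_not_mem_F1 a' this
      · have : P.fEnd a = P.s1 a := P.fEnd_A2 ha
        exact hnd ⟨a, fun h => hne h, Or.inr (by rw [← heq, this])⟩
    · rw [hrep a' h2, (hnonrep a h1).1] at heq
      have hnd := (hnonrep a h1).2
      by_cases ha : a' ∈ P.A1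
      · have : P.fEnd a' ∈ P.F1 := by rw [P.fEnd_A1 ha]; exact P.f1_mem_F1 ha
        rw [← heq] at this
        exact P.sEnd_not_mem_F1 a this
      · have : P.fEnd a' = P.s1 a' := P.fEnd_A2 ha
        exact hnd ⟨a', fun h => hne h.symm, Or.inr (by rw [heq, this])⟩
    · rw [(hnonrep a h1).1, (hnonrep a' h2).1] at heq
      exact (hnonrep a h1).2 ⟨a', fun h => hne h.symm, Or.inl heq⟩
  refine ⟨M, hinj, ?_, ?_, ?_, ?_⟩
  · intro x hx
    by_cases h : P.repOf (P.fEnd x) = x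
    · left; rw [hrep x h, P.fEnd_A1 hx]
    · right; rw [(hnonrep x h).1, P.sEnd_A1 hx]
  · intro y hy
    have hy1 : y ∉ P.A1 := P.mem_A2_iff.mp hy
    by_cases h : P.repOf (P.fEnd y) = y
    · left; rw [hrep y h, P.fEnd_A2 hy1]
    · right; rw [(hnonrep y h).1, P.sEnd_A2 hy1]
  · intro p hp
    rcases Finset.mem_image.mp hp with ⟨x, hx, hfx⟩
    have hfEx : P.fEnd x = p := by rw [P.fEnd_A1 hx, hfx]
    set r := P.repOf (P.fEnd x) with hr
    obtain ⟨hr1, hr2⟩ := P.repOf_spec x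
    have hrA1 : r ∈ P.A1 := by
      by_contra hrA
      have : P.fEnd r = P.s1 r := P.fEnd_A2 hrA
      rw [this] at hr1
      have : P.s1 r ∈ P.F1 := by rw [hr1, hfEx]; exact hp
      exact P.s1_not_mem_F1 r this
    refine ⟨r, hrA1, ?_, ?_⟩
    · rw [← P.fEnd_A1 hrA1, hr1, hfEx]
    · rw [hrep r hr2, hr1, hfEx]
  · intro q hq
    rcases Finset.mem_image.mp hq with ⟨y, hy, hfy⟩
    have hy1 : y ∉ P.A1 := P.mem_A2_iff.mp hy
    have hfEy : P.fEnd y = q := by rw [P.fEnd_A2 hy1, hfy]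
    set r := P.repOf (P.fEnd y) with hr
    obtain ⟨hr1, hr2⟩ := P.repOf_spec y
    have hrA2 : r ∈ P.A2 := by
      rw [P.mem_A2_iff]
      intro hrA
      have : P.fEnd r = P.f1 r := P.fEnd_A1 hrA
      have hmem : P.f1 r ∈ P.F1 := P.f1_mem_F1 hrA
      rw [← this, hr1, hfEy] at hmem
      exact P.not_mem_F1_of_mem_F2 hq hmem
    refine ⟨r, hrA2, ?_, ?_⟩
    · rw [← P.fEnd_A2 (P.mem_A2_iff.mp hrA2), hr1, hfEy]
    · rw [hrep r hr2, hr1, hfEy]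

theorem hasPopular_of_good (hw : 2 * P.w2 ≤ P.w1) (hG : P.Good) : P.HasPopular := by
  obtain ⟨M, hM⟩ := P.hasWellFormed_of_good hG
  exact ⟨M, P.isPopular_of_isWellFormed hw hM⟩


end TwoWPM

/-- The instance of the complete and strict 2-weighted popular matching problem on
applicants `Fin n` (the first `k` of which form the first category) and items `Fin m`
determined by a profile `σ` of preference lists (rankings) of the applicants. -/
def instOf (n k m : ℕ) (w1 w2 : ℝ) (h : n < m ∧ w2 < w1 ∧ 0 < w2)
    (σ : Fin n → (Fin m ≃ Fin m)) : TwoWPM (Fin n) (Fin m) where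
  A1 := Finset.univ.filter fun x : Fin n => (x : ℕ) < k
  A2 := Finset.univ.filter fun x : Fin n => ¬ (x : ℕ) < k
  union_eq := by
    ext x
    simp only [Finset.mem_union, Finset.mem_filter, Finset.mem_univ, true_and, iff_true]
    tauto
  disj := by
    simp only [Finset.disjoint_left, Finset.mem_filter]
    tauto
  w1 := w1
  w2 := w2
  hw12 := h.2.1
  hw2 := h.2.2
  rank := fun x i => (σ x i : ℕ)
  rank_inj := fun x a b hab => (σ x).injective (Fin.val_injective hab)
  card_lt := by simpa using h.1

/-- the probability that a uniformly random instance of the complete and strict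
2-weighted popular matching problem with `n` applicants (the first `k` forming the
first category), `m` items and weights `w1`, `w2` has a 2-weighted popular matching:
each applicant's preference list is an independent uniformly random linear order,
i.e. a uniformly random ranking bijection. -/
def pmProb (n k m : ℕ) (w1 w2 : ℝ) : ℝ :=
  if h : n < m ∧ w2 < w1 ∧ 0 < w2 then
    ((Finset.univ.filter fun σ : Fin n → (Fin m ≃ Fin m) =>
        (instOf n k m w1 w2 h σ).HasPopular).card : ℝ) /
      (Fintype.card (Fin n → (Fin m ≃ Fin m)) : ℝ)
  else 0

/-! ### Probabilistic part -/

namespace PMaux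

variable {n k m : ℕ} {w1 w2 : ℝ}

/-- abbreviation for the instance determined by a profile. -/
def Q (n k m : ℕ) (w1 w2 : ℝ) (h : n < m ∧ w2 < w1 ∧ 0 < w2)
    (σ : Fin n → (Fin m ≃ Fin m)) : TwoWPM (Fin n) (Fin m) :=
  instOf n k m w1 w2 h σ

variable (h : n < m ∧ w2 < w1 ∧ 0 < w2)

lemma Q_rank (σ : Fin n → (Fin m ≃ Fin m)) (x : Fin n) (i : Fin m) :
    (Q n k m w1 w2 h σ).rank x i = σ x i := rfl

lemma mem_A1_iff (σ : Fin n → (Fin m ≃ Fin m)) (x : Fin n) :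
    x ∈ (Q n k m w1 w2 h σ).A1 ↔ (x : ℕ) < k := by
  simp [Q, instOf]

lemma A1_eq (σ σ' : Fin n → (Fin m ≃ Fin m)) :
    (Q n k m w1 w2 h σ).A1 = (Q n k m w1 w2 h σ').A1 := rfl

lemma mem_A2_iff' (σ : Fin n → (Fin m ≃ Fin m)) (x : Fin n) :
    x ∈ (Q n k m w1 w2 h σ).A2 ↔ ¬ (x : ℕ) < k := by
  simp [Q, instOf]

lemma bestIn_congr {σ σ' : Fin n → (Fin m ≃ Fin m)} {x : Fin n} (hx : σ x = σ' x)
    (s : Finset (Fin m)) :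
    (Q n k m w1 w2 h σ).bestIn x s = (Q n k m w1 w2 h σ').bestIn x s := by
  by_cases hs : s.Nonempty
  · apply (Q n k m w1 w2 h σ).bestIn_eq ((Q n k m w1 w2 h σ').bestIn_mem hs)
    intro p hp
    have hb := (Q n k m w1 w2 h σ').bestIn_le (x := x) hs hp
    simpa [Q_rank, hx] using hb
  · rw [TwoWPM.bestIn, TwoWPM.bestIn, dif_neg hs, dif_neg hs]

lemma bestIn_swap (σ : Fin n → (Fin m ≃ Fin m)) (z : Fin n) (u v : Fin m)
    {s : Finset (Fin m)} (hs : s.Nonempty) (hu : u ∈ s) (hv : v ∈ s) :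
    (Q n k m w1 w2 h (Function.update σ z ((Equiv.swap u v).trans (σ z)))).bestIn z s
      = Equiv.swap u v ((Q n k m w1 w2 h σ).bestIn z s) := by
  have hmaps : ∀ p ∈ s, Equiv.swap u v p ∈ s := by
    intro p hp
    rcases eq_or_ne p u with rfl | h1
    · rw [Equiv.swap_apply_left]; exact hv
    rcases eq_or_ne p v with rfl | h2
    · rw [Equiv.swap_apply_right]; exact hu
    · rw [Equiv.swap_apply_of_ne_of_ne h1 h2]; exact hp
  set σ' := Function.update σ z ((Equiv.swap u v).trans (σ z)) with hσ'
  have hrank : ∀ p : Fin m, (Q n k m w1 w2 h σ').rank z p = σ z (Equiv.swap u v p) := by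
    intro p
    rw [Q_rank]
    simp [hσ', Function.update_self]
  apply (Q n k m w1 w2 h σ').bestIn_eq (hmaps _ ((Q n k m w1 w2 h σ).bestIn_mem hs))
  intro p hp
  rw [hrank, hrank, Equiv.swap_apply_self]
  exact (Q n k m w1 w2 h σ).bestIn_le hs (hmaps p hp)

lemma s1_congr {σ σ' : Fin n → (Fin m ≃ Fin m)} {x : Fin n} (hx : σ x = σ' x)
    (hF1 : (Q n k m w1 w2 h σ).F1 = (Q n k m w1 w2 h σ').F1) :
    (Q n k m w1 w2 h σ).s1 x = (Q n k m w1 w2 h σ').s1 x := by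
  rw [TwoWPM.s1, TwoWPM.s1, hF1]
  exact bestIn_congr h hx _

lemma s2_congr {σ σ' : Fin n → (Fin m ≃ Fin m)} {x : Fin n} (hx : σ x = σ' x)
    (hF1 : (Q n k m w1 w2 h σ).F1 = (Q n k m w1 w2 h σ').F1)
    (hF2 : (Q n k m w1 w2 h σ).F2 = (Q n k m w1 w2 h σ').F2) :
    (Q n k m w1 w2 h σ).s2 x = (Q n k m w1 w2 h σ').s2 x := by
  rw [TwoWPM.s2, TwoWPM.s2, hF1, hF2]
  exact bestIn_congr h hx _

lemma f1_congr {σ σ' : Fin n → (Fin m ≃ Fin m)} {x : Fin n} (hx : σ x = σ' x) :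
    (Q n k m w1 w2 h σ).f1 x = (Q n k m w1 w2 h σ').f1 x := by
  rw [TwoWPM.f1, TwoWPM.f1]
  exact bestIn_congr h hx _

lemma F1_inv (σ : Fin n → (Fin m ≃ Fin m)) (z : Fin n) (π' : Fin m ≃ Fin m)
    (hz : (z : ℕ) < k →
      (Q n k m w1 w2 h (Function.update σ z π')).f1 z = (Q n k m w1 w2 h σ).f1 z) :
    (Q n k m w1 w2 h (Function.update σ z π')).F1 = (Q n k m w1 w2 h σ).F1 := by
  rw [TwoWPM.F1, TwoWPM.F1, A1_eq h _ σ]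
  apply Finset.image_congr
  intro w hw
  rcases eq_or_ne w z with rfl | hwz
  · exact hz ((mem_A1_iff h σ w).mp hw)
  · exact f1_congr h (Function.update_of_ne hwz _ _)

lemma F2_inv (σ : Fin n → (Fin m ≃ Fin m)) (z : Fin n) (π' : Fin m ≃ Fin m)
    (hF1 : (Q n k m w1 w2 h (Function.update σ z π')).F1 = (Q n k m w1 w2 h σ).F1)
    (hz : ¬ (z : ℕ) < k →
      (Q n k m w1 w2 h (Function.update σ z π')).s1 z = (Q n k m w1 w2 h σ).s1 z) :
    (Q n k m w1 w2 h (Function.update σ z π')).F2 = (Q n k m w1 w2 h σ).F2 := by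
  rw [TwoWPM.F2, TwoWPM.F2]
  have hA2 : (Q n k m w1 w2 h (Function.update σ z π')).A2 = (Q n k m w1 w2 h σ).A2 := rfl
  rw [hA2]
  apply Finset.image_congr
  intro w hw
  rw [TwoWPM.f2_eq_s1, TwoWPM.f2_eq_s1]
  rcases eq_or_ne w z with rfl | hwz
  · exact hz ((mem_A2_iff' h σ w).mp hw)
  · exact s1_congr h (Function.update_of_ne hwz _ _) hF1

/-- the relevant exclusion set of an applicant. -/
def tset (h : n < m ∧ w2 < w1 ∧ 0 < w2) (σ : Fin n → (Fin m ≃ Fin m)) (z : Fin n) :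
    Finset (Fin m) :=
  if (z : ℕ) < k then (Q n k m w1 w2 h σ).F1
  else (Q n k m w1 w2 h σ).F1 ∪ (Q n k m w1 w2 h σ).F2

lemma card_A1_le (σ : Fin n → (Fin m ≃ Fin m)) : (Q n k m w1 w2 h σ).A1.card ≤ n := by
  calc (Q n k m w1 w2 h σ).A1.card ≤ (Finset.univ : Finset (Fin n)).card :=
        Finset.card_le_card (Finset.subset_univ _)
    _ = n := by simp

lemma card_A2_le (σ : Fin n → (Fin m ≃ Fin m)) : (Q n k m w1 w2 h σ).A2.card ≤ n := by
  calc (Q n k m w1 w2 h σ).A2.card ≤ (Finset.univ : Finset (Fin n)).card :=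
        Finset.card_le_card (Finset.subset_univ _)
    _ = n := by simp

lemma card_tset_le (σ : Fin n → (Fin m ≃ Fin m)) (z : Fin n) :
    ((tset (k := k) h σ z)).card ≤ n := by
  rw [tset]
  split
  · exact le_trans (Q n k m w1 w2 h σ).card_F1_le (card_A1_le h σ)
  · have hc := (Q n k m w1 w2 h σ).cardA
    calc ((Q n k m w1 w2 h σ).F1 ∪ (Q n k m w1 w2 h σ).F2).card
        ≤ (Q n k m w1 w2 h σ).F1.card + (Q n k m w1 w2 h σ).F2.card :=
          Finset.card_union_le _ _
      _ ≤ (Q n k m w1 w2 h σ).A1.card + (Q n k m w1 w2 h σ).A2.card :=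
          Nat.add_le_add (Q n k m w1 w2 h σ).card_F1_le (Q n k m w1 w2 h σ).card_F2_le
      _ = Fintype.card (Fin n) := hc
      _ = n := by simp

lemma sEnd_eq_bestIn (σ : Fin n → (Fin m ≃ Fin m)) (z : Fin n) :
    (Q n k m w1 w2 h σ).sEnd z
      = (Q n k m w1 w2 h σ).bestIn z (Finset.univ \ tset (k := k) h σ z) := by
  by_cases hz : (z : ℕ) < k
  · rw [tset, if_pos hz, (Q n k m w1 w2 h σ).sEnd_A1 ((mem_A1_iff h σ z).mpr hz)]
    rfl
  · rw [tset, if_neg hz,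
      (Q n k m w1 w2 h σ).sEnd_A2 (fun hc => hz ((mem_A1_iff h σ z).mp hc))]
    rfl

lemma tset_nonempty (σ : Fin n → (Fin m ≃ Fin m)) (z : Fin n) :
    (Finset.univ \ tset (k := k) h σ z).Nonempty := by
  rw [tset]
  split
  · exact (Q n k m w1 w2 h σ).sdiff_F1_nonempty
  · exact (Q n k m w1 w2 h σ).sdiff_F12_nonempty

/-- invariance of the derived data under a change of `σ z` fixing the coarse data. -/
lemma inv_main (σ : Fin n → (Fin m ≃ Fin m)) (z : Fin n) (u v : Fin m)
    (hu : u ∈ Finset.univ \ tset (k := k) h σ z) (hv : v ∈ Finset.univ \ tset (k := k) h σ z) :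
    (Q n k m w1 w2 h (Function.update σ z ((Equiv.swap u v).trans (σ z)))).F1
        = (Q n k m w1 w2 h σ).F1 ∧
    (Q n k m w1 w2 h (Function.update σ z ((Equiv.swap u v).trans (σ z)))).F2
        = (Q n k m w1 w2 h σ).F2 ∧
    (Q n k m w1 w2 h (Function.update σ z ((Equiv.swap u v).trans (σ z)))).fEnd z
        = (Q n k m w1 w2 h σ).fEnd z := by
  have hm0 : 0 < m := lt_of_le_of_lt (Nat.zero_le n) h.1
  haveI : Nonempty (Fin m) := ⟨⟨0, hm0⟩⟩
  set σ' := Function.update σ z ((Equiv.swap u v).trans (σ z)) with hσ'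
  by_cases hzk : (z : ℕ) < k
  · -- z is in the first category; u, v are outside F1
    rw [tset, if_pos hzk] at hu hv
    have huF1 : u ∉ (Q n k m w1 w2 h σ).F1 := (Finset.mem_sdiff.mp hu).2
    have hvF1 : v ∉ (Q n k m w1 w2 h σ).F1 := (Finset.mem_sdiff.mp hv).2
    have hmemz : z ∈ (Q n k m w1 w2 h σ).A1 := (mem_A1_iff h σ z).mpr hzk
    have hf1z : (Q n k m w1 w2 h σ').f1 z = (Q n k m w1 w2 h σ).f1 z := by
      rw [TwoWPM.f1, TwoWPM.f1]
      rw [bestIn_swap h σ z u v Finset.univ_nonempty (Finset.mem_univ u) (Finset.mem_univ v)]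
      apply Equiv.swap_apply_of_ne_of_ne
      · intro hc
        exact huF1 (hc ▸ (Q n k m w1 w2 h σ).f1_mem_F1 hmemz)
      · intro hc
        exact hvF1 (hc ▸ (Q n k m w1 w2 h σ).f1_mem_F1 hmemz)
    have hF1 : (Q n k m w1 w2 h σ').F1 = (Q n k m w1 w2 h σ).F1 :=
      F1_inv h σ z _ (fun _ => hf1z)
    have hF2 : (Q n k m w1 w2 h σ').F2 = (Q n k m w1 w2 h σ).F2 :=
      F2_inv h σ z _ hF1 (fun hc => absurd hzk hc)
    refine ⟨hF1, hF2, ?_⟩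
    rw [(Q n k m w1 w2 h σ').fEnd_A1 hmemz, (Q n k m w1 w2 h σ).fEnd_A1 hmemz, hf1z]
  · -- z is in the second category; u, v are outside F1 ∪ F2
    rw [tset, if_neg hzk] at hu hv
    have huF : u ∉ (Q n k m w1 w2 h σ).F1 ∪ (Q n k m w1 w2 h σ).F2 := (Finset.mem_sdiff.mp hu).2
    have hvF : v ∉ (Q n k m w1 w2 h σ).F1 ∪ (Q n k m w1 w2 h σ).F2 := (Finset.mem_sdiff.mp hv).2
    have hmemz : z ∉ (Q n k m w1 w2 h σ).A1 := fun hc => hzk ((mem_A1_iff h σ z).mp hc)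
    have hmemz2 : z ∈ (Q n k m w1 w2 h σ).A2 := (Q n k m w1 w2 h σ).mem_A2_iff.mpr hmemz
    have hF1 : (Q n k m w1 w2 h σ').F1 = (Q n k m w1 w2 h σ).F1 :=
      F1_inv h σ z _ (fun hc => absurd hc hzk)
    have hs1z : (Q n k m w1 w2 h σ').s1 z = (Q n k m w1 w2 h σ).s1 z := by
      rw [TwoWPM.s1, TwoWPM.s1, hF1]
      rw [bestIn_swap h σ z u v (Q n k m w1 w2 h σ).sdiff_F1_nonempty
        (Finset.mem_sdiff.mpr ⟨Finset.mem_univ _, fun hc => huF (Finset.mem_union_left _ hc)⟩)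
        (Finset.mem_sdiff.mpr ⟨Finset.mem_univ _, fun hc => hvF (Finset.mem_union_left _ hc)⟩)]
      have hf2F2 : (Q n k m w1 w2 h σ).bestIn z (Finset.univ \ (Q n k m w1 w2 h σ).F1)
          ∈ (Q n k m w1 w2 h σ).F2 := (Q n k m w1 w2 h σ).f2_mem_F2 hmemz2
      apply Equiv.swap_apply_of_ne_of_ne
      · intro hc
        exact huF (Finset.mem_union_right _ (hc ▸ hf2F2))
      · intro hc
        exact hvF (Finset.mem_union_right _ (hc ▸ hf2F2))
    have hF2 : (Q n k m w1 w2 h σ').F2 = (Q n k m w1 w2 h σ).F2 :=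
      F2_inv h σ z _ hF1 (fun _ => hs1z)
    refine ⟨hF1, hF2, ?_⟩
    rw [(Q n k m w1 w2 h σ').fEnd_A2 hmemz, (Q n k m w1 w2 h σ).fEnd_A2 hmemz,
      TwoWPM.f2_eq_s1, TwoWPM.f2_eq_s1, hs1z]

/-- invariance of other applicants' data. -/
lemma obs_inv (σ : Fin n → (Fin m ≃ Fin m)) (z : Fin n) (u v : Fin m)
    (hu : u ∈ Finset.univ \ tset (k := k) h σ z) (hv : v ∈ Finset.univ \ tset (k := k) h σ z)
    (w : Fin n) (hw : w ≠ z) :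
    (Q n k m w1 w2 h (Function.update σ z ((Equiv.swap u v).trans (σ z)))).sEnd w
        = (Q n k m w1 w2 h σ).sEnd w ∧
    (Q n k m w1 w2 h (Function.update σ z ((Equiv.swap u v).trans (σ z)))).s1 w
        = (Q n k m w1 w2 h σ).s1 w ∧
    (Q n k m w1 w2 h (Function.update σ z ((Equiv.swap u v).trans (σ z)))).fEnd w
        = (Q n k m w1 w2 h σ).fEnd w := by
  obtain ⟨hF1, hF2, _⟩ := inv_main h σ z u v hu hv
  set σ' := Function.update σ z ((Equiv.swap u v).trans (σ z)) with hσ'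
  have hww : σ' w = σ w := Function.update_of_ne hw _ _
  have hs1 : (Q n k m w1 w2 h σ').s1 w = (Q n k m w1 w2 h σ).s1 w :=
    s1_congr h hww hF1
  have hs2 : (Q n k m w1 w2 h σ').s2 w = (Q n k m w1 w2 h σ).s2 w :=
    s2_congr h hww hF1 hF2
  have hf1 : (Q n k m w1 w2 h σ').f1 w = (Q n k m w1 w2 h σ).f1 w := f1_congr h hww
  by_cases hwk : (w : ℕ) < k
  · have hmem : w ∈ (Q n k m w1 w2 h σ).A1 := (mem_A1_iff h σ w).mpr hwk
    refine ⟨?_, hs1, ?_⟩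
    · rw [(Q n k m w1 w2 h σ').sEnd_A1 hmem, (Q n k m w1 w2 h σ).sEnd_A1 hmem, hs1]
    · rw [(Q n k m w1 w2 h σ').fEnd_A1 hmem, (Q n k m w1 w2 h σ).fEnd_A1 hmem, hf1]
  · have hmem : w ∉ (Q n k m w1 w2 h σ).A1 := fun hc => hwk ((mem_A1_iff h σ w).mp hc)
    refine ⟨?_, hs1, ?_⟩
    · rw [(Q n k m w1 w2 h σ').sEnd_A2 hmem, (Q n k m w1 w2 h σ).sEnd_A2 hmem, hs2]
    · rw [(Q n k m w1 w2 h σ').fEnd_A2 hmem, (Q n k m w1 w2 h σ).fEnd_A2 hmem,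
        TwoWPM.f2_eq_s1, TwoWPM.f2_eq_s1, hs1]

lemma orderEmbOfCardLe_congr {α : Type*} [LinearOrder α] {s s' : Finset α} (hss : s = s')
    {r : ℕ} (h1 : r ≤ s.card) (h2 : r ≤ s'.card) (j : Fin r) :
    s.orderEmbOfCardLe h1 j = s'.orderEmbOfCardLe h2 j := by
  subst hss; rfl

/-- the fundamental conditional-uniformity counting lemma ("peel"). -/
lemma peel (z : Fin n) (t : (Fin n → (Fin m ≃ Fin m)) → Finset (Fin m))
    (φ T : (Fin n → (Fin m ≃ Fin m)) → Fin m) (E' : (Fin n → (Fin m ≃ Fin m)) → Prop)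
    (hts : ∀ σ, (t σ).card ≤ n)
    (hφ : ∀ σ, φ σ = (Q n k m w1 w2 h σ).bestIn z (Finset.univ \ t σ))
    (hinv : ∀ σ : Fin n → (Fin m ≃ Fin m), ∀ u v : Fin m,
      u ∈ Finset.univ \ t σ → v ∈ Finset.univ \ t σ →
      t (Function.update σ z ((Equiv.swap u v).trans (σ z))) = t σ ∧
      T (Function.update σ z ((Equiv.swap u v).trans (σ z))) = T σ ∧
      (E' (Function.update σ z ((Equiv.swap u v).trans (σ z))) ↔ E' σ)) :
    (m - n) * (Finset.univ.filter
        (fun σ : Fin n → (Fin m ≃ Fin m) => φ σ = T σ ∧ E' σ)).card ≤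
      (Finset.univ.filter (fun σ : Fin n → (Fin m ≃ Fin m) => E' σ)).card := by
  classical
  have hmn : 0 < m - n := Nat.sub_pos_of_lt h.1
  have hcard : ∀ σ : Fin n → (Fin m ≃ Fin m), m - n ≤ (Finset.univ \ t σ).card := by
    intro σ
    rw [Finset.card_sdiff_of_subset (Finset.subset_univ _), Finset.card_univ, Fintype.card_fin]
    exact Nat.sub_le_sub_left (hts σ) m
  have hnone : ∀ σ : Fin n → (Fin m ≃ Fin m), (Finset.univ \ t σ).Nonempty := by
    intro σ
    rw [← Finset.card_pos]
    exact lt_of_lt_of_le hmn (hcard σ)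
  set B := Finset.univ.filter
    (fun σ : Fin n → (Fin m ≃ Fin m) => φ σ = T σ ∧ E' σ) with hB
  set G := Finset.univ.filter (fun σ : Fin n → (Fin m ≃ Fin m) => E' σ) with hG
  set F : ((Fin n → (Fin m ≃ Fin m)) × Fin (m - n)) → (Fin n → (Fin m ≃ Fin m)) :=
    fun p => Function.update p.1 z
      ((Equiv.swap (φ p.1) ((Finset.univ \ t p.1).orderEmbOfCardLe (hcard p.1) p.2)).trans
        (p.1 z)) with hFdef
  have hmemφ : ∀ σ : Fin n → (Fin m ≃ Fin m), φ σ ∈ Finset.univ \ t σ := by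
    intro σ
    rw [hφ]
    exact (Q n k m w1 w2 h σ).bestIn_mem (hnone σ)
  have hmemv : ∀ (σ : Fin n → (Fin m ≃ Fin m)) (j : Fin (m - n)),
      (Finset.univ \ t σ).orderEmbOfCardLe (hcard σ) j ∈ Finset.univ \ t σ := by
    intro σ j
    exact Finset.orderEmbOfCardLe_mem _ _ j
  -- the new φ value after the modification
  have hφF : ∀ p : ((Fin n → (Fin m ≃ Fin m)) × Fin (m - n)),
      φ (F p) = (Finset.univ \ t p.1).orderEmbOfCardLe (hcard p.1) p.2 := by
    intro p
    obtain ⟨ht', _, _⟩ := hinv p.1 _ _ (hmemφ p.1) (hmemv p.1 p.2)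
    rw [hφ, hFdef]
    simp only
    rw [ht']
    rw [bestIn_swap h p.1 z _ _ (hnone p.1) (hmemφ p.1) (hmemv p.1 p.2)]
    rw [← hφ]
    exact Equiv.swap_apply_left _ _
  have hmapsto : ∀ p ∈ B ×ˢ (Finset.univ : Finset (Fin (m - n))), F p ∈ G := by
    intro p hp
    have hp1 : p.1 ∈ B := (Finset.mem_product.mp hp).1
    have hE : E' p.1 := (Finset.mem_filter.mp hp1).2.2
    obtain ⟨_, _, hE'⟩ := hinv p.1 _ _ (hmemφ p.1) (hmemv p.1 p.2)
    exact Finset.mem_filter.mpr ⟨Finset.mem_univ _, hE'.mpr hE⟩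
  have hinjOn : Set.InjOn F ↑(B ×ˢ (Finset.univ : Finset (Fin (m - n)))) := by
    intro p1 hp1 p2 hp2 heq
    simp only [Finset.coe_product, Set.mem_prod, Finset.mem_coe] at hp1 hp2
    have hb1 : φ p1.1 = T p1.1 ∧ E' p1.1 := (Finset.mem_filter.mp hp1.1).2
    have hb2 : φ p2.1 = T p2.1 ∧ E' p2.1 := (Finset.mem_filter.mp hp2.1).2
    obtain ⟨ht1, hT1, _⟩ := hinv p1.1 _ _ (hmemφ p1.1) (hmemv p1.1 p1.2)
    obtain ⟨ht2, hT2, _⟩ := hinv p2.1 _ _ (hmemφ p2.1) (hmemv p2.1 p2.2)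
    have htt : t p1.1 = t p2.1 := by
      have e1 : t (F p1) = t p1.1 := ht1
      have e2 : t (F p2) = t p2.1 := ht2
      rw [← e1, ← e2, heq]
    have huu : φ p1.1 = φ p2.1 := by
      have e1 : T (F p1) = T p1.1 := hT1
      have e2 : T (F p2) = T p2.1 := hT2
      rw [hb1.1, hb2.1, ← e1, ← e2, heq]
    have hvv : (Finset.univ \ t p1.1).orderEmbOfCardLe (hcard p1.1) p1.2
        = (Finset.univ \ t p2.1).orderEmbOfCardLe (hcard p2.1) p2.2 := by
      have e1 := hφF p1
      have e2 := hφF p2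
      rw [← e1, ← e2, heq]
    have hjj : p1.2 = p2.2 := by
      have hss : Finset.univ \ t p1.1 = Finset.univ \ t p2.1 := by rw [htt]
      have := hvv.trans
        (orderEmbOfCardLe_congr hss.symm (hcard p2.1) (hcard p1.1) p2.2)
      exact ((Finset.univ \ t p1.1).orderEmbOfCardLe (hcard p1.1)).injective this
    have hzz : p1.1 z = p2.1 z := by
      have e1 : F p1 z = (Equiv.swap (φ p1.1)
          ((Finset.univ \ t p1.1).orderEmbOfCardLe (hcard p1.1) p1.2)).trans (p1.1 z) :=
        Function.update_self _ _ _
      have e2 : F p2 z = (Equiv.swap (φ p2.1)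
          ((Finset.univ \ t p2.1).orderEmbOfCardLe (hcard p2.1) p2.2)).trans (p2.1 z) :=
        Function.update_self _ _ _
      have e3 := e1.symm.trans (heq ▸ e2)
      apply Equiv.ext
      intro i
      have := congrArg (fun e : Fin m ≃ Fin m => e (Equiv.swap (φ p1.1)
        ((Finset.univ \ t p1.1).orderEmbOfCardLe (hcard p1.1) p1.2) i)) e3
      simp only [Equiv.trans_apply, Equiv.swap_apply_self] at this
      rw [huu, hvv] at this
      simpa [Equiv.trans_apply, Equiv.swap_apply_self] using this
    have h11 : p1.1 = p2.1 := by
      funext w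
      rcases eq_or_ne w z with rfl | hw
      · exact hzz
      · have e1 : F p1 w = p1.1 w := Function.update_of_ne hw _ _
        have e2 : F p2 w = p2.1 w := Function.update_of_ne hw _ _
        rw [← e1, ← e2, heq]
    exact Prod.ext h11 hjj
  have hle := Finset.card_le_card_of_injOn F hmapsto hinjOn
  rw [Finset.card_product, Finset.card_univ, Fintype.card_fin] at hle
  rw [mul_comm]
  exact hle

/-- invariance of `fEnd` at any coordinate under a coarse-preserving update. -/
lemma fEnd_inv_any (σ : Fin n → (Fin m ≃ Fin m)) (z : Fin n) (u v : Fin m)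
    (hu : u ∈ Finset.univ \ tset (k := k) h σ z) (hv : v ∈ Finset.univ \ tset (k := k) h σ z)
    (w : Fin n) :
    (Q n k m w1 w2 h (Function.update σ z ((Equiv.swap u v).trans (σ z)))).fEnd w
      = (Q n k m w1 w2 h σ).fEnd w := by
  rcases eq_or_ne w z with rfl | hw
  · exact (inv_main h σ w u v hu hv).2.2
  · exact (obs_inv h σ z u v hu hv w hw).2.2

/-- invariance of the exclusion set under a coarse-preserving update. -/
lemma tset_inv (σ : Fin n → (Fin m ≃ Fin m)) (z : Fin n) (u v : Fin m)
    (hu : u ∈ Finset.univ \ tset (k := k) h σ z) (hv : v ∈ Finset.univ \ tset (k := k) h σ z)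
    (w : Fin n) :
    tset (k := k) h (Function.update σ z ((Equiv.swap u v).trans (σ z))) w
      = tset (k := k) h σ w := by
  obtain ⟨hF1, hF2, _⟩ := inv_main h σ z u v hu hv
  rw [tset, tset, hF1, hF2]

/-- the possible collision targets. -/
def Xval (h : n < m ∧ w2 < w1 ∧ 0 < w2) (i : Bool) (b : Fin n)
    (σ : Fin n → (Fin m ≃ Fin m)) : Fin m :=
  if i then (Q n k m w1 w2 h σ).sEnd b else (Q n k m w1 w2 h σ).s1 b

lemma Xval_inv (σ : Fin n → (Fin m ≃ Fin m)) (z : Fin n) (u v : Fin m)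
    (hu : u ∈ Finset.univ \ tset (k := k) h σ z) (hv : v ∈ Finset.univ \ tset (k := k) h σ z)
    (i : Bool) (b : Fin n) (hb : b ≠ z) :
    Xval (k := k) h i b (Function.update σ z ((Equiv.swap u v).trans (σ z)))
      = Xval (k := k) h i b σ := by
  obtain ⟨hs, hs1, _⟩ := obs_inv h σ z u v hu hv b hb
  rw [Xval, Xval]
  cases i
  · simpa using hs1
  · simpa using hs

/-- peeling off one `s`-collision. -/
lemma peel_s (z b : Fin n) (i : Bool) (hbz : b ≠ z)
    (E' : (Fin n → (Fin m ≃ Fin m)) → Prop)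
    (hE' : ∀ σ : Fin n → (Fin m ≃ Fin m), ∀ u v : Fin m,
      u ∈ Finset.univ \ tset (k := k) h σ z → v ∈ Finset.univ \ tset (k := k) h σ z →
      (E' (Function.update σ z ((Equiv.swap u v).trans (σ z))) ↔ E' σ)) :
    (m - n) * (Finset.univ.filter
        (fun σ : Fin n → (Fin m ≃ Fin m) =>
          (Q n k m w1 w2 h σ).sEnd z = Xval (k := k) h i b σ ∧ E' σ)).card ≤
      (Finset.univ.filter (fun σ : Fin n → (Fin m ≃ Fin m) => E' σ)).card := by
  apply peel h z (fun σ => tset (k := k) h σ z)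
    (fun σ => (Q n k m w1 w2 h σ).sEnd z) (Xval (k := k) h i b) E'
  · exact fun σ => card_tset_le h σ z
  · exact fun σ => sEnd_eq_bestIn h σ z
  · intro σ u v hu hv
    exact ⟨tset_inv h σ z u v hu hv z, Xval_inv h σ z u v hu hv i b hbz, hE' σ u v hu hv⟩

/-- bound for the `f`-collision event. -/
lemma c0_bound (a a' : Fin n) (haa : a ≠ a') :
    (m - n) * (Finset.univ.filter
        (fun σ : Fin n → (Fin m ≃ Fin m) =>
          (Q n k m w1 w2 h σ).fEnd a = (Q n k m w1 w2 h σ).fEnd a')).card ≤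
      (Finset.univ : Finset (Fin n → (Fin m ≃ Fin m))).card := by
  classical
  by_cases ha : (a : ℕ) < k <;> by_cases ha' : (a' : ℕ) < k
  · -- both in the first category
    have hpeel := peel h a (fun _ => (∅ : Finset (Fin m)))
      (fun σ => (Q n k m w1 w2 h σ).f1 a) (fun σ => (Q n k m w1 w2 h σ).f1 a')
      (fun _ => True) (fun _ => Nat.zero_le n)
      (fun σ => by rw [Finset.sdiff_empty]; rfl)
      (fun σ u v _ _ => ⟨rfl, f1_congr h (Function.update_of_ne haa.symm _ _), Iff.rfl⟩)
    refine le_trans (Nat.mul_le_mul_left _ (Finset.card_le_card ?_))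
      (le_trans hpeel (Finset.card_le_card (fun σ _ => Finset.mem_univ σ)))
    intro σ hσ
    have hσ' := (Finset.mem_filter.mp hσ).2
    rw [(Q n k m w1 w2 h σ).fEnd_A1 ((mem_A1_iff h σ a).mpr ha),
      (Q n k m w1 w2 h σ).fEnd_A1 ((mem_A1_iff h σ a').mpr ha')] at hσ'
    simp only [Finset.mem_filter]
    exact ⟨Finset.mem_univ _, hσ', trivial⟩
  · -- mixed: impossible event
    have heq : Finset.univ.filter (fun σ : Fin n → (Fin m ≃ Fin m) =>
          (Q n k m w1 w2 h σ).fEnd a = (Q n k m w1 w2 h σ).fEnd a') = ∅ := by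
      apply Finset.filter_false_of_mem
      intro σ _
      rw [(Q n k m w1 w2 h σ).fEnd_A1 ((mem_A1_iff h σ a).mpr ha),
        (Q n k m w1 w2 h σ).fEnd_A2 (fun hc => ha' ((mem_A1_iff h σ a').mp hc))]
      intro hc
      have h1 : (Q n k m w1 w2 h σ).f1 a ∈ (Q n k m w1 w2 h σ).F1 :=
        (Q n k m w1 w2 h σ).f1_mem_F1 ((mem_A1_iff h σ a).mpr ha)
      rw [hc, TwoWPM.f2_eq_s1] at h1
      exact (Q n k m w1 w2 h σ).s1_not_mem_F1 a' h1
    rw [heq]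
    simp
  · -- mixed: impossible event
    have heq : Finset.univ.filter (fun σ : Fin n → (Fin m ≃ Fin m) =>
          (Q n k m w1 w2 h σ).fEnd a = (Q n k m w1 w2 h σ).fEnd a') = ∅ := by
      apply Finset.filter_false_of_mem
      intro σ _
      rw [(Q n k m w1 w2 h σ).fEnd_A2 (fun hc => ha ((mem_A1_iff h σ a).mp hc)),
        (Q n k m w1 w2 h σ).fEnd_A1 ((mem_A1_iff h σ a').mpr ha')]
      intro hc
      have h1 : (Q n k m w1 w2 h σ).f1 a' ∈ (Q n k m w1 w2 h σ).F1 :=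
        (Q n k m w1 w2 h σ).f1_mem_F1 ((mem_A1_iff h σ a').mpr ha')
      rw [← hc, TwoWPM.f2_eq_s1] at h1
      exact (Q n k m w1 w2 h σ).s1_not_mem_F1 a h1
    rw [heq]
    simp
  · -- both in the second category
    have hpeel := peel h a (fun σ => (Q n k m w1 w2 h σ).F1)
      (fun σ => (Q n k m w1 w2 h σ).s1 a) (fun σ => (Q n k m w1 w2 h σ).s1 a')
      (fun _ => True)
      (fun σ => le_trans (Q n k m w1 w2 h σ).card_F1_le (card_A1_le h σ))
      (fun σ => rfl)
      ?_
    · refine le_trans (Nat.mul_le_mul_left _ (Finset.card_le_card ?_))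
        (le_trans hpeel (Finset.card_le_card (fun σ _ => Finset.mem_univ σ)))
      intro σ hσ
      have hσ' := (Finset.mem_filter.mp hσ).2
      rw [(Q n k m w1 w2 h σ).fEnd_A2 (fun hc => ha ((mem_A1_iff h σ a).mp hc)),
        (Q n k m w1 w2 h σ).fEnd_A2 (fun hc => ha' ((mem_A1_iff h σ a').mp hc))] at hσ'
      simp only [Finset.mem_filter]
      exact ⟨Finset.mem_univ _, hσ', trivial⟩
    · intro σ u v hu hv
      have hF1 : (Q n k m w1 w2 h
          (Function.update σ a ((Equiv.swap u v).trans (σ a)))).F1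
            = (Q n k m w1 w2 h σ).F1 :=
        F1_inv h σ a _ (fun hc => absurd hc ha)
      refine ⟨hF1, ?_, Iff.rfl⟩
      exact s1_congr h (Function.update_of_ne haa.symm _ _) hF1

/-- classical count of profiles satisfying a predicate. -/
def cnt {n m : ℕ} (p : (Fin n → (Fin m ≃ Fin m)) → Prop) : ℕ :=
  (Finset.univ.filter p).card

lemma cnt_eq {p : (Fin n → (Fin m ≃ Fin m)) → Prop} [DecidablePred p] :
    (Finset.univ.filter p).card = cnt p := by
  unfold cnt
  congr 1
  ext σ
  simp only [Finset.mem_filter]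

lemma cnt_mono {p q : (Fin n → (Fin m ≃ Fin m)) → Prop} (hpq : ∀ σ, p σ → q σ) :
    cnt p ≤ cnt q := by
  unfold cnt
  apply Finset.card_le_card
  intro σ hσ
  simp only [Finset.mem_filter] at hσ ⊢
  exact ⟨hσ.1, hpq σ hσ.2⟩

lemma cnt_le (p : (Fin n → (Fin m ≃ Fin m)) → Prop) :
    cnt p ≤ (Finset.univ : Finset (Fin n → (Fin m ≃ Fin m))).card := by
  unfold cnt
  exact Finset.card_le_card (fun σ _ => Finset.mem_univ σ)

lemma peel_s' (z b : Fin n) (i : Bool) (hbz : b ≠ z)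
    (E' : (Fin n → (Fin m ≃ Fin m)) → Prop)
    (hE' : ∀ σ : Fin n → (Fin m ≃ Fin m), ∀ u v : Fin m,
      u ∈ Finset.univ \ tset (k := k) h σ z → v ∈ Finset.univ \ tset (k := k) h σ z →
      (E' (Function.update σ z ((Equiv.swap u v).trans (σ z))) ↔ E' σ)) :
    (m - n) * cnt (fun σ : Fin n → (Fin m ≃ Fin m) =>
        (Q n k m w1 w2 h σ).sEnd z = Xval (k := k) h i b σ ∧ E' σ) ≤ cnt E' := by
  have hp := peel_s (k := k) h z b i hbz E' hE'
  rw [cnt_eq, cnt_eq] at hp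
  exact hp

lemma c0_bound' (a a' : Fin n) (haa : a ≠ a') :
    (m - n) * cnt (fun σ : Fin n → (Fin m ≃ Fin m) =>
        (Q n k m w1 w2 h σ).fEnd a = (Q n k m w1 w2 h σ).fEnd a') ≤
      (Finset.univ : Finset (Fin n → (Fin m ≃ Fin m))).card := by
  have hp := c0_bound (k := k) h a a' haa
  rw [cnt_eq] at hp
  exact hp

/-- the "pair" bad event of a degenerate tuple. -/
def pairPred (h : n < m ∧ w2 < w1 ∧ 0 < w2) (q : (Fin n × Fin n) × Bool)
    (σ : Fin n → (Fin m ≃ Fin m)) : Prop :=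
  (Q n k m w1 w2 h σ).sEnd q.1.1 = Xval (k := k) h q.2 q.1.2 σ ∧
    (Q n k m w1 w2 h σ).fEnd q.1.1 = (Q n k m w1 w2 h σ).fEnd q.1.2

/-- the "generic" bad event of a tuple. -/
def tuplePred (h : n < m ∧ w2 < w1 ∧ 0 < w2)
    (q : ((Fin n × Fin n) × (Fin n × Fin n)) × Bool × Bool)
    (σ : Fin n → (Fin m ≃ Fin m)) : Prop :=
  (Q n k m w1 w2 h σ).fEnd q.1.1.1 = (Q n k m w1 w2 h σ).fEnd q.1.1.2 ∧
    (Q n k m w1 w2 h σ).sEnd q.1.1.1 = Xval (k := k) h q.2.1 q.1.2.1 σ ∧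
    (Q n k m w1 w2 h σ).sEnd q.1.1.2 = Xval (k := k) h q.2.2 q.1.2.2 σ

lemma pair_bound (q : (Fin n × Fin n) × Bool) (hq : q.1.1 ≠ q.1.2) :
    (m - n) ^ 2 * cnt (pairPred (k := k) h q) ≤
      (Finset.univ : Finset (Fin n → (Fin m ≃ Fin m))).card := by
  obtain ⟨⟨a, a'⟩, i⟩ := q
  simp only at hq ⊢
  have hE' : ∀ σ : Fin n → (Fin m ≃ Fin m), ∀ u v : Fin m,
      u ∈ Finset.univ \ tset (k := k) h σ a → v ∈ Finset.univ \ tset (k := k) h σ a →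
      ((fun σ => (Q n k m w1 w2 h σ).fEnd a = (Q n k m w1 w2 h σ).fEnd a')
          (Function.update σ a ((Equiv.swap u v).trans (σ a))) ↔
        (fun σ => (Q n k m w1 w2 h σ).fEnd a = (Q n k m w1 w2 h σ).fEnd a') σ) := by
    intro σ u v hu hv
    simp only [fEnd_inv_any h σ a u v hu hv a, fEnd_inv_any h σ a u v hu hv a']
  have hp1 := peel_s' (k := k) h a a' i hq.symm
    (fun σ => (Q n k m w1 w2 h σ).fEnd a = (Q n k m w1 w2 h σ).fEnd a') hE'
  have hp0 := c0_bound' (k := k) h a a' hq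
  have heq : cnt (pairPred (k := k) h ((a, a'), i)) = cnt (fun σ : Fin n → (Fin m ≃ Fin m) =>
      (Q n k m w1 w2 h σ).sEnd a = Xval (k := k) h i a' σ ∧
        (Q n k m w1 w2 h σ).fEnd a = (Q n k m w1 w2 h σ).fEnd a') := rfl
  rw [heq]
  calc (m - n) ^ 2 * cnt (fun σ : Fin n → (Fin m ≃ Fin m) =>
        (Q n k m w1 w2 h σ).sEnd a = Xval (k := k) h i a' σ ∧
          (Q n k m w1 w2 h σ).fEnd a = (Q n k m w1 w2 h σ).fEnd a')
      = (m - n) * ((m - n) * cnt (fun σ : Fin n → (Fin m ≃ Fin m) =>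
        (Q n k m w1 w2 h σ).sEnd a = Xval (k := k) h i a' σ ∧
          (Q n k m w1 w2 h σ).fEnd a = (Q n k m w1 w2 h σ).fEnd a')) := by ring
    _ ≤ (m - n) * cnt (fun σ : Fin n → (Fin m ≃ Fin m) =>
          (Q n k m w1 w2 h σ).fEnd a = (Q n k m w1 w2 h σ).fEnd a') :=
        Nat.mul_le_mul_left _ hp1
    _ ≤ _ := hp0

lemma tuple_bound (q : ((Fin n × Fin n) × (Fin n × Fin n)) × Bool × Bool)
    (haa : q.1.1.1 ≠ q.1.1.2) (hba : q.1.2.1 ≠ q.1.1.1) (hb'a' : q.1.2.2 ≠ q.1.1.2)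
    (hnd : q.1.2.1 ≠ q.1.1.2 ∨ q.1.2.2 ≠ q.1.1.1) :
    (m - n) ^ 3 * cnt (tuplePred (k := k) h q) ≤
      (Finset.univ : Finset (Fin n → (Fin m ≃ Fin m))).card := by
  obtain ⟨⟨⟨a, a'⟩, ⟨b, b'⟩⟩, ⟨i, j⟩⟩ := q
  simp only at haa hba hb'a' hnd ⊢
  have heq : cnt (tuplePred (k := k) h (((a, a'), (b, b')), (i, j)))
      = cnt (fun σ : Fin n → (Fin m ≃ Fin m) =>
        (Q n k m w1 w2 h σ).fEnd a = (Q n k m w1 w2 h σ).fEnd a' ∧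
          (Q n k m w1 w2 h σ).sEnd a = Xval (k := k) h i b σ ∧
          (Q n k m w1 w2 h σ).sEnd a' = Xval (k := k) h j b' σ) := rfl
  rw [heq]
  have hp0 := c0_bound' (k := k) h a a' haa
  rcases hnd with hba' | hb'a
  · -- peel at a' first, then at a
    have hp1 := peel_s' (k := k) h a' b' j hb'a'
      (fun σ => (Q n k m w1 w2 h σ).fEnd a = (Q n k m w1 w2 h σ).fEnd a' ∧
        (Q n k m w1 w2 h σ).sEnd a = Xval (k := k) h i b σ)
      (by
        intro σ u v hu hv
        simp only [fEnd_inv_any h σ a' u v hu hv a, fEnd_inv_any h σ a' u v hu hv a',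
          (obs_inv h σ a' u v hu hv a haa).1, Xval_inv h σ a' u v hu hv i b hba'])
    have hp2 := peel_s' (k := k) h a b i hba
      (fun σ => (Q n k m w1 w2 h σ).fEnd a = (Q n k m w1 w2 h σ).fEnd a')
      (by
        intro σ u v hu hv
        simp only [fEnd_inv_any h σ a u v hu hv a, fEnd_inv_any h σ a u v hu hv a'])
    calc (m - n) ^ 3 * cnt (fun σ : Fin n → (Fin m ≃ Fin m) =>
          (Q n k m w1 w2 h σ).fEnd a = (Q n k m w1 w2 h σ).fEnd a' ∧
            (Q n k m w1 w2 h σ).sEnd a = Xval (k := k) h i b σ ∧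
            (Q n k m w1 w2 h σ).sEnd a' = Xval (k := k) h j b' σ)
        ≤ (m - n) ^ 3 * cnt (fun σ : Fin n → (Fin m ≃ Fin m) =>
            (Q n k m w1 w2 h σ).sEnd a' = Xval (k := k) h j b' σ ∧
              ((Q n k m w1 w2 h σ).fEnd a = (Q n k m w1 w2 h σ).fEnd a' ∧
                (Q n k m w1 w2 h σ).sEnd a = Xval (k := k) h i b σ)) :=
          Nat.mul_le_mul_left _ (cnt_mono (fun σ hσ => ⟨hσ.2.2, hσ.1, hσ.2.1⟩))
      _ = (m - n) ^ 2 * ((m - n) * cnt (fun σ : Fin n → (Fin m ≃ Fin m) =>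
            (Q n k m w1 w2 h σ).sEnd a' = Xval (k := k) h j b' σ ∧
              ((Q n k m w1 w2 h σ).fEnd a = (Q n k m w1 w2 h σ).fEnd a' ∧
                (Q n k m w1 w2 h σ).sEnd a = Xval (k := k) h i b σ))) := by ring
      _ ≤ (m - n) ^ 2 * cnt (fun σ : Fin n → (Fin m ≃ Fin m) =>
            (Q n k m w1 w2 h σ).fEnd a = (Q n k m w1 w2 h σ).fEnd a' ∧
              (Q n k m w1 w2 h σ).sEnd a = Xval (k := k) h i b σ) :=
          Nat.mul_le_mul_left _ hp1
      _ ≤ (m - n) ^ 2 * cnt (fun σ : Fin n → (Fin m ≃ Fin m) =>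
            (Q n k m w1 w2 h σ).sEnd a = Xval (k := k) h i b σ ∧
              (Q n k m w1 w2 h σ).fEnd a = (Q n k m w1 w2 h σ).fEnd a') :=
          Nat.mul_le_mul_left _ (cnt_mono (fun σ hσ => ⟨hσ.2, hσ.1⟩))
      _ = (m - n) * ((m - n) * cnt (fun σ : Fin n → (Fin m ≃ Fin m) =>
            (Q n k m w1 w2 h σ).sEnd a = Xval (k := k) h i b σ ∧
              (Q n k m w1 w2 h σ).fEnd a = (Q n k m w1 w2 h σ).fEnd a')) := by ring
      _ ≤ (m - n) * cnt (fun σ : Fin n → (Fin m ≃ Fin m) =>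
            (Q n k m w1 w2 h σ).fEnd a = (Q n k m w1 w2 h σ).fEnd a') :=
          Nat.mul_le_mul_left _ hp2
      _ ≤ _ := hp0
  · -- peel at a first, then at a'
    have hp1 := peel_s' (k := k) h a b i hba
      (fun σ => (Q n k m w1 w2 h σ).fEnd a = (Q n k m w1 w2 h σ).fEnd a' ∧
        (Q n k m w1 w2 h σ).sEnd a' = Xval (k := k) h j b' σ)
      (by
        intro σ u v hu hv
        simp only [fEnd_inv_any h σ a u v hu hv a, fEnd_inv_any h σ a u v hu hv a',
          (obs_inv h σ a u v hu hv a' haa.symm).1, Xval_inv h σ a u v hu hv j b' hb'a])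
    have hp2 := peel_s' (k := k) h a' b' j hb'a'
      (fun σ => (Q n k m w1 w2 h σ).fEnd a = (Q n k m w1 w2 h σ).fEnd a')
      (by
        intro σ u v hu hv
        simp only [fEnd_inv_any h σ a' u v hu hv a, fEnd_inv_any h σ a' u v hu hv a'])
    calc (m - n) ^ 3 * cnt (fun σ : Fin n → (Fin m ≃ Fin m) =>
          (Q n k m w1 w2 h σ).fEnd a = (Q n k m w1 w2 h σ).fEnd a' ∧
            (Q n k m w1 w2 h σ).sEnd a = Xval (k := k) h i b σ ∧
            (Q n k m w1 w2 h σ).sEnd a' = Xval (k := k) h j b' σ)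
        ≤ (m - n) ^ 3 * cnt (fun σ : Fin n → (Fin m ≃ Fin m) =>
            (Q n k m w1 w2 h σ).sEnd a = Xval (k := k) h i b σ ∧
              ((Q n k m w1 w2 h σ).fEnd a = (Q n k m w1 w2 h σ).fEnd a' ∧
                (Q n k m w1 w2 h σ).sEnd a' = Xval (k := k) h j b' σ)) :=
          Nat.mul_le_mul_left _ (cnt_mono (fun σ hσ => ⟨hσ.2.1, hσ.1, hσ.2.2⟩))
      _ = (m - n) ^ 2 * ((m - n) * cnt (fun σ : Fin n → (Fin m ≃ Fin m) =>
            (Q n k m w1 w2 h σ).sEnd a = Xval (k := k) h i b σ ∧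
              ((Q n k m w1 w2 h σ).fEnd a = (Q n k m w1 w2 h σ).fEnd a' ∧
                (Q n k m w1 w2 h σ).sEnd a' = Xval (k := k) h j b' σ))) := by ring
      _ ≤ (m - n) ^ 2 * cnt (fun σ : Fin n → (Fin m ≃ Fin m) =>
            (Q n k m w1 w2 h σ).fEnd a = (Q n k m w1 w2 h σ).fEnd a' ∧
              (Q n k m w1 w2 h σ).sEnd a' = Xval (k := k) h j b' σ) :=
          Nat.mul_le_mul_left _ hp1
      _ ≤ (m - n) ^ 2 * cnt (fun σ : Fin n → (Fin m ≃ Fin m) =>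
            (Q n k m w1 w2 h σ).sEnd a' = Xval (k := k) h j b' σ ∧
              (Q n k m w1 w2 h σ).fEnd a = (Q n k m w1 w2 h σ).fEnd a') :=
          Nat.mul_le_mul_left _ (cnt_mono (fun σ hσ => ⟨hσ.2, hσ.1⟩))
      _ = (m - n) * ((m - n) * cnt (fun σ : Fin n → (Fin m ≃ Fin m) =>
            (Q n k m w1 w2 h σ).sEnd a' = Xval (k := k) h j b' σ ∧
              (Q n k m w1 w2 h σ).fEnd a = (Q n k m w1 w2 h σ).fEnd a')) := by ring
      _ ≤ (m - n) * cnt (fun σ : Fin n → (Fin m ≃ Fin m) =>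
            (Q n k m w1 w2 h σ).fEnd a = (Q n k m w1 w2 h σ).fEnd a') :=
          Nat.mul_le_mul_left _ hp2
      _ ≤ _ := hp0

lemma Xval_true (b : Fin n) (σ : Fin n → (Fin m ≃ Fin m)) :
    Xval (k := k) h true b σ = (Q n k m w1 w2 h σ).sEnd b := rfl

lemma Xval_false (b : Fin n) (σ : Fin n → (Fin m ≃ Fin m)) :
    Xval (k := k) h false b σ = (Q n k m w1 w2 h σ).s1 b := rfl

/-- a profile violating goodness satisfies one of the structured bad events. -/
lemma good_decomp (σ : Fin n → (Fin m ≃ Fin m)) (hbad : ¬ (Q n k m w1 w2 h σ).Good) :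
    (∃ q : (Fin n × Fin n) × Bool, q.1.1 ≠ q.1.2 ∧ pairPred (k := k) h q σ) ∨
    (∃ q : ((Fin n × Fin n) × (Fin n × Fin n)) × Bool × Bool,
      (q.1.1.1 ≠ q.1.1.2 ∧ q.1.2.1 ≠ q.1.1.1 ∧ q.1.2.2 ≠ q.1.1.2 ∧
        (q.1.2.1 ≠ q.1.1.2 ∨ q.1.2.2 ≠ q.1.1.1)) ∧ tuplePred (k := k) h q σ) := by
  rw [TwoWPM.Good] at hbad
  push_neg at hbad
  obtain ⟨a, a', haa, hf, hda, hda'⟩ := hbad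
  obtain ⟨b, hb, hdb⟩ := hda
  obtain ⟨b', hb', hdb'⟩ := hda'
  have hXa : ∃ i : Bool, (Q n k m w1 w2 h σ).sEnd a = Xval (k := k) h i b σ := by
    rcases hdb with h1 | h1
    · exact ⟨true, h1⟩
    · exact ⟨false, h1⟩
  have hXa' : ∃ j : Bool, (Q n k m w1 w2 h σ).sEnd a' = Xval (k := k) h j b' σ := by
    rcases hdb' with h1 | h1
    · exact ⟨true, h1⟩
    · exact ⟨false, h1⟩
  obtain ⟨i, hi⟩ := hXa
  obtain ⟨j, hj⟩ := hXa'
  by_cases hc : b = a' ∧ b' = a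
  · left
    refine ⟨((a, a'), i), haa, ?_, hf⟩
    rw [← hc.1]
    exact hi
  · right
    have hnd : b ≠ a' ∨ b' ≠ a := by tauto
    exact ⟨(((a, a'), (b, b')), (i, j)), ⟨haa, hb, hb', hnd⟩, hf, hi, hj⟩

/-- master counting estimate for the bad event. -/
lemma master :
    (m - n) ^ 3 * cnt (fun σ : Fin n → (Fin m ≃ Fin m) => ¬ (Q n k m w1 w2 h σ).Good) ≤
      (2 * n ^ 2 * (m - n) + 4 * n ^ 4) *
        (Finset.univ : Finset (Fin n → (Fin m ≃ Fin m))).card := by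
  classical
  set T := (Finset.univ : Finset (Fin n → (Fin m ≃ Fin m))).card with hT
  set S2 : Finset ((Fin n × Fin n) × Bool) :=
    Finset.univ.filter (fun q => q.1.1 ≠ q.1.2) with hS2
  set S6 : Finset (((Fin n × Fin n) × (Fin n × Fin n)) × Bool × Bool) :=
    Finset.univ.filter (fun q => q.1.1.1 ≠ q.1.1.2 ∧ q.1.2.1 ≠ q.1.1.1 ∧
      q.1.2.2 ≠ q.1.1.2 ∧ (q.1.2.1 ≠ q.1.1.2 ∨ q.1.2.2 ≠ q.1.1.1)) with hS6
  have hsub : (Finset.univ.filter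
        (fun σ : Fin n → (Fin m ≃ Fin m) => ¬ (Q n k m w1 w2 h σ).Good)) ⊆
      (S2.biUnion (fun q => Finset.univ.filter (pairPred (k := k) h q))) ∪
      (S6.biUnion (fun q => Finset.univ.filter (tuplePred (k := k) h q))) := by
    intro σ hσ
    have hbad : ¬ (Q n k m w1 w2 h σ).Good := (Finset.mem_filter.mp hσ).2
    simp only [Finset.mem_union, Finset.mem_biUnion, Finset.mem_filter, Finset.mem_univ,
      true_and, hS2, hS6]
    rcases good_decomp h σ hbad with ⟨q, hq1, hq2⟩ | ⟨q, hq1, hq2⟩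
    · exact Or.inl ⟨q, hq1, hq2⟩
    · exact Or.inr ⟨q, hq1, hq2⟩
  have hcount : cnt (fun σ : Fin n → (Fin m ≃ Fin m) => ¬ (Q n k m w1 w2 h σ).Good) ≤
      (∑ q ∈ S2, cnt (pairPred (k := k) h q)) +
        (∑ q ∈ S6, cnt (tuplePred (k := k) h q)) := by
    rw [← cnt_eq]
    calc (Finset.univ.filter
          (fun σ : Fin n → (Fin m ≃ Fin m) => ¬ (Q n k m w1 w2 h σ).Good)).card
        ≤ ((S2.biUnion (fun q => Finset.univ.filter (pairPred (k := k) h q))) ∪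
            (S6.biUnion (fun q => Finset.univ.filter (tuplePred (k := k) h q)))).card :=
          Finset.card_le_card hsub
      _ ≤ (S2.biUnion (fun q => Finset.univ.filter (pairPred (k := k) h q))).card +
            (S6.biUnion (fun q => Finset.univ.filter (tuplePred (k := k) h q))).card :=
          Finset.card_union_le _ _
      _ ≤ (∑ q ∈ S2, (Finset.univ.filter (pairPred (k := k) h q)).card) +
            (∑ q ∈ S6, (Finset.univ.filter (tuplePred (k := k) h q)).card) :=
          Nat.add_le_add Finset.card_biUnion_le Finset.card_biUnion_le
      _ = (∑ q ∈ S2, cnt (pairPred (k := k) h q)) +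
            (∑ q ∈ S6, cnt (tuplePred (k := k) h q)) := by
          congr 1 <;> exact Finset.sum_congr rfl (fun q _ => cnt_eq)
  have hS2card : S2.card ≤ 2 * n ^ 2 := by
    calc S2.card ≤ (Finset.univ : Finset ((Fin n × Fin n) × Bool)).card :=
          Finset.card_le_card (Finset.filter_subset _ _)
      _ = 2 * n ^ 2 := by
          rw [Finset.card_univ]
          simp [Fintype.card_prod]
          ring
  have hS6card : S6.card ≤ 4 * n ^ 4 := by
    calc S6.card ≤ (Finset.univ :
            Finset (((Fin n × Fin n) × (Fin n × Fin n)) × Bool × Bool)).card :=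
          Finset.card_le_card (Finset.filter_subset _ _)
      _ = 4 * n ^ 4 := by
          rw [Finset.card_univ]
          simp [Fintype.card_prod]
          ring
  calc (m - n) ^ 3 * cnt (fun σ : Fin n → (Fin m ≃ Fin m) => ¬ (Q n k m w1 w2 h σ).Good)
      ≤ (m - n) ^ 3 * ((∑ q ∈ S2, cnt (pairPred (k := k) h q)) +
          (∑ q ∈ S6, cnt (tuplePred (k := k) h q))) := Nat.mul_le_mul_left _ hcount
    _ = (∑ q ∈ S2, (m - n) ^ 3 * cnt (pairPred (k := k) h q)) +
          (∑ q ∈ S6, (m - n) ^ 3 * cnt (tuplePred (k := k) h q)) := by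
        rw [mul_add, Finset.mul_sum, Finset.mul_sum]
    _ ≤ (∑ _q ∈ S2, (m - n) * T) + (∑ _q ∈ S6, T) := by
        apply Nat.add_le_add
        · apply Finset.sum_le_sum
          intro q hq
          have hq1 : q.1.1 ≠ q.1.2 := (Finset.mem_filter.mp hq).2
          calc (m - n) ^ 3 * cnt (pairPred (k := k) h q)
              = (m - n) * ((m - n) ^ 2 * cnt (pairPred (k := k) h q)) := by ring
            _ ≤ (m - n) * T := Nat.mul_le_mul_left _ (pair_bound h q hq1)
        · apply Finset.sum_le_sum
          intro q hq
          obtain ⟨h1, h2, h3, h4⟩ := (Finset.mem_filter.mp hq).2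
          exact tuple_bound h q h1 h2 h3 h4
    _ = S2.card * ((m - n) * T) + S6.card * T := by
        rw [Finset.sum_const, Finset.sum_const, smul_eq_mul, smul_eq_mul]
    _ ≤ (2 * n ^ 2) * ((m - n) * T) + (4 * n ^ 4) * T := by
        apply Nat.add_le_add
        · exact Nat.mul_le_mul_right _ hS2card
        · exact Nat.mul_le_mul_right _ hS6card
    _ = (2 * n ^ 2 * (m - n) + 4 * n ^ 4) * T := by ring

end PMaux

lemma real_estimate (ε nn y D : ℝ) (hε : 0 < ε) (hnn0 : 0 ≤ nn) (hy0 : 0 ≤ y)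
    (hyn : nn ≤ y) (hy3 : y ^ 3 = nn ^ 4) (hDr0 : 0 ≤ D) (hyD : y ≤ D)
    (hyeD : y ≤ (ε / 20) * D) :
    2 * nn ^ 2 * D + 4 * nn ^ 4 ≤ ε * D ^ 3 := by
  have h1 : nn ^ 2 ≤ y ^ 2 := by nlinarith [mul_self_le_mul_self hnn0 hyn]
  have h2 : y ^ 2 ≤ (ε / 20) * D * y := by
    nlinarith [mul_le_mul_of_nonneg_right hyeD hy0]
  have h12 : nn ^ 2 ≤ (ε / 20) * D * y := le_trans h1 h2
  have e1 : 2 * nn ^ 2 * D ≤ 2 * ((ε / 20) * D * y) * D := by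
    nlinarith [mul_le_mul_of_nonneg_right h12 hDr0]
  have hysq : y ^ 2 ≤ D ^ 2 := by nlinarith [mul_self_le_mul_self hy0 hyD]
  have e2 : 2 * ((ε / 20) * D * y) * D ≤ (ε / 10) * D ^ 3 := by
    nlinarith [mul_nonneg (mul_nonneg (le_of_lt hε) (mul_nonneg hDr0 hDr0))
      (sub_nonneg.mpr hyD)]
  have e3 : 4 * nn ^ 4 ≤ 4 * ((ε / 20) * D * y) * y := by
    nlinarith [mul_le_mul_of_nonneg_right h2 hy0, hy3]
  have e4 : 4 * ((ε / 20) * D * y) * y ≤ (ε / 5) * D ^ 3 := by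
    nlinarith [mul_nonneg (mul_nonneg (le_of_lt hε) hDr0) (sub_nonneg.mpr hysq)]
  linarith [e1, e2, e3, e4, mul_nonneg (le_of_lt hε) (pow_nonneg hDr0 3)]

set_option maxHeartbeats 1000000 in
/-- **Theorem 5, upper bound.** Fix `δ ∈ (0,1)` and weights
`w1 ≥ 2 w2 > 0`. If `m(n) > n` and `n^{4/3}/m(n) → 0`, then the probability that a
random instance of the complete and strict 2-weighted popular matching problem with
`n` applicants (`|A1| = δn`, `|A2| = (1-δ)n`) and `m(n)` items has a 2-weighted
popular matching tends to `1` (along those `n` with `δn ∈ ℕ`). -/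
theorem random_two_weighted_popular_upper_bound
    (δ : ℝ) (hδ0 : 0 < δ) (hδ1 : δ < 1)
    (w1 w2 : ℝ) (hw2 : 0 < w2) (hw12 : 2 * w2 ≤ w1)
    (m : ℕ → ℕ) (hm : ∀ n : ℕ, n < m n)
    (hlim : Filter.Tendsto (fun n : ℕ => (n : ℝ) ^ ((4 : ℝ) / 3) / (m n : ℝ))
      Filter.atTop (nhds 0)) :
    ∀ ε : ℝ, 0 < ε → ∃ N : ℕ, ∀ n : ℕ, N ≤ n → ∀ k : ℕ, (k : ℝ) = δ * n →
      1 - ε ≤ pmProb n k (m n) w1 w2 := by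
  intro ε hε
  have hw12' : w2 < w1 := by linarith
  have hδ' : (0:ℝ) < min (1/2) (ε/40) := by positivity
  obtain ⟨N0, hN0⟩ := (Metric.tendsto_atTop.mp hlim) (min (1/2) (ε/40)) hδ'
  refine ⟨max N0 1, fun n hn k _hk => ?_⟩
  have hn0 : N0 ≤ n := le_trans (le_max_left _ _) hn
  have hn1 : 1 ≤ n := le_trans (le_max_right _ _) hn
  have h3 : n < m n ∧ w2 < w1 ∧ 0 < w2 := ⟨hm n, hw12', hw2⟩
  -- real quantities
  set nn : ℝ := (n : ℝ) with hnn
  set M : ℝ := (m n : ℝ) with hMdef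
  have hnn1 : (1:ℝ) ≤ nn := by rw [hnn]; exact_mod_cast hn1
  have hMn : nn < M := by rw [hnn, hMdef]; exact_mod_cast hm n
  have hM0 : (0:ℝ) < M := lt_of_le_of_lt (by linarith) hMn
  set y : ℝ := nn ^ ((4:ℝ)/3) with hy
  have hyn : nn ≤ y := by
    calc nn = nn ^ (1:ℝ) := (Real.rpow_one nn).symm
      _ ≤ y := Real.rpow_le_rpow_of_exponent_le hnn1 (by norm_num)
  have hy0 : (0:ℝ) ≤ y := le_trans (by linarith) hyn
  have hx := hN0 n hn0
  rw [Real.dist_eq, sub_zero] at hx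
  have hxval : y / M < min (1/2) (ε/40) := by
    have habs : |y / M| = y / M := abs_of_nonneg (div_nonneg hy0 (le_of_lt hM0))
    rw [← habs]
    exact hx
  have hx1 : y < M / 2 := by
    have h12 : y / M < 1/2 := lt_of_lt_of_le hxval (min_le_left _ _)
    have := (div_lt_iff₀ hM0).mp h12
    linarith
  have hx2 : y ≤ (ε/40) * M := by
    have h12 : y / M < ε/40 := lt_of_lt_of_le hxval (min_le_right _ _)
    have := (div_lt_iff₀ hM0).mp h12
    linarith
  -- D = m - n
  set Dn : ℕ := m n - n with hDn
  have hD : (Dn : ℝ) = M - nn := by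
    rw [hDn, hMdef, hnn, Nat.cast_sub (le_of_lt (hm n))]
  have hDM : M / 2 ≤ (Dn : ℝ) := by
    rw [hD]
    linarith
  have hD0 : (0:ℝ) < (Dn : ℝ) := lt_of_lt_of_le (by linarith) hDM
  have hDr0 : (0:ℝ) ≤ (Dn : ℝ) := le_of_lt hD0
  -- the master bound
  have hmaster := PMaux.master (k := k) (h := h3)
  -- split good/bad
  have hsplit := Finset.card_filter_add_card_filter_not
    (s := (Finset.univ : Finset (Fin n → (Fin (m n) ≃ Fin (m n)))))
    (p := fun σ => (PMaux.Q n k (m n) w1 w2 h3 σ).Good)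
  rw [PMaux.cnt_eq, PMaux.cnt_eq] at hsplit
  have hmono : PMaux.cnt (fun σ => (PMaux.Q n k (m n) w1 w2 h3 σ).Good)
      ≤ PMaux.cnt (fun σ => (instOf n k (m n) w1 w2 h3 σ).HasPopular) :=
    PMaux.cnt_mono (fun σ hσ =>
      (PMaux.Q n k (m n) w1 w2 h3 σ).hasPopular_of_good hw12 hσ)
  -- rewrite the probability
  unfold pmProb
  rw [dif_pos h3]
  rw [PMaux.cnt_eq]
  set T : ℕ := (Finset.univ : Finset (Fin n → (Fin (m n) ≃ Fin (m n)))).card with hTdef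
  have hTcard : Fintype.card (Fin n → (Fin (m n) ≃ Fin (m n))) = T := by
    rw [hTdef, Finset.card_univ]
  rw [hTcard]
  have hT0 : 0 < T := by
    rw [hTdef]
    exact Finset.card_pos.mpr ⟨fun _ => Equiv.refl _, Finset.mem_univ _⟩
  have hT0R : (0:ℝ) < (T : ℝ) := by exact_mod_cast hT0
  set B : ℕ := PMaux.cnt (fun σ => ¬ (PMaux.Q n k (m n) w1 w2 h3 σ).Good) with hB
  set Pp : ℕ := PMaux.cnt (fun σ => (instOf n k (m n) w1 w2 h3 σ).HasPopular) with hPp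
  have hnum : (T : ℝ) - (B : ℝ) ≤ (Pp : ℝ) := by
    have h1 : PMaux.cnt (fun σ => (PMaux.Q n k (m n) w1 w2 h3 σ).Good) + B = T := hsplit
    have h2 : PMaux.cnt (fun σ => (PMaux.Q n k (m n) w1 w2 h3 σ).Good) ≤ Pp := hmono
    have h3' : T - B ≤ Pp := by omega
    have h4 : B ≤ T := by omega
    have := (Nat.cast_le (α := ℝ)).mpr h3'
    rw [Nat.cast_sub h4] at this
    exact this
  -- bound B by ε T
  have hmaster' : (Dn:ℝ)^3 * (B:ℝ) ≤ (2 * nn^2 * (Dn:ℝ) + 4 * nn^4) * (T:ℝ) := by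
    have := (Nat.cast_le (α := ℝ)).mpr hmaster
    push_cast at this
    calc (Dn:ℝ)^3 * (B:ℝ) = ((m n : ℝ) - (n:ℝ))^3 * (B:ℝ) := by
          rw [hD, hMdef, hnn]
      _ ≤ (2 * (n:ℝ)^2 * ((m n : ℝ) - (n:ℝ)) + 4 * (n:ℝ)^4) * (T:ℝ) := by
          have hcast : ((m n : ℕ) - n : ℕ) = ((m n : ℝ) - (n : ℝ)) := by
            rw [Nat.cast_sub (le_of_lt (hm n))]
          rw [← hcast]
          exact this
      _ = (2 * nn^2 * (Dn:ℝ) + 4 * nn^4) * (T:ℝ) := by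
          rw [hD, hMdef, hnn]
  have hy3 : y^3 = nn^4 := by
    rw [hy]
    have hnn0 : (0:ℝ) ≤ nn := by linarith
    rw [← Real.rpow_natCast (nn ^ ((4:ℝ)/3)) 3, ← Real.rpow_mul hnn0]
    norm_num
  clear_value nn M y
  have hyD : y ≤ (Dn:ℝ) := by linarith
  have hyeD : y ≤ (ε/20) * (Dn:ℝ) := by
    have hM2D : M ≤ 2 * (Dn:ℝ) := by linarith
    have h40 : (0:ℝ) ≤ ε/40 := by linarith
    calc y ≤ (ε/40) * M := hx2
      _ ≤ (ε/40) * (2 * (Dn:ℝ)) := by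
          apply mul_le_mul_of_nonneg_left hM2D h40
      _ = (ε/20) * (Dn:ℝ) := by ring
  have hC : 2 * nn^2 * (Dn:ℝ) + 4 * nn^4 ≤ ε * (Dn:ℝ)^3 :=
    real_estimate ε nn y (Dn:ℝ) hε (by linarith) hy0 hyn hy3 hDr0 hyD hyeD
  have hBT : (B:ℝ) ≤ ε * (T:ℝ) := by
    have hchain : (Dn:ℝ)^3 * (B:ℝ) ≤ (Dn:ℝ)^3 * (ε * (T:ℝ)) := by
      calc (Dn:ℝ)^3 * (B:ℝ) ≤ (2 * nn^2 * (Dn:ℝ) + 4 * nn^4) * (T:ℝ) := hmaster'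
        _ ≤ (ε * (Dn:ℝ)^3) * (T:ℝ) := by
            apply mul_le_mul_of_nonneg_right hC (le_of_lt hT0R)
        _ = (Dn:ℝ)^3 * (ε * (T:ℝ)) := by ring
    exact le_of_mul_le_mul_left hchain (pow_pos hD0 3)
  rw [le_div_iff₀ hT0R]
  linarith
end
end

section
/- In the random fs-relation graph model, for every tuple v ∈ T one has 1/m³ ≤ Pr[Z_v = 1] ≤ 1/(m·(m - n1)²). In particular, if m - n ≥ m/c for a constant c > 1, then Pr[Z_v = 1] ≤ c²/m³. -/
open scoped Classical
open Finset

noncomputable section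

/-- The sample space of the random fs-relation graph model with `n1` applicants of the
first category, `n2` applicants of the second category, and `m` items: an outcome
records the `f1`-, `s1`-, `f2`- and `s2`-items assigned to the applicants. -/
abbrev FSSpace (n1 n2 m : ℕ) : Type :=
  (Fin n1 → Fin m) × (Fin n1 → Fin m) × (Fin n2 → Fin m) × (Fin n2 → Fin m)

/-- the `f1`-items of an outcome. -/
def fOne {n1 n2 m : ℕ} (ω : FSSpace n1 n2 m) : Fin n1 → Fin m := ω.1
/-- the `s1`-items of an outcome. -/
def sOne {n1 n2 m : ℕ} (ω : FSSpace n1 n2 m) : Fin n1 → Fin m := ω.2.1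
/-- the `f2`-items of an outcome. -/
def fTwo {n1 n2 m : ℕ} (ω : FSSpace n1 n2 m) : Fin n2 → Fin m := ω.2.2.1
/-- the `s2`-items of an outcome. -/
def sTwo {n1 n2 m : ℕ} (ω : FSSpace n1 n2 m) : Fin n2 → Fin m := ω.2.2.2

/-- the set `F1` of an outcome. -/
def FOne {n1 n2 m : ℕ} (ω : FSSpace n1 n2 m) : Finset (Fin m) := Finset.univ.image (fOne ω)
/-- the set `F2` of an outcome. -/
def FTwo {n1 n2 m : ℕ} (ω : FSSpace n1 n2 m) : Finset (Fin m) := Finset.univ.image (fTwo ω)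

/-- an outcome is valid if each `s1`- and `f2`-item avoids `F1` and each `s2`-item
avoids `F1 ∪ F2`, as in the sequential random process. -/
def FSValid {n1 n2 m : ℕ} (ω : FSSpace n1 n2 m) : Prop :=
  (∀ x, sOne ω x ∉ FOne ω) ∧ (∀ y, fTwo ω y ∉ FOne ω) ∧
    (∀ y, sTwo ω y ∉ FOne ω ∪ FTwo ω)

/-- the probability of a single outcome under the sequential random process:
the `f1`-items are independent and uniform on the `m` items, then the `s1`- and
`f2`-items are independent and uniform on the items outside `F1`, then the
`s2`-items are independent and uniform on the items outside `F1 ∪ F2`. -/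
def fsWeight (n1 n2 m : ℕ) (ω : FSSpace n1 n2 m) : ℝ :=
  if FSValid ω then
    (1 / (m : ℝ)) ^ n1 * (1 / ((m : ℝ) - (FOne ω).card)) ^ (n1 + n2) *
      (1 / ((m : ℝ) - ((FOne ω) ∪ (FTwo ω)).card)) ^ n2
  else 0

/-- the probability of an event in the random fs-relation graph model. -/
def fsProb (n1 n2 m : ℕ) (S : FSSpace n1 n2 m → Prop) : ℝ :=
  ∑ ω : FSSpace n1 n2 m, if S ω then fsWeight n1 n2 m ω else 0

/-- the expectation of a random variable in the random fs-relation graph model. -/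
def fsExp (n1 n2 m : ℕ) (f : FSSpace n1 n2 m → ℝ) : ℝ :=
  ∑ ω : FSSpace n1 n2 m, fsWeight n1 n2 m ω * f ω

/-- the index set `T` of tuples `(x1, x2, y1, y2)` with `x1 < x2` and `y1 ≠ y2`. -/
def Ttup (n1 n2 : ℕ) : Finset (Fin n1 × Fin n1 × Fin n2 × Fin n2) :=
  Finset.univ.filter fun v => v.1 < v.2.1 ∧ v.2.2.1 ≠ v.2.2.2

/-- the event `{Z_v = 1}`, i.e. `f1(x1) = f1(x2)`, `f2(y1) = s1(x1)`, `f2(y2) = s1(x2)`. -/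
def ZEvent {n1 n2 m : ℕ} (v : Fin n1 × Fin n1 × Fin n2 × Fin n2)
    (ω : FSSpace n1 n2 m) : Prop :=
  fOne ω v.1 = fOne ω v.2.1 ∧ fTwo ω v.2.2.1 = sOne ω v.1 ∧
    fTwo ω v.2.2.2 = sOne ω v.2.1

/-- the indicator random variable `Z_v`. -/
def Zind {n1 n2 m : ℕ} (v : Fin n1 × Fin n1 × Fin n2 × Fin n2)
    (ω : FSSpace n1 n2 m) : ℝ :=
  if ZEvent v ω then 1 else 0

/-- the random variable `Z = ∑_{v ∈ T} Z_v`. -/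
def Ztotal (n1 n2 m : ℕ) (ω : FSSpace n1 n2 m) : ℝ :=
  ∑ v ∈ Ttup n1 n2, Zind v ω

/-- `T_h(v)`: the tuples `w ∈ T \ {v}` that are `h`-common to `v`,
i.e. `|{x1, x2} ∩ {x1', x2'}| = h`. -/
def Tcommon (n1 n2 : ℕ) (h : ℕ) (v : Fin n1 × Fin n1 × Fin n2 × Fin n2) :
    Finset (Fin n1 × Fin n1 × Fin n2 × Fin n2) :=
  (Ttup n1 n2).filter fun w =>
    w ≠ v ∧ (({v.1, v.2.1} : Finset (Fin n1)) ∩ ({w.1, w.2.1} : Finset (Fin n1))).card = h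

/-- the edge of applicant `a` (first or second category) joins items `p` and `q`
in the fs-relation graph of the outcome `ω`. -/
def fsJoins {n1 n2 m : ℕ} (ω : FSSpace n1 n2 m) (a : Fin n1 ⊕ Fin n2)
    (p q : Fin m) : Prop :=
  Sum.elim (fun x => (fOne ω x = p ∧ sOne ω x = q) ∨ (fOne ω x = q ∧ sOne ω x = p))
    (fun y => (fTwo ω y = p ∧ sTwo ω y = q) ∨ (fTwo ω y = q ∧ sTwo ω y = p)) a

/-- the fs-relation graph of the outcome contains a cycle: a closed walk on `ℓ ≥ 2`
distinct vertices using `ℓ` distinct edges. -/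
def fsHasCycle {n1 n2 m : ℕ} (ω : FSSpace n1 n2 m) : Prop :=
  ∃ (ℓ : ℕ) (u : ℕ → Fin m) (c : ℕ → Fin n1 ⊕ Fin n2),
    2 ≤ ℓ ∧
    (∀ i j, i < ℓ → j < ℓ → u i = u j → i = j) ∧
    (∀ i j, i < ℓ → j < ℓ → c i = c j → i = j) ∧
    (∀ i, i < ℓ → fsJoins ω (c i) (u i) (u ((i + 1) % ℓ)))

/-- the fs-relation graph of the outcome contains a simple path with `ℓ ≥ 4`
distinct edges and `ℓ + 1` distinct vertices. -/
def fsHasLongPath {n1 n2 m : ℕ} (ω : FSSpace n1 n2 m) : Prop :=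
  ∃ (ℓ : ℕ) (v : ℕ → Fin m) (e : ℕ → Fin n1 ⊕ Fin n2),
    4 ≤ ℓ ∧
    (∀ i j, i ≤ ℓ → j ≤ ℓ → v i = v j → i = j) ∧
    (∀ i j, i < ℓ → j < ℓ → e i = e j → i = j) ∧
    (∀ i, i < ℓ → fsJoins ω (e i) (v i) (v (i + 1)))

lemma filter_pi_eq {n m : ℕ} (T : Fin n → Finset (Fin m)) :
    (Finset.univ.filter fun g : Fin n → Fin m => ∀ i, g i ∈ T i) = Fintype.piFinset T := by
  ext g; simp [Fintype.mem_piFinset]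

lemma sum_ite_const {α : Type*} [Fintype α] (P : α → Prop) [DecidablePred P] (r : ℝ) :
    ∑ x : α, (if P x then r else 0) = (Finset.univ.filter P).card * r := by
  rw [← Finset.sum_filter, Finset.sum_const, nsmul_eq_mul]

lemma prod_two_ones {n : ℕ} (x1 x2 : Fin n) (h : x1 ≠ x2) (k : ℕ) :
    (∏ i : Fin n, (if i = x1 then 1 else if i = x2 then 1 else k)) = k ^ (n - 2) := by
  have h1 : (Finset.univ \ {x1, x2} : Finset (Fin n)) ⊆ Finset.univ := Finset.sdiff_subset
  have h3 : (∏ i : Fin n, (if i = x1 then 1 else if i = x2 then 1 else k))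
      = ∏ i ∈ (Finset.univ \ {x1, x2}), (if i = x1 then 1 else if i = x2 then 1 else k) := by
    refine (Finset.prod_subset h1 ?_).symm
    intro i _ hi
    by_cases hx : i = x1
    · simp [hx]
    · have hx2 : i = x2 := by
        simp only [Finset.mem_sdiff, Finset.mem_univ, true_and, not_not,
          Finset.mem_insert, Finset.mem_singleton] at hi
        tauto
      simp [hx, hx2]
  have h2 : ∏ i ∈ (Finset.univ \ {x1, x2}), (if i = x1 then 1 else if i = x2 then 1 else k)
      = ∏ _i ∈ (Finset.univ \ {x1, x2}), k := by
    apply Finset.prod_congr rfl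
    intro i hi
    simp only [Finset.mem_sdiff, Finset.mem_univ, true_and, Finset.mem_insert,
      Finset.mem_singleton, not_or] at hi
    simp [hi.1, hi.2]
  rw [h3, h2, Finset.prod_const]
  congr 1
  rw [Finset.card_sdiff_of_subset (by simp), Finset.card_univ, Fintype.card_fin]
  congr 1
  rw [Finset.card_insert_of_notMem (by simpa using h), Finset.card_singleton]

lemma count_pinned {n m : ℕ} (y1 y2 : Fin n) (h : y1 ≠ y2) (p q : Fin m) (K : Finset (Fin m))
    (hp : p ∈ K) (hq : q ∈ K) :
    (Finset.univ.filter fun c : Fin n → Fin m =>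
      (∀ y, c y ∈ K) ∧ c y1 = p ∧ c y2 = q).card = K.card ^ (n - 2) := by
  have hset : (Finset.univ.filter fun c : Fin n → Fin m =>
      (∀ y, c y ∈ K) ∧ c y1 = p ∧ c y2 = q)
      = Fintype.piFinset (fun y => if y = y1 then {p} else if y = y2 then {q} else K) := by
    ext c
    simp only [Finset.mem_filter, Finset.mem_univ, true_and, Fintype.mem_piFinset]
    constructor
    · rintro ⟨hK, h1, h2⟩ y
      by_cases hy1 : y = y1
      · simp [hy1, h1]
      · by_cases hy2 : y = y2
        · subst hy2; simp [hy1, h2]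
        · simp [hy1, hy2, hK y]
    · intro hc
      have h1 : c y1 = p := by simpa using hc y1
      have h2 : c y2 = q := by simpa [Ne.symm h] using hc y2
      refine ⟨fun y => ?_, h1, h2⟩
      by_cases hy1 : y = y1
      · subst hy1; rw [h1]; exact hp
      · by_cases hy2 : y = y2
        · subst hy2; rw [h2]; exact hq
        · simpa [hy1, hy2] using hc y
  rw [hset, Fintype.card_piFinset]
  have hcard : ∀ i : Fin n,
      (if i = y1 then ({p} : Finset (Fin m)) else if i = y2 then {q} else K).card
      = (if i = y1 then 1 else if i = y2 then 1 else K.card) := by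
    intro i; split_ifs <;> simp
  rw [Finset.prod_congr rfl (fun i _ => hcard i)]
  exact prod_two_ones y1 y2 h K.card

lemma count_free {n m : ℕ} (K : Finset (Fin m)) :
    (Finset.univ.filter fun c : Fin n → Fin m => ∀ y, c y ∈ K).card = K.card ^ n := by
  rw [filter_pi_eq (fun _ => K), Fintype.card_piFinset]
  simp

lemma count_eq_pair {n m : ℕ} (x1 x2 : Fin n) (h : x1 ≠ x2) :
    (Finset.univ.filter fun a : Fin n → Fin m => a x1 = a x2).card = m ^ (n - 1) := by
  have hn : 2 ≤ n := by
    by_contra hc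
    push_neg at hc
    exact h (Fin.ext (by omega))
  have key : ∀ j : Fin m, (Finset.univ.filter fun a : Fin n → Fin m =>
      a x1 = j ∧ a x2 = j).card = m ^ (n - 2) := by
    intro j
    have h1 := count_pinned x1 x2 h j j (Finset.univ : Finset (Fin m)) (by simp) (by simp)
    simp only [Finset.card_univ, Fintype.card_fin] at h1
    rw [← h1]
    congr 1
    ext a
    simp
  have hsplit : (Finset.univ.filter fun a : Fin n → Fin m => a x1 = a x2)
      = Finset.univ.biUnion (fun j : Fin m => Finset.univ.filter fun a : Fin n → Fin m =>
        a x1 = j ∧ a x2 = j) := by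
    ext a
    simp only [Finset.mem_filter, Finset.mem_univ, true_and, Finset.mem_biUnion]
    constructor
    · intro he; exact ⟨a x1, rfl, he.symm⟩
    · rintro ⟨j, h1, h2⟩; rw [h1, h2]
  rw [hsplit, Finset.card_biUnion]
  · simp only [key, Finset.sum_const, smul_eq_mul, Finset.card_univ, Fintype.card_fin]
    have he : n - 1 = (n - 2) + 1 := by omega
    rw [he, pow_succ']
  · intro j _ j' _ hjj
    apply Finset.disjoint_left.mpr
    intro a ha ha'
    simp only [Finset.mem_filter] at ha ha'
    exact hjj (by rw [← ha.2.1, ← ha'.2.1])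

-- sum over d of validity weight is 1
lemma sum_d {n2 m : ℕ} (T : Finset (Fin m)) (hT : T.card < m) :
    ∑ d : Fin n2 → Fin m, (if ∀ y, d y ∉ T then (1/((m:ℝ) - T.card))^n2 else 0) = 1 := by
  rw [sum_ite_const]
  have h1 : (Finset.univ.filter fun d : Fin n2 → Fin m => ∀ y, d y ∉ T)
      = Finset.univ.filter fun d : Fin n2 → Fin m => ∀ y, d y ∈ Tᶜ := by
    simp [Finset.mem_compl]
  rw [h1, count_free, Finset.card_compl, Fintype.card_fin]
  have h2 : (m:ℝ) - T.card = ((m - T.card : ℕ) : ℝ) := by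
    have := hT.le
    push_cast [Nat.cast_sub this]
    ring
  rw [h2]
  have h3 : ((m - T.card : ℕ) : ℝ) ≠ 0 := by
    have : 0 < m - T.card := by omega
    positivity
  push_cast
  rw [← mul_pow, mul_one_div_cancel h3, one_pow]

lemma fsInnerSum (n1 n2 m : ℕ) (hm : n1 + n2 < m)
    (x1 x2 : Fin n1) (hx : x1 ≠ x2) (y1 y2 : Fin n2) (hy : y1 ≠ y2)
    (a : Fin n1 → Fin m) :
    (∑ b : Fin n1 → Fin m, ∑ c : Fin n2 → Fin m, ∑ d : Fin n2 → Fin m,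
      (if (a x1 = a x2 ∧ c y1 = b x1 ∧ c y2 = b x2) ∧
          ((∀ x, b x ∉ Finset.univ.image a) ∧ (∀ y, c y ∉ Finset.univ.image a) ∧
            (∀ y, d y ∉ Finset.univ.image a ∪ Finset.univ.image c))
        then (1/(m:ℝ))^n1 * (1/((m:ℝ) - (Finset.univ.image a).card))^(n1+n2) *
          (1/((m:ℝ) - ((Finset.univ.image a ∪ Finset.univ.image c)).card))^n2
        else 0))
    = if a x1 = a x2 then
        (1/(m:ℝ))^n1 * (1/((m:ℝ) - (Finset.univ.image a).card))^2 else 0 := by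
  have hn2 : 2 ≤ n2 := by
    by_contra hc; push_neg at hc; exact hy (Fin.ext (by omega))
  set A : Finset (Fin m) := Finset.univ.image a with hA
  have hAcard : A.card ≤ n1 := le_trans (Finset.card_image_le) (by simp)
  have hAm : A.card < m := by omega
  set kN : ℕ := m - A.card with hkN
  have hk1 : 1 ≤ kN := by omega
  have hkreal : (m:ℝ) - A.card = (kN : ℝ) := by
    rw [hkN, Nat.cast_sub hAm.le]
  have hkne : (kN : ℝ) ≠ 0 := by positivity
  set w1 : ℝ := (1/(m:ℝ))^n1 with hw1
  set w2 : ℝ := (1/((m:ℝ) - A.card))^(n1+n2) with hw2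
  by_cases hE : a x1 = a x2
  swap
  · rw [if_neg hE]
    refine Finset.sum_eq_zero fun b _ => Finset.sum_eq_zero fun c _ =>
      Finset.sum_eq_zero fun d _ => ?_
    rw [if_neg (by tauto)]
  rw [if_pos hE]
  -- step d
  have hd : ∀ (b : Fin n1 → Fin m) (c : Fin n2 → Fin m),
      (∑ d : Fin n2 → Fin m,
        (if (a x1 = a x2 ∧ c y1 = b x1 ∧ c y2 = b x2) ∧
            ((∀ x, b x ∉ A) ∧ (∀ y, c y ∉ A) ∧
              (∀ y, d y ∉ A ∪ Finset.univ.image c))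
          then w1 * w2 * (1/((m:ℝ) - ((A ∪ Finset.univ.image c)).card))^n2
          else 0))
      = if (a x1 = a x2 ∧ c y1 = b x1 ∧ c y2 = b x2) ∧
            (∀ x, b x ∉ A) ∧ (∀ y, c y ∉ A) then w1 * w2 else 0 := by
    intro b c
    have hT : (A ∪ Finset.univ.image c).card < m := by
      have h1 : (Finset.univ.image c : Finset (Fin m)).card ≤ n2 :=
        le_trans (Finset.card_image_le) (by simp)
      have h2 := Finset.card_union_le A (Finset.univ.image c)
      omega
    by_cases hQ : (a x1 = a x2 ∧ c y1 = b x1 ∧ c y2 = b x2) ∧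
        (∀ x, b x ∉ A) ∧ (∀ y, c y ∉ A)
    · rw [if_pos hQ]
      have hrw : ∀ d : Fin n2 → Fin m,
          (if (a x1 = a x2 ∧ c y1 = b x1 ∧ c y2 = b x2) ∧
              ((∀ x, b x ∉ A) ∧ (∀ y, c y ∉ A) ∧
                (∀ y, d y ∉ A ∪ Finset.univ.image c))
            then w1 * w2 * (1/((m:ℝ) - ((A ∪ Finset.univ.image c)).card))^n2
            else 0)
          = w1 * w2 * (if (∀ y, d y ∉ A ∪ Finset.univ.image c)
              then (1/((m:ℝ) - ((A ∪ Finset.univ.image c)).card))^n2 else 0) := by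
        intro d
        by_cases hdv : ∀ y, d y ∉ A ∪ Finset.univ.image c
        · rw [if_pos ⟨hQ.1, hQ.2.1, hQ.2.2, hdv⟩, if_pos hdv]
        · rw [if_neg (by tauto), if_neg hdv, mul_zero]
      rw [Finset.sum_congr rfl (fun d _ => hrw d), ← Finset.mul_sum, sum_d _ hT, mul_one]
    · rw [if_neg hQ]
      refine Finset.sum_eq_zero fun d _ => ?_
      rw [if_neg (by tauto)]
  -- step c
  have hc : ∀ b : Fin n1 → Fin m,
      (∑ c : Fin n2 → Fin m,
        (if (a x1 = a x2 ∧ c y1 = b x1 ∧ c y2 = b x2) ∧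
            (∀ x, b x ∉ A) ∧ (∀ y, c y ∉ A) then w1 * w2 else 0))
      = if (∀ x, b x ∉ A) then ((kN ^ (n2-2) : ℕ) : ℝ) * (w1 * w2) else 0 := by
    intro b
    by_cases hb : ∀ x, b x ∉ A
    · rw [if_pos hb]
      have hcong : ∀ c : Fin n2 → Fin m,
          ((a x1 = a x2 ∧ c y1 = b x1 ∧ c y2 = b x2) ∧ (∀ x, b x ∉ A) ∧ (∀ y, c y ∉ A))
          ↔ ((∀ y, c y ∈ Aᶜ) ∧ c y1 = b x1 ∧ c y2 = b x2) := by
        intro c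
        constructor
        · rintro ⟨⟨-, h1, h2⟩, -, h3⟩
          exact ⟨fun y => Finset.mem_compl.mpr (h3 y), h1, h2⟩
        · rintro ⟨h3, h1, h2⟩
          exact ⟨⟨hE, h1, h2⟩, hb, fun y => Finset.mem_compl.mp (h3 y)⟩
      rw [Finset.sum_congr rfl (fun c _ => if_congr (hcong c) rfl rfl), sum_ite_const,
        count_pinned y1 y2 hy _ _ _ (Finset.mem_compl.mpr (hb x1)) (Finset.mem_compl.mpr (hb x2)),
        Finset.card_compl, Fintype.card_fin]
    · rw [if_neg hb]
      refine Finset.sum_eq_zero fun c _ => ?_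
      rw [if_neg (by tauto)]
  have hbc : ∀ b : Fin n1 → Fin m,
      (∑ c : Fin n2 → Fin m, ∑ d : Fin n2 → Fin m,
        (if (a x1 = a x2 ∧ c y1 = b x1 ∧ c y2 = b x2) ∧
            ((∀ x, b x ∉ A) ∧ (∀ y, c y ∉ A) ∧
              (∀ y, d y ∉ A ∪ Finset.univ.image c))
          then w1 * w2 * (1/((m:ℝ) - ((A ∪ Finset.univ.image c)).card))^n2
          else 0))
      = if (∀ x, b x ∉ A) then ((kN ^ (n2-2) : ℕ) : ℝ) * (w1 * w2) else 0 := by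
    intro b
    simp only [hd]
    exact hc b
  simp only [hbc]
  rw [sum_ite_const]
  have hcnt : (Finset.univ.filter fun b : Fin n1 → Fin m => ∀ x, b x ∉ A).card = kN ^ n1 := by
    have h1 : (Finset.univ.filter fun b : Fin n1 → Fin m => ∀ x, b x ∉ A)
        = Finset.univ.filter fun b : Fin n1 → Fin m => ∀ x, b x ∈ Aᶜ := by
      simp [Finset.mem_compl]
    rw [h1, count_free, Finset.card_compl, Fintype.card_fin]
  rw [hcnt, hw2, hkreal]
  -- arithmetic: kN^n1 * (kN^(n2-2) * (w1 * (1/kN)^(n1+n2))) = w1 * (1/kN)^2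
  push_cast
  have he : n1 + n2 = (n1 + (n2 - 2)) + 2 := by
    clear * - hn2
    omega
  have e1 : (kN:ℝ)^n1 * (1/(kN:ℝ))^n1 = 1 := by
    rw [← mul_pow, mul_one_div_cancel hkne, one_pow]
  have e2 : (kN:ℝ)^(n2-2) * (1/(kN:ℝ))^(n2-2) = 1 := by
    rw [← mul_pow, mul_one_div_cancel hkne, one_pow]
  rw [he, pow_add, pow_add]
  calc (kN:ℝ)^n1 * ((kN:ℝ)^(n2-2) * (w1 * ((1/(kN:ℝ))^n1 * (1/(kN:ℝ))^(n2-2) * (1/(kN:ℝ))^2)))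
      = ((kN:ℝ)^n1 * (1/(kN:ℝ))^n1) * ((kN:ℝ)^(n2-2) * (1/(kN:ℝ))^(n2-2)) * (w1 * (1/(kN:ℝ))^2) := by
        ring
    _ = w1 * (1/(kN:ℝ))^2 := by rw [e1, e2]; ring


lemma sum_pair_weight {n1 m : ℕ} (hm : 0 < m) (x1 x2 : Fin n1) (hx : x1 ≠ x2) (r : ℝ) :
    ∑ a : Fin n1 → Fin m, (if a x1 = a x2 then (1/(m:ℝ))^n1 * r else 0) = (1/(m:ℝ)) * r := by
  rw [sum_ite_const, count_eq_pair x1 x2 hx]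
  have hme : (m:ℝ) ≠ 0 := by positivity
  obtain ⟨t, ht⟩ : ∃ t, n1 = t + 1 := ⟨n1 - 1, by have := x1.isLt; omega⟩
  subst ht
  push_cast
  simp only [Nat.add_sub_cancel, pow_succ]
  have e1 : (m:ℝ)^t * (1/(m:ℝ))^t = 1 := by
    rw [← mul_pow, mul_one_div_cancel hme, one_pow]
  calc (m:ℝ)^t * ((1/(m:ℝ))^t * (1/(m:ℝ)) * r)
      = ((m:ℝ)^t * (1/(m:ℝ))^t) * ((1/(m:ℝ)) * r) := by ring
    _ = (1/(m:ℝ)) * r := by rw [e1, one_mul]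

/-- In the random fs-relation graph model, for every `v ∈ T`,
`1/m³ ≤ Pr[Z_v = 1] ≤ 1/(m (m - n1)²)`; and if moreover `m - n ≥ m/c` for a constant
`c > 1`, then `Pr[Z_v = 1] ≤ c²/m³`. -/
theorem Zv_prob_bounds (n1 n2 m : ℕ) (hm : n1 + n2 < m)
    (v : Fin n1 × Fin n1 × Fin n2 × Fin n2) (hv : v ∈ Ttup n1 n2) :
    (1 / (m : ℝ) ^ 3 ≤ fsProb n1 n2 m (ZEvent v) ∧
      fsProb n1 n2 m (ZEvent v) ≤ 1 / ((m : ℝ) * ((m : ℝ) - (n1 : ℝ)) ^ 2)) ∧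
    (∀ c : ℝ, 1 < c → (m : ℝ) / c ≤ (m : ℝ) - ((n1 + n2 : ℕ) : ℝ) →
      fsProb n1 n2 m (ZEvent v) ≤ c ^ 2 / (m : ℝ) ^ 3) := by
  have hT := Finset.mem_filter.mp hv
  have hx : v.1 ≠ v.2.1 := ne_of_lt hT.2.1
  have hy : v.2.2.1 ≠ v.2.2.2 := hT.2.2
  have hn1 : 2 ≤ n1 := by
    by_contra hc; push_neg at hc
    exact hx (Fin.ext (by have := v.1.isLt; have := v.2.1.isLt; omega))
  have hn1m : n1 < m := by omega
  have hm0 : 0 < m := by omega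
  have hmR : (0:ℝ) < m := by exact_mod_cast hm0
  have hYpos : (0:ℝ) < (m:ℝ) - n1 := by
    have : (n1:ℝ) < m := by exact_mod_cast hn1m
    linarith
  have hkey : fsProb n1 n2 m (ZEvent v) =
      ∑ a : Fin n1 → Fin m, (if a v.1 = a v.2.1 then
        (1/(m:ℝ))^n1 * (1/((m:ℝ) - (Finset.univ.image a).card))^2 else 0) := by
    simp only [fsProb, Fintype.sum_prod_type]
    refine Finset.sum_congr rfl fun a _ => ?_
    rw [← fsInnerSum n1 n2 m hm v.1 v.2.1 hx v.2.2.1 v.2.2.2 hy a]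
    refine Finset.sum_congr rfl fun b _ => Finset.sum_congr rfl fun c _ =>
      Finset.sum_congr rfl fun d _ => ?_
    by_cases hP : ZEvent v (a, b, c, d)
    · by_cases hQ : FSValid (a, b, c, d)
      · rw [if_pos hP, fsWeight, if_pos hQ]
        exact Eq.symm (if_pos ⟨hP, hQ⟩)
      · rw [if_pos hP, fsWeight, if_neg hQ]
        exact Eq.symm (if_neg (fun h => hQ h.2))
    · rw [if_neg hP]
      exact Eq.symm (if_neg (fun h => hP h.1))
  have cardlt : ∀ a : Fin n1 → Fin m, (Finset.univ.image a).card < m := fun a =>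
    lt_of_le_of_lt (le_trans Finset.card_image_le (by simp)) hn1m
  have hlow : 1/(m:ℝ)^3 ≤ fsProb n1 n2 m (ZEvent v) := by
    rw [hkey]
    have heq : (1/(m:ℝ))*((1/(m:ℝ))^2) = 1/(m:ℝ)^3 := by
      rw [div_pow, div_mul_div_comm, one_pow, one_mul, ← pow_succ']
    rw [← heq, ← sum_pair_weight hm0 v.1 v.2.1 hx ((1/(m:ℝ))^2)]
    apply Finset.sum_le_sum
    intro a _
    by_cases h : a v.1 = a v.2.1
    · rw [if_pos h, if_pos h]
      have hc : ((Finset.univ.image a).card : ℝ) < m := by exact_mod_cast cardlt a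
      have hXpos : (0:ℝ) < (m:ℝ) - (Finset.univ.image a).card := by linarith
      refine mul_le_mul_of_nonneg_left ?_ (by positivity)
      refine pow_le_pow_left₀ (by positivity) ?_ 2
      refine one_div_le_one_div_of_le hXpos ?_
      have : (0:ℝ) ≤ ((Finset.univ.image a).card : ℝ) := by positivity
      linarith
    · rw [if_neg h, if_neg h]
  have hup : fsProb n1 n2 m (ZEvent v) ≤ 1 / ((m : ℝ) * ((m : ℝ) - (n1 : ℝ)) ^ 2) := by
    rw [hkey]
    have heq : (1/(m:ℝ))*((1/((m:ℝ)-n1))^2) = 1/((m:ℝ)*((m:ℝ)-n1)^2) := by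
      rw [div_pow, div_mul_div_comm, one_pow, one_mul]
    rw [← heq, ← sum_pair_weight hm0 v.1 v.2.1 hx ((1/((m:ℝ)-n1))^2)]
    apply Finset.sum_le_sum
    intro a _
    by_cases h : a v.1 = a v.2.1
    · rw [if_pos h, if_pos h]
      have hc : ((Finset.univ.image a).card : ℝ) ≤ n1 := by
        exact_mod_cast le_trans Finset.card_image_le (by simp)
      have hcm2 : ((Finset.univ.image a).card : ℝ) < m := by exact_mod_cast cardlt a
      have hXpos : (0:ℝ) < (m:ℝ) - (Finset.univ.image a).card := by linarith
      refine mul_le_mul_of_nonneg_left ?_ (by positivity)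
      refine pow_le_pow_left₀ (le_of_lt (one_div_pos.mpr hXpos)) ?_ 2
      refine one_div_le_one_div_of_le hYpos (by linarith)
    · rw [if_neg h, if_neg h]
  refine ⟨⟨hlow, hup⟩, ?_⟩
  intro c hc hcm
  have hc0 : (0:ℝ) < c := lt_trans one_pos hc
  have hX : (m:ℝ)/c ≤ (m:ℝ) - n1 := by
    refine le_trans hcm ?_
    push_cast
    have : (0:ℝ) ≤ (n2:ℝ) := by positivity
    linarith
  refine le_trans hup ?_
  rw [div_le_div_iff₀ (by positivity) (by positivity)]
  have h2 : c^2 * (((m:ℝ)/c)*((m:ℝ)/c)) = (m:ℝ)^2 := by field_simp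
  have h3 : ((m:ℝ)/c)*((m:ℝ)/c) ≤ ((m:ℝ)-n1)*((m:ℝ)-n1) :=
    mul_le_mul hX hX (by positivity) (le_of_lt hYpos)
  nlinarith [mul_le_mul_of_nonneg_left h3 (by positivity : (0:ℝ) ≤ c^2), hmR]
end
end

section
/- In the random fs-relation graph model, if m - n ≥ m/c for a constant c > 1, then the random variable Z = Σ_{v ∈ T} Z_v satisfies |T|/m³ ≤ E[Z] ≤ c²·|T|/m³. -/
open scoped Classical
open Finset

noncomputable section

private lemma sum_if_const {α : Type*} [Fintype α] (P : α → Prop) [DecidablePred P] (c : ℝ) :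
    (∑ a : α, if P a then c else 0) = ((Finset.univ.filter P).card : ℝ) * c := by
  rw [Finset.sum_ite, Finset.sum_const, Finset.sum_const_zero, add_zero, nsmul_eq_mul]

private lemma card_all_mem {k m : ℕ} (S : Finset (Fin m)) :
    (Finset.univ.filter fun g : Fin k → Fin m => ∀ x, g x ∈ S).card = S.card ^ k := by
  have h : (Finset.univ.filter fun g : Fin k → Fin m => ∀ x, g x ∈ S)
      = Fintype.piFinset fun _ => S := by
    ext g; simp [Fintype.mem_piFinset]
  rw [h, Fintype.card_piFinset]
  simp

private lemma card_two_fixed {k m : ℕ} (i j : Fin k) (hij : i ≠ j) (S : Finset (Fin m))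
    (a b : Fin m) (ha : a ∈ S) (hb : b ∈ S) :
    (Finset.univ.filter fun g : Fin k → Fin m =>
      g i = a ∧ g j = b ∧ ∀ x, g x ∈ S).card = S.card ^ (k - 2) := by
  have hji : j ≠ i := fun e => hij e.symm
  set t : Fin k → Finset (Fin m) := fun x => if x = i then {a} else if x = j then {b} else S
    with ht
  have hfilter : (Finset.univ.filter fun g : Fin k → Fin m =>
      g i = a ∧ g j = b ∧ ∀ x, g x ∈ S) = Fintype.piFinset t := by
    ext g
    simp only [Finset.mem_filter, Finset.mem_univ, true_and, Fintype.mem_piFinset]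
    constructor
    · rintro ⟨h1, h2, h3⟩ x
      by_cases hxi : x = i
      · subst hxi; simp [ht, h1]
      · by_cases hxj : x = j
        · subst hxj; simp [ht, hxi, h2]
        · simp [ht, hxi, hxj, h3 x]
    · intro h
      have hi := h i; have hj := h j
      simp [ht] at hi
      simp [ht, hji] at hj
      refine ⟨hi, hj, fun x => ?_⟩
      have hx := h x
      by_cases hxi : x = i
      · subst hxi; simp [ht] at hx; rw [hx]; exact ha
      · by_cases hxj : x = j
        · subst hxj; simp [ht, hji] at hx; rw [hx]; exact hb
        · simpa [ht, hxi, hxj] using hx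
  rw [hfilter, Fintype.card_piFinset]
  have hjmem : j ∈ Finset.univ.erase i := Finset.mem_erase.2 ⟨hji, Finset.mem_univ j⟩
  rw [← Finset.mul_prod_erase _ _ (Finset.mem_univ i), ← Finset.mul_prod_erase _ _ hjmem]
  have hti : (t i).card = 1 := by simp [ht]
  have htj : (t j).card = 1 := by simp [ht, hji]
  rw [hti, htj, one_mul, one_mul]
  have hprod : ∀ x ∈ (Finset.univ.erase i).erase j, (t x).card = S.card := by
    intro x hx
    have h1 := (Finset.mem_erase.1 hx).1
    have h2 := (Finset.mem_erase.1 (Finset.mem_erase.1 hx).2).1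
    simp [ht, h1, h2]
  rw [Finset.prod_congr rfl hprod, Finset.prod_const]
  congr 1
  rw [Finset.card_erase_of_mem hjmem, Finset.card_erase_of_mem (Finset.mem_univ i)]
  simp [Finset.card_univ]
  omega

private lemma card_eq_pair {k m : ℕ} (i j : Fin k) (hij : i ≠ j) :
    (Finset.univ.filter fun g : Fin k → Fin m => g i = g j).card = m ^ (k - 1) := by
  have hk : 2 ≤ k := by
    by_contra h
    push_neg at h
    have h1 := i.isLt; have h2 := j.isLt
    exact hij (Fin.ext (by omega))
  have hrw : (Finset.univ.filter fun g : Fin k → Fin m => g i = g j)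
      = Finset.univ.biUnion (fun a : Fin m => Finset.univ.filter
          fun g : Fin k → Fin m => g i = a ∧ g j = a ∧ ∀ x, g x ∈ (Finset.univ : Finset (Fin m))) := by
    ext g
    simp only [Finset.mem_filter, Finset.mem_biUnion]
    constructor
    · rintro ⟨-, h⟩
      exact ⟨g i, Finset.mem_univ _, Finset.mem_univ _, rfl, h.symm, fun _ => Finset.mem_univ _⟩
    · rintro ⟨a, -, -, h1, h2, -⟩
      exact ⟨Finset.mem_univ _, by rw [h1, h2]⟩
  rw [hrw, Finset.card_biUnion]
  · have hcard : ∀ a : Fin m, (Finset.univ.filter fun g : Fin k → Fin m =>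
        g i = a ∧ g j = a ∧ ∀ x, g x ∈ (Finset.univ : Finset (Fin m))).card = m ^ (k - 2) := by
      intro a
      rw [card_two_fixed i j hij Finset.univ a a (Finset.mem_univ a) (Finset.mem_univ a)]
      simp [Finset.card_univ]
    simp only [hcard, Finset.sum_const, Finset.card_univ, Fintype.card_fin, smul_eq_mul]
    rw [← pow_succ']
    congr 1
    omega
  · intro a _ b _ hab
    refine Finset.disjoint_left.2 fun g hg1 hg2 => ?_
    simp only [Finset.mem_filter] at hg1 hg2
    exact hab (by rw [← hg1.2.1, hg2.2.1])

private lemma sum_valid_one {n2 m : ℕ} (U : Finset (Fin m)) (hU : U.card < m) (P : Prop) [Decidable P] (c : ℝ) :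
    (∑ g : Fin n2 → Fin m, if P ∧ (∀ y, g y ∉ U) then
        c * (1 / ((m : ℝ) - (U.card : ℝ))) ^ n2 else 0)
      = if P then c else 0 := by
  by_cases hP : P
  · rw [if_pos hP]
    have h1 : (∑ g : Fin n2 → Fin m, if P ∧ (∀ y, g y ∉ U) then
        c * (1 / ((m : ℝ) - (U.card : ℝ))) ^ n2 else 0)
        = ∑ g : Fin n2 → Fin m, if (∀ y, g y ∉ U) then
        c * (1 / ((m : ℝ) - (U.card : ℝ))) ^ n2 else 0 :=
      Finset.sum_congr rfl fun g _ => if_congr (and_iff_right hP) rfl rfl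
    refine h1.trans ((sum_if_const _ _).trans ?_)
    have hcard : (Finset.univ.filter fun g : Fin n2 → Fin m => ∀ y, g y ∉ U).card
        = (m - U.card) ^ n2 := by
      have h : (Finset.univ.filter fun g : Fin n2 → Fin m => ∀ y, g y ∉ U)
          = Finset.univ.filter fun g : Fin n2 → Fin m => ∀ y, g y ∈ Uᶜ := by
        ext g; simp [Finset.mem_compl]
      rw [h, card_all_mem, Finset.card_compl]
      simp
    rw [hcard]
    have hq : (0:ℝ) < (m:ℝ) - U.card := by
      have : (U.card : ℝ) < m := by exact_mod_cast hU
      linarith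
    have hcast : (((m - U.card) ^ n2 : ℕ) : ℝ) = ((m:ℝ) - U.card) ^ n2 := by
      push_cast [Nat.cast_sub hU.le]
      ring
    rw [hcast, mul_comm c, ← mul_assoc, ← mul_pow, mul_one_div, div_self hq.ne', one_pow, one_mul]
  · rw [if_neg hP]
    exact Finset.sum_eq_zero fun g _ => if_neg fun h => hP h.1


private lemma ite_ite_and {p q : Prop} [Decidable p] [Decidable q] (a : ℝ) :
    (if p then (if q then a else 0) else 0) = if p ∧ q then a else 0 := by
  by_cases hp : p <;> by_cases hq : q <;> simp [hp, hq]

private lemma sum_if_and_const {α : Type*} [Fintype α] (P : Prop) [Decidable P]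
    (Q : α → Prop) [DecidablePred Q] (c : ℝ) :
    (∑ a : α, if P ∧ Q a then c else 0)
      = if P then ((Finset.univ.filter Q).card : ℝ) * c else 0 := by
  by_cases hP : P
  · rw [if_pos hP]
    exact (Finset.sum_congr rfl fun a _ =>
      if_congr (and_iff_right hP) rfl rfl).trans (sum_if_const _ _)
  · rw [if_neg hP]
    exact Finset.sum_eq_zero fun a _ => if_neg fun h => hP h.1

private lemma prob_ZEvent (n1 n2 m : ℕ) (hm : n1 + n2 < m)
    (v : Fin n1 × Fin n1 × Fin n2 × Fin n2)
    (hx : v.1 ≠ v.2.1) (hy : v.2.2.1 ≠ v.2.2.2) :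
    fsProb n1 n2 m (ZEvent v) =
      ∑ f1 : Fin n1 → Fin m, if f1 v.1 = f1 v.2.1 then
        (1 / (m : ℝ)) ^ n1 * (1 / ((m : ℝ) - ((Finset.univ.image f1).card : ℝ))) ^ 2
      else 0 := by
  obtain ⟨x1, x2, y1, y2⟩ := v
  simp only at hx hy ⊢
  rw [fsProb]
  simp only [Fintype.sum_prod_type]
  refine Finset.sum_congr rfl fun f1 _ => ?_
  simp only [ZEvent, fsWeight, FSValid, FOne, FTwo, fOne, sOne, fTwo, sTwo]
  have hn2 : 2 ≤ n2 := by
    by_contra h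
    push_neg at h
    have h1 := y1.isLt; have h2 := y2.isLt
    exact hy (Fin.ext (by omega))
  set K : Finset (Fin m) := Finset.image f1 Finset.univ with hK
  have hkc : K.card ≤ n1 := le_trans Finset.card_image_le (by simp)
  have hq0 : (0:ℝ) < (m:ℝ) - (K.card : ℝ) := by
    have : (K.card : ℝ) ≤ (n1 : ℝ) := by exact_mod_cast hkc
    have hm' : (n1 : ℝ) < (m : ℝ) := by exact_mod_cast (by omega : n1 < m)
    linarith
  set A : ℝ := (1 / (m:ℝ)) ^ n1 with hA
  set B : ℝ := (1 / ((m:ℝ) - (K.card : ℝ))) ^ (n1 + n2) with hB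
  -- Step 1: sum over s2
  have step1 : ∀ (s1 : Fin n1 → Fin m) (f2 : Fin n2 → Fin m),
      (∑ s2 : Fin n2 → Fin m,
        if f1 x1 = f1 x2 ∧ f2 y1 = s1 x1 ∧ f2 y2 = s1 x2 then
          if (∀ x3, s1 x3 ∉ K) ∧ (∀ y, f2 y ∉ K) ∧
              ∀ y, s2 y ∉ K ∪ Finset.image f2 Finset.univ then
            A * B * (1 / ((m:ℝ) - (((K ∪ Finset.image f2 Finset.univ)).card : ℝ))) ^ n2
          else 0
        else 0)
      = if ((f1 x1 = f1 x2 ∧ f2 y1 = s1 x1 ∧ f2 y2 = s1 x2) ∧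
            (∀ x3, s1 x3 ∉ K) ∧ (∀ y, f2 y ∉ K)) then A * B else 0 := by
    intro s1 f2
    have hU : (K ∪ Finset.image f2 Finset.univ).card < m := by
      have h2 : (Finset.image f2 Finset.univ).card ≤ n2 :=
        le_trans Finset.card_image_le (by simp)
      calc (K ∪ Finset.image f2 Finset.univ).card
          ≤ K.card + (Finset.image f2 Finset.univ).card := Finset.card_union_le _ _
        _ ≤ n1 + n2 := add_le_add hkc h2
        _ < m := hm
    have h1 : (∑ s2 : Fin n2 → Fin m,
        if f1 x1 = f1 x2 ∧ f2 y1 = s1 x1 ∧ f2 y2 = s1 x2 then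
          if (∀ x3, s1 x3 ∉ K) ∧ (∀ y, f2 y ∉ K) ∧
              ∀ y, s2 y ∉ K ∪ Finset.image f2 Finset.univ then
            A * B * (1 / ((m:ℝ) - (((K ∪ Finset.image f2 Finset.univ)).card : ℝ))) ^ n2
          else 0
        else 0)
        = ∑ s2 : Fin n2 → Fin m,
          if ((f1 x1 = f1 x2 ∧ f2 y1 = s1 x1 ∧ f2 y2 = s1 x2) ∧
              (∀ x3, s1 x3 ∉ K) ∧ (∀ y, f2 y ∉ K)) ∧
              (∀ y, s2 y ∉ K ∪ Finset.image f2 Finset.univ) then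
            (A * B) * (1 / ((m:ℝ) - (((K ∪ Finset.image f2 Finset.univ)).card : ℝ))) ^ n2
          else 0 :=
      Finset.sum_congr rfl fun s2 _ =>
        (ite_ite_and _).trans (if_congr (by tauto) (by ring) rfl)
    exact h1.trans (sum_valid_one _ hU _ _)
  refine Eq.trans (Finset.sum_congr rfl fun s1 _ =>
    Finset.sum_congr rfl fun f2 _ => Eq.trans (Finset.sum_congr rfl fun s2 _ => by congr) (step1 s1 f2)) ?_
  -- Step 2: sum over f2
  set D : ℝ := ((Kᶜ.card ^ (n2 - 2) : ℕ) : ℝ) * (A * B) with hD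
  have step2 : ∀ s1 : Fin n1 → Fin m,
      (∑ f2 : Fin n2 → Fin m,
        if ((f1 x1 = f1 x2 ∧ f2 y1 = s1 x1 ∧ f2 y2 = s1 x2) ∧
            (∀ x3, s1 x3 ∉ K) ∧ (∀ y, f2 y ∉ K)) then A * B else 0)
      = if (f1 x1 = f1 x2 ∧ ∀ x3, s1 x3 ∉ K) then D else 0 := by
    intro s1
    have h1 : (∑ f2 : Fin n2 → Fin m,
        if ((f1 x1 = f1 x2 ∧ f2 y1 = s1 x1 ∧ f2 y2 = s1 x2) ∧
            (∀ x3, s1 x3 ∉ K) ∧ (∀ y, f2 y ∉ K)) then A * B else 0)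
        = ∑ f2 : Fin n2 → Fin m,
          if ((f1 x1 = f1 x2 ∧ ∀ x3, s1 x3 ∉ K) ∧
              (f2 y1 = s1 x1 ∧ f2 y2 = s1 x2 ∧ ∀ y, f2 y ∈ Kᶜ)) then A * B else 0 :=
      Finset.sum_congr rfl fun f2 _ =>
        if_congr (by simp only [Finset.mem_compl]; tauto) rfl rfl
    refine h1.trans ((sum_if_and_const _ _ _).trans ?_)
    by_cases hP : f1 x1 = f1 x2 ∧ ∀ x3, s1 x3 ∉ K
    · rw [if_pos hP, if_pos hP, hD]
      congr 2
      exact card_two_fixed y1 y2 hy Kᶜ (s1 x1) (s1 x2)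
        (Finset.mem_compl.2 (hP.2 x1)) (Finset.mem_compl.2 (hP.2 x2))
    · rw [if_neg hP, if_neg hP]
  refine Eq.trans (Finset.sum_congr rfl fun s1 _ => step2 s1) ?_
  -- Step 3: sum over s1
  have h3 : (∑ s1 : Fin n1 → Fin m,
      if (f1 x1 = f1 x2 ∧ ∀ x3, s1 x3 ∉ K) then D else 0)
      = ∑ s1 : Fin n1 → Fin m,
        if (f1 x1 = f1 x2 ∧ ∀ x3, s1 x3 ∈ Kᶜ) then D else 0 :=
    Finset.sum_congr rfl fun s1 _ =>
      if_congr (by simp only [Finset.mem_compl]) rfl rfl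
  refine (h3.trans ((sum_if_and_const _ _ _).trans ?_))
  refine if_congr Iff.rfl ?_ rfl
  -- arithmetic
  rw [card_all_mem, hD, hB]
  have hQ : ((Kᶜ.card : ℕ) : ℝ) = (m:ℝ) - (K.card : ℝ) := by
    rw [Finset.card_compl]
    have hKm : K.card ≤ m := by omega
    simp only [Fintype.card_fin]
    push_cast [Nat.cast_sub hKm]
    ring
  push_cast
  rw [hQ]
  set q : ℝ := (m:ℝ) - (K.card : ℝ) with hqdef
  have hsplit : (1 / q) ^ (n1 + n2)
      = (1/q)^n1 * ((1/q)^(n2-2) * (1/q)^2) := by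
    rw [← pow_add, ← pow_add]
    congr 1
    omega
  rw [hsplit]
  have e1 : q^n1 * (1/q)^n1 = 1 := by
    rw [← mul_pow, mul_one_div, div_self hq0.ne', one_pow]
  have e2 : q^(n2-2) * (1/q)^(n2-2) = 1 := by
    rw [← mul_pow, mul_one_div, div_self hq0.ne', one_pow]
  calc q ^ n1 * (q ^ (n2-2) * (A * ((1/q)^n1 * ((1/q)^(n2-2) * (1/q)^2))))
      = (q^n1 * (1/q)^n1) * ((q^(n2-2) * (1/q)^(n2-2)) * (A * (1/q)^2)) := by ring
    _ = A * (1/q)^2 := by rw [e1, e2]; ring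

private lemma prob_ZEvent_bounds (n1 n2 m : ℕ) (hm : n1 + n2 < m) (c : ℝ) (hc : 1 < c)
    (hmc : (m : ℝ) / c ≤ (m : ℝ) - ((n1 + n2 : ℕ) : ℝ))
    (v : Fin n1 × Fin n1 × Fin n2 × Fin n2) (hx : v.1 ≠ v.2.1) (hy : v.2.2.1 ≠ v.2.2.2) :
    1 / (m : ℝ) ^ 3 ≤ fsProb n1 n2 m (ZEvent v) ∧
      fsProb n1 n2 m (ZEvent v) ≤ c ^ 2 / (m : ℝ) ^ 3 := by
  rw [prob_ZEvent n1 n2 m hm v hx hy]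
  have hm0 : (0:ℝ) < m := by
    have : 0 < m := by omega
    exact_mod_cast this
  have hc0 : (0:ℝ) < c := lt_trans one_pos hc
  have hmc0 : (0:ℝ) < (m:ℝ) / c := div_pos hm0 hc0
  have hn1 : 1 ≤ n1 := by
    by_contra h
    push_neg at h
    have h1 := v.1.isLt
    omega
  -- per-f1 bounds
  have hqf : ∀ f1 : Fin n1 → Fin m,
      (m:ℝ)/c ≤ (m:ℝ) - ((Finset.univ.image f1).card : ℝ) ∧
        (m:ℝ) - ((Finset.univ.image f1).card : ℝ) ≤ (m:ℝ) := by
    intro f1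
    have hkc : (Finset.univ.image f1).card ≤ n1 := le_trans Finset.card_image_le (by simp)
    have h1 : ((Finset.univ.image f1).card : ℝ) ≤ ((n1 + n2 : ℕ) : ℝ) := by
      exact_mod_cast le_trans hkc (by omega)
    have h2 : (0:ℝ) ≤ ((Finset.univ.image f1).card : ℝ) := by positivity
    constructor
    · linarith
    · linarith
  have hA0 : (0:ℝ) ≤ (1 / (m:ℝ)) ^ n1 := by positivity
  have hcount := card_eq_pair (m := m) v.1 v.2.1 hx
  have hsum_lo : (∑ f1 : Fin n1 → Fin m, if f1 v.1 = f1 v.2.1 then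
      (1 / (m : ℝ)) ^ n1 * (1 / (m : ℝ)) ^ 2 else 0) = 1 / (m:ℝ) ^ 3 := by
    refine (sum_if_const (fun f1 : Fin n1 → Fin m => f1 v.1 = f1 v.2.1)
      ((1 / (m : ℝ)) ^ n1 * (1 / (m : ℝ)) ^ 2)).trans ?_
    rw [hcount]
    obtain ⟨e, he⟩ : ∃ e, n1 = e + 1 := ⟨n1 - 1, (Nat.sub_add_cancel hn1).symm⟩
    subst he
    push_cast
    rw [div_pow, one_pow]
    field_simp
    ring
  have hsum_hi : (∑ f1 : Fin n1 → Fin m, if f1 v.1 = f1 v.2.1 then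
      (1 / (m : ℝ)) ^ n1 * (c / (m : ℝ)) ^ 2 else 0) = c ^ 2 / (m:ℝ) ^ 3 := by
    refine (sum_if_const (fun f1 : Fin n1 → Fin m => f1 v.1 = f1 v.2.1)
      ((1 / (m : ℝ)) ^ n1 * (c / (m : ℝ)) ^ 2)).trans ?_
    rw [hcount]
    obtain ⟨e, he⟩ : ∃ e, n1 = e + 1 := ⟨n1 - 1, (Nat.sub_add_cancel hn1).symm⟩
    subst he
    push_cast
    rw [div_pow, one_pow]
    field_simp
    ring
  constructor
  · rw [← hsum_lo]
    refine Finset.sum_le_sum fun f1 _ => ?_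
    by_cases hf : f1 v.1 = f1 v.2.1
    · rw [if_pos hf, if_pos hf]
      refine mul_le_mul_of_nonneg_left ?_ hA0
      have hq := hqf f1
      have hq0 : (0:ℝ) < (m:ℝ) - ((Finset.univ.image f1).card : ℝ) := lt_of_lt_of_le hmc0 hq.1
      refine pow_le_pow_left₀ (by positivity) ?_ 2
      exact one_div_le_one_div_of_le hq0 hq.2
    · rw [if_neg hf, if_neg hf]
  · rw [← hsum_hi]
    refine Finset.sum_le_sum fun f1 _ => ?_
    by_cases hf : f1 v.1 = f1 v.2.1
    · rw [if_pos hf, if_pos hf]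
      refine mul_le_mul_of_nonneg_left ?_ hA0
      have hq := hqf f1
      have hq0 : (0:ℝ) < (m:ℝ) - ((Finset.univ.image f1).card : ℝ) := lt_of_lt_of_le hmc0 hq.1
      refine pow_le_pow_left₀ (by positivity) ?_ 2
      calc 1 / ((m:ℝ) - ((Finset.univ.image f1).card : ℝ)) ≤ 1 / ((m:ℝ)/c) :=
            one_div_le_one_div_of_le hmc0 hq.1
        _ = c / m := by rw [one_div_div]
    · rw [if_neg hf, if_neg hf]

/-- In the random fs-relation graph model, if `m - n ≥ m/c` for a
constant `c > 1`, then `|T|/m³ ≤ E[Z] ≤ c²|T|/m³`. -/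
theorem Z_expectation_bounds (n1 n2 m : ℕ) (hm : n1 + n2 < m)
    (c : ℝ) (hc : 1 < c) (hmc : (m : ℝ) / c ≤ (m : ℝ) - ((n1 + n2 : ℕ) : ℝ)) :
    ((Ttup n1 n2).card : ℝ) / (m : ℝ) ^ 3 ≤ fsExp n1 n2 m (Ztotal n1 n2 m) ∧
      fsExp n1 n2 m (Ztotal n1 n2 m) ≤
        c ^ 2 * ((Ttup n1 n2).card : ℝ) / (m : ℝ) ^ 3 := by
  have hexp : fsExp n1 n2 m (Ztotal n1 n2 m)
      = ∑ v ∈ Ttup n1 n2, fsProb n1 n2 m (ZEvent v) := by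
    rw [fsExp]
    simp only [Ztotal, Finset.mul_sum]
    rw [Finset.sum_comm]
    refine Finset.sum_congr rfl fun v _ => ?_
    rw [fsProb]
    refine Finset.sum_congr rfl fun ω _ => ?_
    simp only [Zind, mul_ite, mul_one, mul_zero]
  have hb : ∀ v ∈ Ttup n1 n2,
      1 / (m : ℝ) ^ 3 ≤ fsProb n1 n2 m (ZEvent v) ∧
        fsProb n1 n2 m (ZEvent v) ≤ c ^ 2 / (m : ℝ) ^ 3 := by
    intro v hv
    simp only [Ttup, Finset.mem_filter] at hv
    exact prob_ZEvent_bounds n1 n2 m hm c hc hmc v (ne_of_lt hv.2.1) hv.2.2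
  rw [hexp]
  constructor
  · calc ((Ttup n1 n2).card : ℝ) / (m : ℝ) ^ 3
        = ∑ _v ∈ Ttup n1 n2, 1 / (m:ℝ) ^ 3 := by
          rw [Finset.sum_const, nsmul_eq_mul]; ring
      _ ≤ ∑ v ∈ Ttup n1 n2, fsProb n1 n2 m (ZEvent v) :=
          Finset.sum_le_sum fun v hv => (hb v hv).1
  · calc (∑ v ∈ Ttup n1 n2, fsProb n1 n2 m (ZEvent v))
        ≤ ∑ _v ∈ Ttup n1 n2, c ^ 2 / (m:ℝ) ^ 3 :=
          Finset.sum_le_sum fun v hv => (hb v hv).2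
      _ = c ^ 2 * ((Ttup n1 n2).card : ℝ) / (m : ℝ) ^ 3 := by
          rw [Finset.sum_const, nsmul_eq_mul]; ring
end
end

section
/- In the random fs-relation graph model with n1 = δn and n2 = (1-δ)n for a constant δ ∈ (0,1) (δn an integer) and with m - n ≥ m/c for a constant c > 1, one has Σ_{v ∈ T} Σ_{w ∈ T_2(v)} E[Z_v·Z_w] ≤ ( c⁴(1-δ)²·n²/m⁵ + 2c³(1-δ)·n/m⁴ )·|T|. -/
open scoped Classical
open Finset

noncomputable section

lemma sum_constrained {N m : ℕ} (C : Finset (Fin m)) (hC : 0 < C.card)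
    {k : ℕ} (p : Fin k → Fin N) (hp : Function.Injective p)
    (c : Fin k → Fin m) (hc : ∀ i, c i ∈ C) :
    ∑ f : Fin N → Fin m, (if (∀ a, f a ∈ C) ∧ (∀ i, f (p i) = c i)
      then ((C.card : ℝ))⁻¹ ^ N else 0) = ((C.card : ℝ))⁻¹ ^ k := by
  have hCne : ((C.card : ℝ)) ≠ 0 := by positivity
  have key : ∀ f : Fin N → Fin m,
      (if (∀ a, f a ∈ C) ∧ (∀ i, f (p i) = c i) then ((C.card : ℝ))⁻¹ ^ N else 0)
        = ∏ a : Fin N, (if f a ∈ C ∧ (∀ i, p i = a → f a = c i)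
            then ((C.card : ℝ))⁻¹ else 0) := by
    intro f
    by_cases h : (∀ a, f a ∈ C) ∧ (∀ i, f (p i) = c i)
    · rw [if_pos h]
      rw [Finset.prod_congr rfl (fun a _ => ?_), Finset.prod_const, Finset.card_univ,
        Fintype.card_fin]
      rw [if_pos ⟨h.1 a, fun i hi => by rw [← hi]; exact h.2 i⟩]
    · rw [if_neg h]
      push_neg at h
      by_cases h1 : ∀ a, f a ∈ C
      · obtain ⟨i, hi⟩ := h h1
        refine (Finset.prod_eq_zero (Finset.mem_univ (p i)) ?_).symm
        rw [if_neg]; rintro ⟨-, h2⟩; exact hi (h2 i rfl)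
      · push_neg at h1
        obtain ⟨a, ha⟩ := h1
        refine (Finset.prod_eq_zero (Finset.mem_univ a) ?_).symm
        rw [if_neg]; rintro ⟨h2, -⟩; exact ha h2
  rw [Finset.sum_congr rfl fun f _ => key f]
  rw [← Fintype.prod_sum (fun (a : Fin N) (v : Fin m) =>
    if v ∈ C ∧ (∀ i, p i = a → v = c i) then ((C.card : ℝ))⁻¹ else 0)]
  have step : ∀ a : Fin N,
      (∑ v : Fin m, if v ∈ C ∧ (∀ i, p i = a → v = c i) then ((C.card : ℝ))⁻¹ else 0)
        = if a ∈ Finset.image p Finset.univ then ((C.card : ℝ))⁻¹ else 1 := by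
    intro a
    by_cases ha : a ∈ Finset.image p Finset.univ
    · obtain ⟨i, -, hi⟩ := Finset.mem_image.mp ha
      rw [if_pos ha]
      have : ∀ v : Fin m, (v ∈ C ∧ (∀ j, p j = a → v = c j)) ↔ v = c i := by
        intro v
        constructor
        · rintro ⟨-, h2⟩; exact h2 i hi
        · rintro rfl
          exact ⟨hc i, fun j hj => by rw [hp (hj.trans hi.symm)]⟩
      rw [Finset.sum_congr rfl fun v _ => by rw [if_congr (this v) rfl rfl]]
      simp
    · rw [if_neg ha]
      have : ∀ v : Fin m, (v ∈ C ∧ (∀ j, p j = a → v = c j)) ↔ v ∈ C := by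
        intro v
        refine ⟨fun h => h.1, fun h => ⟨h, fun j hj => absurd ?_ ha⟩⟩
        exact Finset.mem_image.mpr ⟨j, Finset.mem_univ j, hj⟩
      rw [Finset.sum_congr rfl fun v _ => by rw [if_congr (this v) rfl rfl]]
      rw [Finset.sum_ite_mem, Finset.univ_inter, Finset.sum_const, nsmul_eq_mul,
        mul_inv_cancel₀ hCne]
  rw [Finset.prod_congr rfl fun a _ => step a]
  rw [← Finset.prod_subset (Finset.subset_univ (Finset.image p Finset.univ))
    (fun x _ hx => by rw [if_neg hx])]
  rw [Finset.prod_congr rfl fun a ha => if_pos ha, Finset.prod_const,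
    Finset.card_image_of_injective _ hp, Finset.card_univ, Fintype.card_fin]

lemma sum_constrained_zero {N m : ℕ} (C : Finset (Fin m))
    {k : ℕ} (p : Fin k → Fin N) (c : Fin k → Fin m) (i₀ : Fin k) (h : c i₀ ∉ C) (r : ℝ) :
    ∑ f : Fin N → Fin m, (if (∀ a, f a ∈ C) ∧ (∀ i, f (p i) = c i)
      then r else 0) = 0 := by
  refine Finset.sum_eq_zero fun f _ => ?_
  rw [if_neg]
  rintro ⟨h1, h2⟩
  exact h (h2 i₀ ▸ h1 (p i₀))

lemma sum_valid {N m : ℕ} (C : Finset (Fin m)) (hC : 0 < C.card) :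
    ∑ f : Fin N → Fin m, (if (∀ a, f a ∈ C) then ((C.card : ℝ))⁻¹ ^ N else 0) = 1 := by
  have := sum_constrained C hC (Fin.elim0 : Fin 0 → Fin N)
    (fun i => i.elim0) (fun i => i.elim0) (fun i => i.elim0)
  rw [pow_zero] at this
  rw [← this]
  exact Finset.sum_congr rfl fun f _ => by
    rw [if_congr (and_iff_left fun i => i.elim0) rfl rfl]

lemma fin_two_inj {N : ℕ} (x1 x2 : Fin N) (hx : x1 ≠ x2) :
    Function.Injective ![x1, x2] := by
  intro i j hij
  fin_cases i <;> fin_cases j <;> simp_all [hx, hx.symm]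

lemma sum_valid_pair {N m : ℕ} (C : Finset (Fin m)) (hC : 0 < C.card)
    (x1 x2 : Fin N) (hx : x1 ≠ x2) :
    ∑ s : Fin N → Fin m, (if (∀ a, s a ∈ C) ∧ s x1 = s x2
      then ((C.card : ℝ))⁻¹ ^ N else 0) = ((C.card : ℝ))⁻¹ := by
  have hCne : ((C.card : ℝ)) ≠ 0 := by positivity
  have key : ∀ s : Fin N → Fin m,
      (if (∀ a, s a ∈ C) ∧ s x1 = s x2 then ((C.card : ℝ))⁻¹ ^ N else 0)
        = ∑ v : Fin m, (if (∀ a, s a ∈ C) ∧ (∀ i : Fin 2, s (![x1, x2] i) = (fun _ => v) i)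
            then ((C.card : ℝ))⁻¹ ^ N else 0) := by
    intro s
    by_cases h : (∀ a, s a ∈ C) ∧ s x1 = s x2
    · rw [if_pos h, Finset.sum_eq_single (s x1)]
      · rw [if_pos ⟨h.1, fun i => by fin_cases i <;> simp [h.2.symm]⟩]
      · intro v _ hv
        rw [if_neg]
        rintro ⟨-, h2⟩
        exact hv ((h2 0).symm.trans (by simp))
      · intro hv; exact absurd (Finset.mem_univ _) hv
    · rw [if_neg h, eq_comm]
      refine Finset.sum_eq_zero fun v _ => ?_
      rw [if_neg]
      rintro ⟨h1, h2⟩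
      have e0 := h2 0; have e1 := h2 1
      simp at e0 e1
      exact h ⟨h1, e0.trans e1.symm⟩
  rw [Finset.sum_congr rfl fun s _ => key s, Finset.sum_comm]
  have step : ∀ v : Fin m,
      (∑ s : Fin N → Fin m, if (∀ a, s a ∈ C) ∧ (∀ i : Fin 2, s (![x1, x2] i) = (fun _ => v) i)
          then ((C.card : ℝ))⁻¹ ^ N else 0)
        = if v ∈ C then ((C.card : ℝ))⁻¹ ^ 2 else 0 := by
    intro v
    by_cases hv : v ∈ C
    · rw [if_pos hv, sum_constrained C hC ![x1, x2] (fin_two_inj x1 x2 hx) _ (fun i => hv)]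
    · rw [if_neg hv, sum_constrained_zero C ![x1, x2] _ 0 hv]
  rw [Finset.sum_congr rfl fun v _ => step v, Finset.sum_ite_mem, Finset.univ_inter,
    Finset.sum_const, nsmul_eq_mul, sq, ← mul_assoc, mul_inv_cancel₀ hCne, one_mul]

lemma fsProb_eq_stage2 (n1 n2 m n : ℕ) (hn : n1 + n2 = n) (hm : n < m)
    (S : (Fin n1 → Fin m) → (Fin n1 → Fin m) → (Fin n2 → Fin m) → Prop) :
    fsProb n1 n2 m (fun ω => S (fOne ω) (sOne ω) (fTwo ω)) =
      ∑ g : Fin n1 → Fin m, ∑ s : Fin n1 → Fin m, ∑ f : Fin n2 → Fin m,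
        if (∀ x, s x ∈ (Finset.univ.image g)ᶜ) ∧ (∀ y, f y ∈ (Finset.univ.image g)ᶜ)
            ∧ S g s f
        then (1 / (m : ℝ)) ^ n1 * ((((Finset.univ.image g)ᶜ.card : ℝ))⁻¹) ^ (n1 + n2)
        else 0 := by
  have hm0 : 0 < m := lt_of_le_of_lt (Nat.zero_le n) hm
  rw [fsProb, Fintype.sum_prod_type]
  refine Finset.sum_congr rfl fun g _ => ?_
  rw [Fintype.sum_prod_type]
  refine Finset.sum_congr rfl fun s _ => ?_
  rw [Fintype.sum_prod_type]
  refine Finset.sum_congr rfl fun f _ => ?_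
  -- now the t-sum
  have hF1 : (Finset.univ.image g).card ≤ n1 := by
    simpa using Finset.card_image_le (s := (Finset.univ : Finset (Fin n1))) (f := g)
  have hF1m : (Finset.univ.image g).card < m :=
    lt_of_le_of_lt (hF1.trans (hn ▸ Nat.le_add_right n1 n2)) hm
  have hU : ∀ t : Fin n2 → Fin m,
      (Finset.univ.image g ∪ Finset.univ.image f).card < m := by
    intro t
    refine lt_of_le_of_lt (le_trans (Finset.card_union_le _ _) ?_) hm
    have hF2 : (Finset.univ.image f).card ≤ n2 := by
      simpa using Finset.card_image_le (s := (Finset.univ : Finset (Fin n2))) (f := f)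
    omega
  set U : Finset (Fin m) := Finset.univ.image g ∪ Finset.univ.image f with hUdef
  have hUm : U.card < m := hU (fun _ => ⟨0, hm0⟩)
  have hcastU : (1 / ((m : ℝ) - U.card)) = ((Uᶜ.card : ℝ))⁻¹ := by
    rw [Finset.card_compl, Fintype.card_fin, Nat.cast_sub hUm.le, one_div]
  have hUc : 0 < Uᶜ.card := by
    rw [Finset.card_compl, Fintype.card_fin]; omega
  have hcastM : (1 / ((m : ℝ) - (Finset.univ.image g).card))
      = (((Finset.univ.image g)ᶜ.card : ℝ))⁻¹ := by
    rw [Finset.card_compl, Fintype.card_fin, Nat.cast_sub hF1m.le, one_div]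
  have hvalid : ∀ t : Fin n2 → Fin m, FSValid ((g, s, f, t) : FSSpace n1 n2 m) ↔
      ((∀ x, s x ∈ (Finset.univ.image g)ᶜ) ∧ (∀ y, f y ∈ (Finset.univ.image g)ᶜ)
        ∧ (∀ y, t y ∈ Uᶜ)) := by
    intro t
    simp only [FSValid, FOne, FTwo, fOne, sOne, fTwo, sTwo, Finset.mem_compl]
    exact Iff.rfl
  by_cases h : (∀ x, s x ∈ (Finset.univ.image g)ᶜ) ∧ (∀ y, f y ∈ (Finset.univ.image g)ᶜ)
      ∧ S g s f
  · rw [if_pos h]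
    have key : ∀ t : Fin n2 → Fin m,
        (if S (fOne ((g, s, f, t) : FSSpace n1 n2 m)) (sOne (g, s, f, t)) (fTwo (g, s, f, t))
          then fsWeight n1 n2 m (g, s, f, t) else 0)
        = ((1 / (m : ℝ)) ^ n1 * ((((Finset.univ.image g)ᶜ.card : ℝ))⁻¹) ^ (n1 + n2)) *
            (if (∀ y, t y ∈ Uᶜ) then ((Uᶜ.card : ℝ))⁻¹ ^ n2 else 0) := by
      intro t
      have hS : S (fOne ((g, s, f, t) : FSSpace n1 n2 m)) (sOne (g, s, f, t)) (fTwo (g, s, f, t)) :=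
        h.2.2
      rw [if_pos hS, fsWeight]
      by_cases ht : ∀ y, t y ∈ Uᶜ
      · rw [if_pos ((hvalid t).mpr ⟨h.1, h.2.1, ht⟩), if_pos ht]
        show (1 / (m : ℝ)) ^ n1 * (1 / ((m : ℝ) - (Finset.univ.image g).card)) ^ (n1 + n2)
            * (1 / ((m : ℝ) - (U.card : ℕ))) ^ n2 = _
        rw [hcastM, hcastU]
      · rw [if_neg (fun hv => ht ((hvalid t).mp hv).2.2), if_neg ht, mul_zero]
    rw [Finset.sum_congr rfl fun t _ => key t, ← Finset.mul_sum, sum_valid _ hUc, mul_one]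
  · rw [if_neg h]
    refine Finset.sum_eq_zero fun t _ => ?_
    by_cases hS : S (fOne ((g, s, f, t) : FSSpace n1 n2 m)) (sOne (g, s, f, t)) (fTwo (g, s, f, t))
    · rw [if_pos hS, fsWeight, if_neg]
      intro hv
      exact h ⟨((hvalid t).mp hv).1, ((hvalid t).mp hv).2.1, hS⟩
    · rw [if_neg hS]

lemma prob_bound (n1 n2 m n : ℕ) (c : ℝ) (hc : 1 < c)
    (hn : n1 + n2 = n) (hm : n < m) (hmc : (m : ℝ) / c ≤ (m : ℝ) - n)
    (x1 x2 : Fin n1) (hx : x1 ≠ x2) {k : ℕ} (ys : Fin k → Fin n2)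
    (hys : Function.Injective ys) (xs : Fin k → Fin n1) (b : Bool) :
    fsProb n1 n2 m (fun ω => fOne ω x1 = fOne ω x2 ∧ (∀ i, fTwo ω (ys i) = sOne ω (xs i))
      ∧ (b = true → sOne ω x1 = sOne ω x2))
      ≤ (1 / m) * (c / m) ^ (k + (if b then 1 else 0)) := by
  have hm0 : 0 < m := lt_of_le_of_lt (Nat.zero_le n) hm
  have hc0 : (0 : ℝ) < c := lt_trans one_pos hc
  have hmR : (0 : ℝ) < m := by exact_mod_cast hm0
  have hmcpos : (0 : ℝ) < (m : ℝ) / c := div_pos hmR hc0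
  rw [fsProb_eq_stage2 n1 n2 m n hn hm
    (fun g s f => g x1 = g x2 ∧ (∀ i, f (ys i) = s (xs i)) ∧ (b = true → s x1 = s x2))]
  set e := k + (if b then 1 else 0) with he
  have key : ∀ g : Fin n1 → Fin m,
      (∑ s : Fin n1 → Fin m, ∑ f : Fin n2 → Fin m,
        if (∀ x, s x ∈ (Finset.univ.image g)ᶜ) ∧ (∀ y, f y ∈ (Finset.univ.image g)ᶜ)
            ∧ (g x1 = g x2 ∧ (∀ i, f (ys i) = s (xs i)) ∧ (b = true → s x1 = s x2))
        then (1 / (m : ℝ)) ^ n1 * ((((Finset.univ.image g)ᶜ.card : ℝ))⁻¹) ^ (n1 + n2)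
        else 0)
      = if g x1 = g x2 then
          (1 / (m : ℝ)) ^ n1 * ((((Finset.univ.image g)ᶜ.card : ℝ))⁻¹) ^ e else 0 := by
    intro g
    set Cg : Finset (Fin m) := (Finset.univ.image g)ᶜ with hCg
    have hF1 : (Finset.univ.image g).card ≤ n1 := by
      simpa using Finset.card_image_le (s := (Finset.univ : Finset (Fin n1))) (f := g)
    have hF1m : (Finset.univ.image g).card < m := by omega
    have hCgpos : 0 < Cg.card := by
      rw [hCg, Finset.card_compl, Fintype.card_fin]; omega
    have hinv : ((Cg.card : ℝ))⁻¹ ^ (n1 + n2) = ((Cg.card : ℝ))⁻¹ ^ n1 * ((Cg.card : ℝ))⁻¹ ^ n2 :=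
      pow_add _ n1 n2
    by_cases hg : g x1 = g x2
    · rw [if_pos hg]
      have split : ∀ (s : Fin n1 → Fin m) (f : Fin n2 → Fin m),
          (if (∀ x, s x ∈ Cg) ∧ (∀ y, f y ∈ Cg)
              ∧ (g x1 = g x2 ∧ (∀ i, f (ys i) = s (xs i)) ∧ (b = true → s x1 = s x2))
            then (1 / (m : ℝ)) ^ n1 * ((Cg.card : ℝ))⁻¹ ^ (n1 + n2) else 0)
          = ((1 / (m : ℝ)) ^ n1 * ((Cg.card : ℝ))⁻¹ ^ n1 *
              (if (∀ x, s x ∈ Cg) ∧ (b = true → s x1 = s x2) then 1 else 0)) *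
            (if (∀ y, f y ∈ Cg) ∧ (∀ i, f (ys i) = s (xs i))
              then ((Cg.card : ℝ))⁻¹ ^ n2 else 0) := by
        intro s f
        by_cases h1 : (∀ x, s x ∈ Cg) ∧ (b = true → s x1 = s x2)
        · by_cases h2 : (∀ y, f y ∈ Cg) ∧ (∀ i, f (ys i) = s (xs i))
          · rw [if_pos ⟨h1.1, h2.1, hg, h2.2, h1.2⟩, if_pos h1, if_pos h2, hinv]; ring
          · rw [if_neg (fun hh => h2 ⟨hh.2.1, hh.2.2.2.1⟩), if_neg h2, mul_zero]
        · rw [if_neg (fun hh => h1 ⟨hh.1, hh.2.2.2.2⟩), if_neg h1, mul_zero, zero_mul]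
      rw [Finset.sum_congr rfl fun s _ => Finset.sum_congr rfl fun f _ => split s f]
      have inner : ∀ s : Fin n1 → Fin m, (∀ x, s x ∈ Cg) →
          (∑ f : Fin n2 → Fin m, if (∀ y, f y ∈ Cg) ∧ (∀ i, f (ys i) = s (xs i))
            then ((Cg.card : ℝ))⁻¹ ^ n2 else 0) = ((Cg.card : ℝ))⁻¹ ^ k :=
        fun s hs => sum_constrained Cg hCgpos ys hys _ (fun i => hs (xs i))
      have step2 : ∀ s : Fin n1 → Fin m,
          ((1 / (m : ℝ)) ^ n1 * ((Cg.card : ℝ))⁻¹ ^ n1 *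
              (if (∀ x, s x ∈ Cg) ∧ (b = true → s x1 = s x2) then 1 else 0)) *
            (∑ f : Fin n2 → Fin m, if (∀ y, f y ∈ Cg) ∧ (∀ i, f (ys i) = s (xs i))
              then ((Cg.card : ℝ))⁻¹ ^ n2 else 0)
          = (1 / (m : ℝ)) ^ n1 * ((Cg.card : ℝ))⁻¹ ^ k *
              (if (∀ x, s x ∈ Cg) ∧ (b = true → s x1 = s x2)
                then ((Cg.card : ℝ))⁻¹ ^ n1 else 0) := by
        intro s
        by_cases h1 : (∀ x, s x ∈ Cg) ∧ (b = true → s x1 = s x2)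
        · rw [if_pos h1, if_pos h1, inner s h1.1]; ring
        · rw [if_neg h1, if_neg h1, mul_zero, zero_mul, mul_zero]
      have hs2 : ∀ s : Fin n1 → Fin m,
          (∑ f : Fin n2 → Fin m,
            ((1 / (m : ℝ)) ^ n1 * ((Cg.card : ℝ))⁻¹ ^ n1 *
              (if (∀ x, s x ∈ Cg) ∧ (b = true → s x1 = s x2) then 1 else 0)) *
            (if (∀ y, f y ∈ Cg) ∧ (∀ i, f (ys i) = s (xs i))
              then ((Cg.card : ℝ))⁻¹ ^ n2 else 0))
          = (1 / (m : ℝ)) ^ n1 * ((Cg.card : ℝ))⁻¹ ^ k *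
              (if (∀ x, s x ∈ Cg) ∧ (b = true → s x1 = s x2)
                then ((Cg.card : ℝ))⁻¹ ^ n1 else 0) := by
        intro s
        rw [← Finset.mul_sum]
        exact step2 s
      rw [Finset.sum_congr rfl fun s _ => hs2 s, ← Finset.mul_sum]
      have slast : (∑ s : Fin n1 → Fin m,
          if (∀ x, s x ∈ Cg) ∧ (b = true → s x1 = s x2)
            then ((Cg.card : ℝ))⁻¹ ^ n1 else 0) = ((Cg.card : ℝ))⁻¹ ^ (if b then 1 else 0) := by
        cases b
        · simp only [Bool.false_eq_true, false_implies, and_true, if_false, pow_zero]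
          exact sum_valid Cg hCgpos
        · rw [if_pos rfl, pow_one]
          have hiff : ∀ s : Fin n1 → Fin m,
              ((∀ x, s x ∈ Cg) ∧ (true = true → s x1 = s x2))
                ↔ ((∀ a, s a ∈ Cg) ∧ s x1 = s x2) := fun s => by tauto
          refine Eq.trans (Finset.sum_congr rfl fun s _ =>
            (if_congr (hiff s) rfl rfl :
              _ = if (∀ a, s a ∈ Cg) ∧ s x1 = s x2 then ((Cg.card : ℝ))⁻¹ ^ n1 else 0)) ?_
          exact sum_valid_pair Cg hCgpos x1 x2 hx
      rw [slast, he, pow_add]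
      ring
    · rw [if_neg hg]
      refine Finset.sum_eq_zero fun s _ => Finset.sum_eq_zero fun f _ => ?_
      rw [if_neg (fun hh => hg hh.2.2.1)]
  refine le_trans (le_of_eq (Finset.sum_congr rfl fun g _ => by
    refine Eq.trans ?_ (key g)
    congr!)) ?_
  have bound : ∀ g : Fin n1 → Fin m,
      (if g x1 = g x2 then
          (1 / (m : ℝ)) ^ n1 * ((((Finset.univ.image g)ᶜ.card : ℝ))⁻¹) ^ e else 0)
      ≤ (c / m) ^ e * (if (∀ a, g a ∈ (Finset.univ : Finset (Fin m))) ∧ g x1 = g x2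
          then (((Finset.univ : Finset (Fin m)).card : ℝ))⁻¹ ^ n1 else 0) := by
    intro g
    by_cases hg : g x1 = g x2
    · rw [if_pos hg, if_pos ⟨fun a => Finset.mem_univ _, hg⟩, Finset.card_univ,
        Fintype.card_fin]
      have hF1 : (Finset.univ.image g).card ≤ n1 := by
        simpa using Finset.card_image_le (s := (Finset.univ : Finset (Fin n1))) (f := g)
      have hcard : ((m : ℝ) / c) ≤ (((Finset.univ.image g)ᶜ.card : ℝ)) := by
        rw [Finset.card_compl, Fintype.card_fin]
        have h1 : n ≤ m := hm.le
        have h2 : (Finset.univ.image g).card ≤ n := by omega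
        have : ((m - (Finset.univ.image g).card : ℕ) : ℝ)
            = (m : ℝ) - ((Finset.univ.image g).card : ℝ) := by
          rw [Nat.cast_sub (by omega)]
        rw [this]
        refine le_trans hmc ?_
        have : ((Finset.univ.image g).card : ℝ) ≤ (n : ℝ) := by exact_mod_cast h2
        linarith
      have hinvle : (((Finset.univ.image g)ᶜ.card : ℝ))⁻¹ ≤ c / m := by
        rw [show c / (m : ℝ) = ((m : ℝ) / c)⁻¹ from (inv_div _ _).symm]
        exact inv_anti₀ hmcpos hcard
      have hinv0 : (0 : ℝ) ≤ (((Finset.univ.image g)ᶜ.card : ℝ))⁻¹ := by positivity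
      have : ((((Finset.univ.image g)ᶜ.card : ℝ))⁻¹) ^ e ≤ (c / m) ^ e :=
        pow_le_pow_left₀ hinv0 hinvle e
      calc (1 / (m : ℝ)) ^ n1 * ((((Finset.univ.image g)ᶜ.card : ℝ))⁻¹) ^ e
          ≤ (1 / (m : ℝ)) ^ n1 * (c / m) ^ e := by
            refine mul_le_mul_of_nonneg_left this (by positivity)
        _ = (c / m) ^ e * ((m : ℝ))⁻¹ ^ n1 := by rw [one_div]; ring
    · rw [if_neg hg, if_neg (fun hh => hg hh.2)]
      positivity
  refine le_trans (Finset.sum_le_sum fun g _ => bound g) ?_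
  rw [← Finset.mul_sum]
  have : (∑ g : Fin n1 → Fin m, if (∀ a, g a ∈ (Finset.univ : Finset (Fin m))) ∧ g x1 = g x2
      then (((Finset.univ : Finset (Fin m)).card : ℝ))⁻¹ ^ n1 else 0)
      = (((Finset.univ : Finset (Fin m)).card : ℝ))⁻¹ := by
    refine sum_valid_pair _ ?_ x1 x2 hx
    rw [Finset.card_univ, Fintype.card_fin]; exact hm0
  rw [this, Finset.card_univ, Fintype.card_fin]
  exact le_of_eq (by rw [one_div]; ring)

lemma fsWeight_nonneg (n1 n2 m n : ℕ) (hn : n1 + n2 = n) (hm : n < m)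
    (ω : FSSpace n1 n2 m) : 0 ≤ fsWeight n1 n2 m ω := by
  rw [fsWeight]
  split
  · have h1 : (FOne ω).card ≤ n1 := by
      refine le_trans Finset.card_image_le ?_; simp
    have h2 : ((FOne ω) ∪ (FTwo ω)).card ≤ n1 + n2 := by
      refine le_trans (Finset.card_union_le _ _) ?_
      have : (FTwo ω).card ≤ n2 := by
        refine le_trans Finset.card_image_le ?_; simp
      omega
    have p1 : (0:ℝ) < (m : ℝ) - (FOne ω).card := by
      have : ((FOne ω).card : ℝ) < (m : ℝ) := by exact_mod_cast (by omega : (FOne ω).card < m)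
      linarith
    have p2 : (0:ℝ) < (m : ℝ) - ((FOne ω) ∪ (FTwo ω)).card := by
      have : (((FOne ω) ∪ (FTwo ω)).card : ℝ) < (m : ℝ) := by
        exact_mod_cast (by omega : ((FOne ω) ∪ (FTwo ω)).card < m)
      linarith
    have hm0 : (0:ℝ) ≤ (m:ℝ) := Nat.cast_nonneg m
    positivity
  · exact le_refl 0

lemma fsProb_mono (n1 n2 m n : ℕ) (hn : n1 + n2 = n) (hm : n < m)
    (S S' : FSSpace n1 n2 m → Prop) (h : ∀ ω, S ω → S' ω) :
    fsProb n1 n2 m S ≤ fsProb n1 n2 m S' := by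
  refine Finset.sum_le_sum fun ω _ => ?_
  by_cases hS : S ω
  · rw [if_pos hS, if_pos (h ω hS)]
  · rw [if_neg hS]
    by_cases hS' : S' ω
    · rw [if_pos hS']; exact fsWeight_nonneg n1 n2 m n hn hm ω
    · rw [if_neg hS']

lemma fsExp_prod_eq (n1 n2 m : ℕ) (v w : Fin n1 × Fin n1 × Fin n2 × Fin n2) :
    fsExp n1 n2 m (fun ω => Zind v ω * Zind w ω)
      = fsProb n1 n2 m (fun ω => ZEvent v ω ∧ ZEvent w ω) := by
  refine Finset.sum_congr rfl fun ω _ => ?_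
  simp only [Zind]
  by_cases h : ZEvent v ω ∧ ZEvent w ω
  · rw [if_pos h.1, if_pos h.2, if_pos h, mul_one, mul_one]
  · rw [if_neg h]
    rcases Classical.em (ZEvent v ω) with h1 | h1
    · rw [if_pos h1, if_neg (fun h2 => h ⟨h1, h2⟩), mul_zero, mul_zero]
    · rw [if_neg h1, zero_mul, mul_zero]

lemma fin3_inj {N : ℕ} (a b c : Fin N) (h1 : a ≠ b) (h2 : a ≠ c) (h3 : b ≠ c) :
    Function.Injective ![a, b, c] := by
  intro i j hij
  fin_cases i <;> fin_cases j <;>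
    simp_all [h1, h2, h3, h1.symm, h2.symm, h3.symm]

lemma fin4_inj {N : ℕ} (a b c d : Fin N) (h1 : a ≠ b) (h2 : a ≠ c) (h3 : a ≠ d)
    (h4 : b ≠ c) (h5 : b ≠ d) (h6 : c ≠ d) :
    Function.Injective ![a, b, c, d] := by
  intro i j hij
  fin_cases i <;> fin_cases j <;>
    simp_all [h1, h2, h3, h4, h5, h6, h1.symm, h2.symm, h3.symm, h4.symm, h5.symm, h6.symm]

lemma per_w (n1 n2 m n : ℕ) (c : ℝ) (hc : 1 < c)
    (hn : n1 + n2 = n) (hm : n < m) (hmc : (m : ℝ) / c ≤ (m : ℝ) - n)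
    (x1 x2 : Fin n1) (hx12 : x1 ≠ x2)
    (y1 y2 y1' y2' : Fin n2) (hy : y1 ≠ y2) (hy' : y1' ≠ y2')
    (hne : ¬(y1' = y1 ∧ y2' = y2)) :
    fsProb n1 n2 m (fun ω => ZEvent (x1, x2, y1, y2) ω ∧ ZEvent (x1, x2, y1', y2') ω)
      ≤ if (y1' = y1 ∨ y2' = y2 ∨ (y1' = y2 ∧ y2' = y1))
        then (1 / m) * (c / m) ^ 3 else (1 / m) * (c / m) ^ 4 := by
  by_cases hcond : y1' = y1 ∨ y2' = y2 ∨ (y1' = y2 ∧ y2' = y1)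
  · rw [if_pos hcond]
    by_cases hc1 : y1' = y1
    · subst hc1
      have h22 : y2' ≠ y2 := fun h => hne ⟨rfl, h⟩
      have himp : ∀ ω : FSSpace n1 n2 m,
          (ZEvent (x1, x2, y1', y2) ω ∧ ZEvent (x1, x2, y1', y2') ω) →
          (fOne ω x1 = fOne ω x2
            ∧ (∀ i, fTwo ω (![y1', y2, y2'] i) = sOne ω (![x1, x2, x2] i))
            ∧ (false = true → sOne ω x1 = sOne ω x2)) := by
        rintro ω ⟨⟨e1, e2, e3⟩, ⟨f1, f2, f3⟩⟩
        refine ⟨e1, fun i => ?_, by simp⟩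
        fin_cases i <;> simp [e2, e3, f3]
      refine le_trans (fsProb_mono n1 n2 m n hn hm _ _ himp) ?_
      have hb := prob_bound n1 n2 m n c hc hn hm hmc x1 x2 hx12
        ![y1', y2, y2'] (fin3_inj _ _ _ hy hy' h22.symm) ![x1, x2, x2] false
      simpa using hb
    · by_cases hc2 : y2' = y2
      · subst hc2
        have h11 : y1' ≠ y1 := hc1
        have himp : ∀ ω : FSSpace n1 n2 m,
            (ZEvent (x1, x2, y1, y2') ω ∧ ZEvent (x1, x2, y1', y2') ω) →
            (fOne ω x1 = fOne ω x2
              ∧ (∀ i, fTwo ω (![y1, y2', y1'] i) = sOne ω (![x1, x2, x1] i))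
              ∧ (false = true → sOne ω x1 = sOne ω x2)) := by
          rintro ω ⟨⟨e1, e2, e3⟩, ⟨f1, f2, f3⟩⟩
          refine ⟨e1, fun i => ?_, by simp⟩
          fin_cases i <;> simp [e2, e3, f2]
        refine le_trans (fsProb_mono n1 n2 m n hn hm _ _ himp) ?_
        have hb := prob_bound n1 n2 m n c hc hn hm hmc x1 x2 hx12
          ![y1, y2', y1'] (fin3_inj _ _ _ hy h11.symm hy'.symm) ![x1, x2, x1] false
        simpa using hb
      · have hc3 : y1' = y2 ∧ y2' = y1 := by tauto
        obtain ⟨hc3a, hc3b⟩ := hc3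
        subst hc3a; subst hc3b
        have himp : ∀ ω : FSSpace n1 n2 m,
            (ZEvent (x1, x2, y2', y1') ω ∧ ZEvent (x1, x2, y1', y2') ω) →
            (fOne ω x1 = fOne ω x2
              ∧ (∀ i, fTwo ω (![y2', y1'] i) = sOne ω (![x1, x1] i))
              ∧ (true = true → sOne ω x1 = sOne ω x2)) := by
          rintro ω ⟨⟨e1, e2, e3⟩, ⟨f1, f2, f3⟩⟩
          have hs : sOne ω x1 = sOne ω x2 := by rw [← e2, f3]
          refine ⟨e1, fun i => ?_, fun _ => hs⟩
          fin_cases i <;> simp [e2, f2]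
        refine le_trans (fsProb_mono n1 n2 m n hn hm _ _ himp) ?_
        have hb := prob_bound n1 n2 m n c hc hn hm hmc x1 x2 hx12
          ![y2', y1'] (fin_two_inj _ _ hy'.symm) ![x1, x1] true
        simpa using hb
  · rw [if_neg hcond]
    push_neg at hcond
    obtain ⟨hA, hB, hC⟩ := hcond
    by_cases hc1 : y1' = y2
    · subst hc1
      have h2y1 : y2' ≠ y1 := hC rfl
      have himp2 : ∀ ω : FSSpace n1 n2 m,
          (ZEvent (x1, x2, y1, y1') ω ∧ ZEvent (x1, x2, y1', y2') ω) →
          (fOne ω x1 = fOne ω x2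
            ∧ (∀ i, fTwo ω (![y1, y1', y2'] i) = sOne ω (![x1, x2, x2] i))
            ∧ (true = true → sOne ω x1 = sOne ω x2)) := by
        rintro ω ⟨⟨e1, e2, e3⟩, ⟨f1, f2, f3⟩⟩
        have hs : sOne ω x1 = sOne ω x2 := by rw [← f2, e3]
        refine ⟨e1, fun i => ?_, fun _ => hs⟩
        fin_cases i <;> simp [e2, e3, f3]
      refine le_trans (fsProb_mono n1 n2 m n hn hm _ _ himp2) ?_
      have hb := prob_bound n1 n2 m n c hc hn hm hmc x1 x2 hx12
        ![y1, y1', y2'] (fin3_inj _ _ _ hy h2y1.symm hy') ![x1, x2, x2] true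
      simpa using hb
    · by_cases hc2 : y2' = y1
      · subst hc2
        have h1y2 : y1' ≠ y2 := hc1
        have himp : ∀ ω : FSSpace n1 n2 m,
            (ZEvent (x1, x2, y2', y2) ω ∧ ZEvent (x1, x2, y1', y2') ω) →
            (fOne ω x1 = fOne ω x2
              ∧ (∀ i, fTwo ω (![y2', y2, y1'] i) = sOne ω (![x1, x2, x1] i))
              ∧ (true = true → sOne ω x1 = sOne ω x2)) := by
          rintro ω ⟨⟨e1, e2, e3⟩, ⟨f1, f2, f3⟩⟩
          have hs : sOne ω x1 = sOne ω x2 := by rw [← e2, f3]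
          refine ⟨e1, fun i => ?_, fun _ => hs⟩
          fin_cases i <;> simp [e2, e3, f2]
        refine le_trans (fsProb_mono n1 n2 m n hn hm _ _ himp) ?_
        have hb := prob_bound n1 n2 m n c hc hn hm hmc x1 x2 hx12
          ![y2', y2, y1'] (fin3_inj _ _ _ hy hA.symm h1y2.symm) ![x1, x2, x1] true
        simpa using hb
      · have h1y2 : y1' ≠ y2 := hc1
        have h2y1 : y2' ≠ y1 := hc2
        have himp : ∀ ω : FSSpace n1 n2 m,
            (ZEvent (x1, x2, y1, y2) ω ∧ ZEvent (x1, x2, y1', y2') ω) →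
            (fOne ω x1 = fOne ω x2
              ∧ (∀ i, fTwo ω (![y1, y2, y1', y2'] i) = sOne ω (![x1, x2, x1, x2] i))
              ∧ (false = true → sOne ω x1 = sOne ω x2)) := by
          rintro ω ⟨⟨e1, e2, e3⟩, ⟨f1, f2, f3⟩⟩
          refine ⟨e1, fun i => ?_, by simp⟩
          fin_cases i <;> simp [e2, e3, f2, f3]
        refine le_trans (fsProb_mono n1 n2 m n hn hm _ _ himp) ?_
        have hb := prob_bound n1 n2 m n c hc hn hm hmc x1 x2 hx12
          ![y1, y2, y1', y2']
          (fin4_inj _ _ _ _ hy hA.symm h2y1.symm h1y2.symm hB.symm hy')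
          ![x1, x2, x1, x2] false
        simpa using hb

lemma pair_eq_of_inter_card {N : ℕ} {x1 x2 x1' x2' : Fin N} (h1 : x1 < x2) (h2 : x1' < x2')
    (hcard : (({x1, x2} : Finset (Fin N)) ∩ {x1', x2'}).card = 2) :
    x1' = x1 ∧ x2' = x2 := by
  have hx : x1 ≠ x2 := ne_of_lt h1
  have hx' : x1' ≠ x2' := ne_of_lt h2
  have c1 : ({x1, x2} : Finset (Fin N)).card = 2 := Finset.card_pair hx
  have c2 : ({x1', x2'} : Finset (Fin N)).card = 2 := Finset.card_pair hx'
  have e1 : (({x1, x2} : Finset (Fin N)) ∩ {x1', x2'}) = {x1, x2} :=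
    Finset.eq_of_subset_of_card_le Finset.inter_subset_left (by rw [c1, hcard])
  have e2 : (({x1, x2} : Finset (Fin N)) ∩ {x1', x2'}) = {x1', x2'} :=
    Finset.eq_of_subset_of_card_le Finset.inter_subset_right (by rw [c2, hcard])
  have epair : ({x1, x2} : Finset (Fin N)) = {x1', x2'} := e1.symm.trans e2
  have m1 : x1 = x1' ∨ x1 = x2' := by
    have : x1 ∈ ({x1', x2'} : Finset (Fin N)) := epair ▸ Finset.mem_insert_self x1 {x2}
    simpa using this
  have m2 : x2 = x1' ∨ x2 = x2' := by
    have : x2 ∈ ({x1', x2'} : Finset (Fin N)) := epair ▸ (by simp : x2 ∈ ({x1, x2} : Finset (Fin N)))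
    simpa using this
  rcases m1 with ha | ha <;> rcases m2 with hb | hb
  · exact absurd (ha.trans hb.symm) hx
  · exact ⟨ha.symm, hb.symm⟩
  · exact absurd ((h1.trans_eq hb).trans (h2.trans_eq ha.symm)) (lt_irrefl x1)
  · exact absurd (ha.trans hb.symm) hx

set_option maxHeartbeats 1000000

/-- **Inequality (6).** In the random fs-relation graph model with
`n1 = δn`, `n2 = (1-δ)n` and `m - n ≥ m/c`, the sum over `v ∈ T` and `w ∈ T_2(v)` of
`E[Z_v Z_w]` is at most `(c⁴(1-δ)²n²/m⁵ + 2c³(1-δ)n/m⁴)·|T|`. -/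
theorem two_common_sum_bound (δ : ℝ) (hδ0 : 0 < δ) (hδ1 : δ < 1)
    (c : ℝ) (hc : 1 < c) (n n1 n2 m : ℕ)
    (hn1 : (n1 : ℝ) = δ * n) (hn2 : (n2 : ℝ) = (1 - δ) * n)
    (hm : n < m) (hmc : (m : ℝ) / c ≤ (m : ℝ) - (n : ℝ)) :
    ∑ v ∈ Ttup n1 n2, ∑ w ∈ Tcommon n1 n2 2 v,
        fsExp n1 n2 m (fun ω => Zind v ω * Zind w ω) ≤
      (c ^ 4 * (1 - δ) ^ 2 * (n : ℝ) ^ 2 / (m : ℝ) ^ 5 +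
        2 * c ^ 3 * (1 - δ) * (n : ℝ) / (m : ℝ) ^ 4) * ((Ttup n1 n2).card : ℝ) := by
  have hn : n1 + n2 = n := by
    have : ((n1 + n2 : ℕ) : ℝ) = (n : ℝ) := by push_cast; rw [hn1, hn2]; ring
    exact_mod_cast this
  have hm0 : 0 < m := lt_of_le_of_lt (Nat.zero_le n) hm
  have hmR : (0:ℝ) < m := by exact_mod_cast hm0
  have hc0 : (0:ℝ) < c := lt_trans one_pos hc
  set perv : ℝ := c ^ 4 * (1 - δ) ^ 2 * (n : ℝ) ^ 2 / (m : ℝ) ^ 5 +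
      2 * c ^ 3 * (1 - δ) * (n : ℝ) / (m : ℝ) ^ 4 with hperv
  have main : ∀ v ∈ Ttup n1 n2,
      (∑ w ∈ Tcommon n1 n2 2 v, fsExp n1 n2 m (fun ω => Zind v ω * Zind w ω)) ≤ perv := by
    intro v hv
    obtain ⟨x1, x2, y1, y2⟩ := v
    rw [Ttup, Finset.mem_filter] at hv
    obtain ⟨-, hx12, hy⟩ := hv
    -- characterization of members of Tcommon
    have hmem : ∀ w ∈ Tcommon n1 n2 2 (x1, x2, y1, y2),
        w.1 = x1 ∧ w.2.1 = x2 ∧ w.2.2.1 ≠ w.2.2.2 ∧ ¬(w.2.2.1 = y1 ∧ w.2.2.2 = y2) := by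
      intro w hw
      rw [Tcommon, Finset.mem_filter] at hw
      obtain ⟨hwT, hwne, hwcard⟩ := hw
      rw [Ttup, Finset.mem_filter] at hwT
      obtain ⟨-, hxw, hyw⟩ := hwT
      obtain ⟨ha, hb⟩ := pair_eq_of_inter_card hx12 hxw hwcard
      refine ⟨ha, hb, hyw, ?_⟩
      rintro ⟨hy1, hy2⟩
      apply hwne
      obtain ⟨w1, w2, w3, w4⟩ := w
      simp_all
    set cnd : Fin n1 × Fin n1 × Fin n2 × Fin n2 → Prop := fun w =>
      (w.2.2.1 = y1 ∨ w.2.2.2 = y2 ∨ (w.2.2.1 = y2 ∧ w.2.2.2 = y1)) with hcnd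
    have hterm : ∀ w ∈ Tcommon n1 n2 2 (x1, x2, y1, y2),
        fsExp n1 n2 m (fun ω => Zind (x1, x2, y1, y2) ω * Zind w ω)
          ≤ (if cnd w then (1 / m) * (c / m) ^ 3 else (1 / m) * (c / m) ^ 4) := by
      intro w hw
      obtain ⟨ha, hb, hyw, hwne⟩ := hmem w hw
      obtain ⟨w1, w2, w3, w4⟩ := w
      simp only at ha hb hyw hwne
      subst ha; subst hb
      rw [fsExp_prod_eq]
      exact per_w n1 n2 m n c hc hn hm hmc w1 w2 (ne_of_lt hx12) y1 y2 w3 w4 hy hyw hwne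
    refine le_trans (Finset.sum_le_sum hterm) ?_
    rw [Finset.sum_ite, Finset.sum_const, Finset.sum_const, nsmul_eq_mul, nsmul_eq_mul]
    -- card bounds
    set T2 := Tcommon n1 n2 2 (x1, x2, y1, y2) with hT2
    have cardB5 : (T2.filter (fun w => ¬ cnd w)).card ≤ n2 * n2 := by
      have hsub : ∀ w ∈ T2.filter (fun w => ¬ cnd w), w ∈ T2 := fun w hw =>
        (Finset.mem_filter.mp hw).1
      have hinj : Set.InjOn (fun w : Fin n1 × Fin n1 × Fin n2 × Fin n2 =>
          ((w.2.2.1, w.2.2.2) : Fin n2 × Fin n2)) ↑(T2.filter (fun w => ¬ cnd w)) := by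
        intro w₁ h₁ w₂ h₂ heq
        obtain ⟨a1, b1, -, -⟩ := hmem w₁ (hsub w₁ (Finset.mem_coe.mp h₁))
        obtain ⟨a2, b2, -, -⟩ := hmem w₂ (hsub w₂ (Finset.mem_coe.mp h₂))
        obtain ⟨u1, u2, u3, u4⟩ := w₁
        obtain ⟨v1, v2, v3, v4⟩ := w₂
        simp only [Prod.mk.injEq] at heq ⊢
        exact ⟨a1.trans a2.symm, b1.trans b2.symm, heq.1, heq.2⟩
      have := Finset.card_le_card_of_injOn
        (fun w : Fin n1 × Fin n1 × Fin n2 × Fin n2 => ((w.2.2.1, w.2.2.2) : Fin n2 × Fin n2))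
        (fun w _ => Finset.mem_univ _) hinj
      simpa [Fintype.card_prod] using this
    have cardB4 : (T2.filter (fun w => cnd w)).card ≤ 2 * n2 := by
      have hn2pos : 2 ≤ n2 := by
        by_contra hcon
        push_neg at hcon
        interval_cases n2 <;> [exact absurd y1.pos (by omega); exact hy (Subsingleton.elim y1 y2)]
      set S1 : Finset (Fin n1 × Fin n1 × Fin n2 × Fin n2) :=
        (Finset.univ \ {y1, y2}).image (fun z => (x1, x2, y1, z)) with hS1
      set S2 : Finset (Fin n1 × Fin n1 × Fin n2 × Fin n2) :=
        (Finset.univ \ {y1, y2}).image (fun z => (x1, x2, z, y2)) with hS2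
      set S3 : Finset (Fin n1 × Fin n1 × Fin n2 × Fin n2) := {(x1, x2, y2, y1)} with hS3
      have hsub : T2.filter (fun w => cnd w) ⊆ S1 ∪ S2 ∪ S3 := by
        intro w hw
        obtain ⟨hwT2, hwc⟩ := Finset.mem_filter.mp hw
        obtain ⟨ha, hb, hyw, hwne⟩ := hmem w hwT2
        obtain ⟨w1, w2, w3, w4⟩ := w
        simp only at ha hb hyw hwne hwc
        subst ha; subst hb
        rcases hwc with h | h | ⟨h1, h2⟩
        · subst h
          refine Finset.mem_union_left _ (Finset.mem_union_left _ ?_)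
          refine Finset.mem_image.mpr ⟨w4, ?_, rfl⟩
          simp only [Finset.mem_sdiff, Finset.mem_univ, true_and, Finset.mem_insert,
            Finset.mem_singleton]
          push_neg
          exact ⟨fun h => hyw h.symm, fun h => hwne ⟨rfl, h⟩⟩
        · subst h
          refine Finset.mem_union_left _ (Finset.mem_union_right _ ?_)
          refine Finset.mem_image.mpr ⟨w3, ?_, rfl⟩
          simp only [Finset.mem_sdiff, Finset.mem_univ, true_and, Finset.mem_insert,
            Finset.mem_singleton]
          push_neg
          exact ⟨fun h => hwne ⟨h, rfl⟩, fun h => hyw h⟩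
        · subst h1; subst h2
          exact Finset.mem_union_right _ (by simp [hS3])
      have hcard1 : S1.card ≤ n2 - 2 := by
        refine le_trans Finset.card_image_le ?_
        rw [Finset.card_sdiff_of_subset (Finset.subset_univ _), Finset.card_univ, Fintype.card_fin,
          Finset.card_pair hy]
      have hcard2 : S2.card ≤ n2 - 2 := by
        refine le_trans Finset.card_image_le ?_
        rw [Finset.card_sdiff_of_subset (Finset.subset_univ _), Finset.card_univ, Fintype.card_fin,
          Finset.card_pair hy]
      have hcard3 : S3.card = 1 := rfl
      have := Finset.card_le_card hsub
      have hu := le_trans (Finset.card_union_le (S1 ∪ S2) S3)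
        (add_le_add (Finset.card_union_le S1 S2) (le_refl S3.card))
      omega
    have hA3 : (0:ℝ) ≤ (1 / m) * (c / m) ^ 3 := by positivity
    have hA4 : (0:ℝ) ≤ (1 / m) * (c / m) ^ 4 := by positivity
    have hb4R : ((T2.filter (fun w => cnd w)).card : ℝ) ≤ 2 * (n2 : ℝ) := by
      exact_mod_cast cardB4
    have hb5R : ((T2.filter (fun w => ¬ cnd w)).card : ℝ) ≤ (n2 : ℝ) * (n2 : ℝ) := by
      exact_mod_cast cardB5
    have step : ((T2.filter (fun w => cnd w)).card : ℝ) * ((1 / m) * (c / m) ^ 3)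
        + ((T2.filter (fun w => ¬ cnd w)).card : ℝ) * ((1 / m) * (c / m) ^ 4)
        ≤ 2 * (n2:ℝ) * ((1 / m) * (c / m) ^ 3) + (n2:ℝ) * (n2:ℝ) * ((1 / m) * (c / m) ^ 4) :=
      add_le_add (mul_le_mul_of_nonneg_right hb4R hA3) (mul_le_mul_of_nonneg_right hb5R hA4)
    refine le_trans step (le_of_eq ?_)
    rw [hperv, hn2]
    field_simp
    ring
  refine le_trans (Finset.sum_le_sum main) ?_
  rw [Finset.sum_const, nsmul_eq_mul]
  exact le_of_eq (mul_comm _ _)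
end
end
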